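/- arXiv:0809.5110 — 5 statements merged into one kernel-verified Lean document; each statement's English description precedes it below -/
import Mathlib

section
/- Let H* be the quasi-shuffle (stuffle) algebra: the free Z-module on words z_{s1}...z_{sk} in letters z_s (s ≥ 1), with product defined recursively by (z_r u) * (z_s v) = z_r (u * (z_s v)) + z_s ((z_r u) * v) + z_{r+s} (u * v) and 1 * u = u * 1 = u. Then for all positive integers k ≥ 2 and n ≥ k: ∑_{r + s1 + ... + s_{k-1} = n, all ≥ 1} z_r * z_{s1,...,s_{k-1}} = k · ∑_{t1+...+tk = n, ti ≥ 1} z_{t1,...,tk} + (n - k + 1) · ∑_{u1+...+u_{k-1} = n, ui ≥ 1} z_{u1,...,u_{k-1}}. -/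
open Finsupp

/-- The free ℤ-module on words `z_{s₁,…,s_k}` (a word is the list of its indices). -/
abbrev QWords : Type := (List ℕ) →₀ ℤ

/-- The word `z_{s₁,…,s_k}` as a basis element. -/
noncomputable def zw (l : List ℕ) : QWords := Finsupp.single l 1

/-- Prepending the letter `z_r`, as a linear operator. -/
noncomputable def zcons (r : ℕ) : QWords →ₗ[ℤ] QWords :=
  Finsupp.lmapDomain ℤ ℤ (List.cons r)

namespace QSAux

lemma zcons_zw (a : ℕ) (l : List ℕ) : zcons a (zw l) = zw (a :: l) := by
  simp [zcons, zw, Finsupp.lmapDomain_apply, Finsupp.mapDomain_single]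

lemma headI_cons_tail {l : List ℕ} (h : l ≠ []) : l.headI :: l.tail = l := by
  cases l with
  | nil => exact absurd rfl h
  | cons a t => rfl

/-- Add `r` to the entry at index `i`. -/
def mrg (r : ℕ) : ℕ → List ℕ → List ℕ
  | _, [] => []
  | 0, s :: v => (s + r) :: v
  | i+1, s :: v => s :: mrg r i v

/-- Subtract `r` from the entry at index `i`. -/
def dec (r : ℕ) : ℕ → List ℕ → List ℕ
  | _, [] => []
  | 0, s :: v => (s - r) :: v
  | i+1, s :: v => s :: dec r i v

@[simp] lemma mrg_nil (r i : ℕ) : mrg r i [] = [] := by cases i <;> rfl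
@[simp] lemma mrg_zero_cons (r s : ℕ) (v : List ℕ) : mrg r 0 (s :: v) = (s + r) :: v := rfl
@[simp] lemma mrg_succ_cons (r i s : ℕ) (v : List ℕ) :
    mrg r (i+1) (s :: v) = s :: mrg r i v := rfl
@[simp] lemma dec_zero_cons (r s : ℕ) (v : List ℕ) : dec r 0 (s :: v) = (s - r) :: v := rfl
@[simp] lemma dec_succ_cons (r i s : ℕ) (v : List ℕ) :
    dec r (i+1) (s :: v) = s :: dec r i v := rfl

lemma mrg_length (r : ℕ) : ∀ (i : ℕ) (l : List ℕ), (mrg r i l).length = l.length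
  | _, [] => by simp
  | 0, s :: v => rfl
  | i+1, s :: v => by simp [mrg_length r i v]

lemma dec_length (r : ℕ) : ∀ (i : ℕ) (l : List ℕ), (dec r i l).length = l.length
  | _, [] => by cases ‹ℕ› <;> rfl
  | 0, s :: v => rfl
  | i+1, s :: v => by simp [dec_length r i v]

lemma mrg_sum (r : ℕ) : ∀ (i : ℕ) (l : List ℕ), i < l.length → (mrg r i l).sum = l.sum + r
  | _, [], h => by simp at h
  | 0, s :: v, _ => by simp [List.sum_cons]; omega
  | i+1, s :: v, h => by
      simp only [mrg_succ_cons, List.sum_cons, mrg_sum r i v (by simpa using h)]; omega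

lemma mrg_mem (r : ℕ) : ∀ (i : ℕ) (l : List ℕ) (x : ℕ), x ∈ mrg r i l →
    x ∈ l ∨ ∃ y ∈ l, x = y + r
  | _, [], x, h => by simp at h
  | 0, s :: v, x, h => by
      rcases List.mem_cons.1 h with h | h
      · exact Or.inr ⟨s, List.mem_cons_self, h⟩
      · exact Or.inl (List.mem_cons_of_mem _ h)
  | i+1, s :: v, x, h => by
      rcases List.mem_cons.1 h with h | h
      · exact Or.inl (h ▸ List.mem_cons_self)
      · rcases mrg_mem r i v x h with h | ⟨y, hy, hxy⟩
        · exact Or.inl (List.mem_cons_of_mem _ h)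
        · exact Or.inr ⟨y, List.mem_cons_of_mem _ hy, hxy⟩

lemma mrg_getD (r : ℕ) : ∀ (i : ℕ) (l : List ℕ), i < l.length →
    (mrg r i l).getD i 0 = l.getD i 0 + r
  | _, [], h => by simp at h
  | 0, s :: v, _ => rfl
  | i+1, s :: v, h => by
      simpa using mrg_getD r i v (by simpa using h)

@[simp] lemma dec_nil (r i : ℕ) : dec r i [] = [] := by cases i <;> rfl

lemma dec_mrg (r : ℕ) : ∀ (i : ℕ) (l : List ℕ), dec r i (mrg r i l) = l
  | _, [] => by simp
  | 0, s :: v => by simp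
  | i+1, s :: v => by simp [dec_mrg r i v]

lemma mrg_dec (r : ℕ) : ∀ (i : ℕ) (l : List ℕ), i < l.length → r ≤ l.getD i 0 →
    mrg r i (dec r i l) = l
  | _, [], h, _ => by simp at h
  | 0, s :: v, _, hr => by simp at hr ⊢; omega
  | i+1, s :: v, h, hr => by
      simp only [dec_succ_cons, mrg_succ_cons, List.cons.injEq, true_and]
      exact mrg_dec r i v (by simpa using h) (by simpa using hr)

lemma dec_sum (r : ℕ) : ∀ (i : ℕ) (l : List ℕ), i < l.length → r ≤ l.getD i 0 →
    r + (dec r i l).sum = l.sum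
  | _, [], h, _ => by simp at h
  | 0, s :: v, _, hr => by simp at hr ⊢; omega
  | i+1, s :: v, h, hr => by
      simp only [dec_succ_cons, List.sum_cons]
      have := dec_sum r i v (by simpa using h) (by simpa using hr)
      omega

lemma dec_pos (r : ℕ) : ∀ (i : ℕ) (l : List ℕ), i < l.length → r < l.getD i 0 →
    (∀ y ∈ l, 1 ≤ y) → ∀ x ∈ dec r i l, 1 ≤ x
  | _, [], h, _, _ => by simp at h
  | 0, s :: v, _, hr, hl => by
      intro x hx
      rcases List.mem_cons.1 hx with h | h
      · subst h; simp at hr; omega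
      · exact hl x (List.mem_cons_of_mem _ h)
  | i+1, s :: v, h, hr, hl => by
      intro x hx
      rcases List.mem_cons.1 hx with h' | h'
      · exact h' ▸ hl s (List.mem_cons_self)
      · exact dec_pos r i v (by simpa using h) (by simpa using hr)
          (fun y hy => hl y (List.mem_cons_of_mem _ hy)) x h'

lemma sum_insertIdx (a : ℕ) : ∀ (i : ℕ) (l : List ℕ), i ≤ l.length →
    (l.insertIdx i a).sum = a + l.sum
  | 0, l, _ => by simp
  | i+1, [], h => by simp at h
  | i+1, s :: v, h => by
      simp only [List.insertIdx_succ_cons, List.sum_cons,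
        sum_insertIdx a i v (by simpa using h)]
      omega

lemma getD_add_sum_eraseIdx : ∀ (i : ℕ) (l : List ℕ), i < l.length →
    l.getD i 0 + (l.eraseIdx i).sum = l.sum
  | _, [], h => by simp at h
  | 0, s :: v, _ => by simp
  | i+1, s :: v, h => by
      simp only [List.eraseIdx_cons_succ, List.sum_cons]
      have := getD_add_sum_eraseIdx i v (by simpa using h)
      simp only [List.getD_cons_succ]
      omega

lemma insertIdx_getD_eraseIdx : ∀ (i : ℕ) (l : List ℕ), i < l.length →
    (l.eraseIdx i).insertIdx i (l.getD i 0) = l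
  | _, [], h => by simp at h
  | 0, s :: v, _ => by simp
  | i+1, s :: v, h => by
      simp only [List.eraseIdx_cons_succ, List.getD_cons_succ, List.insertIdx_succ_cons,
        List.cons.injEq, true_and]
      exact insertIdx_getD_eraseIdx i v (by simpa using h)

lemma sum_getD : ∀ (l : List ℕ), ∑ i ∈ Finset.range l.length, l.getD i 0 = l.sum
  | [] => by simp
  | s :: v => by
      rw [List.length_cons, Finset.sum_range_succ']
      simp only [List.getD_cons_succ, List.getD_cons_zero, List.sum_cons]
      rw [sum_getD v]
      omega

/-- Build a composition of `n` from a list, defaulting to `ones n`. -/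
noncomputable def mk (n : ℕ) (l : List ℕ) : Composition n :=
  if h : (∀ x ∈ l, 0 < x) ∧ l.sum = n then ⟨l, fun hi => h.1 _ hi, h.2⟩
  else Composition.ones n

lemma mk_blocks {n : ℕ} {l : List ℕ} (h1 : ∀ x ∈ l, 0 < x) (h2 : l.sum = n) :
    (mk n l).blocks = l := by
  rw [mk, dif_pos ⟨h1, h2⟩]

lemma mk_self {n : ℕ} (c : Composition n) : mk n c.blocks = c := by
  ext1
  exact mk_blocks (fun x hx => c.blocks_pos hx) c.blocks_sum

end QSAux

open QSAux in
lemma key_lemma (mul : QWords →ₗ[ℤ] QWords →ₗ[ℤ] QWords)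
    (hunitl : ∀ w : QWords, mul (zw []) w = w)
    (hunitr : ∀ w : QWords, mul w (zw []) = w)
    (hrec : ∀ (r s : ℕ) (u v : List ℕ), 1 ≤ r → 1 ≤ s →
      (∀ x ∈ u, 1 ≤ x) → (∀ x ∈ v, 1 ≤ x) →
      mul (zw (r :: u)) (zw (s :: v)) =
        zcons r (mul (zw u) (zw (s :: v))) + zcons s (mul (zw (r :: u)) (zw v)) +
          zcons (r + s) (mul (zw u) (zw v)))
    (r : ℕ) (hr : 1 ≤ r) :
    ∀ (v : List ℕ), (∀ x ∈ v, 1 ≤ x) →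
      mul (zw [r]) (zw v)
        = (∑ i ∈ Finset.range (v.length + 1), zw (v.insertIdx i r))
          + ∑ i ∈ Finset.range v.length, zw (QSAux.mrg r i v) := by
  intro v
  induction v with
  | nil => intro _; simp [hunitr]
  | cons s v ih =>
      intro hv
      have hs : 1 ≤ s := hv s (List.mem_cons_self)
      have hv' : ∀ x ∈ v, 1 ≤ x := fun x hx => hv x (List.mem_cons_of_mem _ hx)
      have h := hrec r s [] v hr hs (by simp) hv'
      rw [h, hunitl, hunitl, ih hv']
      rw [map_add, map_sum, map_sum]
      simp only [zcons_zw]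
      rw [List.length_cons, Finset.sum_range_succ' (fun i => zw ((s :: v).insertIdx i r)),
        Finset.sum_range_succ' (fun i => zw (QSAux.mrg r i (s :: v)))]
      simp only [List.insertIdx_succ_cons, List.insertIdx_zero, mrg_succ_cons, mrg_zero_cons]
      rw [Nat.add_comm s r]
      abel

/-- Sum formula for the quasi-shuffle product: for `k ≥ 2`, `n ≥ k`,
`∑_{r+s₁+⋯+s_{k-1}=n, all ≥ 1} z_r * z_{s₁,…,s_{k-1}}
  = k ∑_{t₁+⋯+t_k=n} z_{t₁,…,t_k} + (n-k+1) ∑_{u₁+⋯+u_{k-1}=n} z_{u₁,…,u_{k-1}}`. -/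
theorem quasi_shuffle_sum_formula
    (mul : QWords →ₗ[ℤ] QWords →ₗ[ℤ] QWords)
    (hunitl : ∀ w : QWords, mul (zw []) w = w)
    (hunitr : ∀ w : QWords, mul w (zw []) = w)
    (hrec : ∀ (r s : ℕ) (u v : List ℕ), 1 ≤ r → 1 ≤ s →
      (∀ x ∈ u, 1 ≤ x) → (∀ x ∈ v, 1 ≤ x) →
      mul (zw (r :: u)) (zw (s :: v)) =
        zcons r (mul (zw u) (zw (s :: v))) + zcons s (mul (zw (r :: u)) (zw v)) +
          zcons (r + s) (mul (zw u) (zw v)))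
    (k n : ℕ) (hk : 2 ≤ k) (hn : k ≤ n) :
    ∑ c ∈ Finset.univ.filter (fun c : Composition n => c.length = k),
        mul (zw [c.blocks.headI]) (zw c.blocks.tail)
      = (k : ℤ) • (∑ c ∈ Finset.univ.filter (fun c : Composition n => c.length = k),
            zw c.blocks)
        + ((n : ℤ) - k + 1) •
            (∑ c ∈ Finset.univ.filter (fun c : Composition n => c.length = k - 1),
              zw c.blocks) := by
  classical
  have hk1 : 1 ≤ k := le_trans (by norm_num) hk
  set A : ℕ → Finset (Composition n) :=
    fun m => Finset.univ.filter (fun c : Composition n => c.length = m) with hA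
  have hmemA : ∀ m (c : Composition n), c ∈ A m ↔ c.blocks.length = m := by
    intro m c
    simp [hA, Finset.mem_filter, ← Composition.blocks_length]
  have hfacts : ∀ c ∈ A k, c.blocks.tail.length = k - 1 ∧
      c.blocks.headI :: c.blocks.tail = c.blocks ∧ 1 ≤ c.blocks.headI ∧
      (∀ x ∈ c.blocks.tail, 1 ≤ x) := by
    intro c hc
    have hlen : c.blocks.length = k := (hmemA k c).1 hc
    have hne : c.blocks ≠ [] := by
      intro h; rw [h] at hlen; simp at hlen; omega
    have hht := QSAux.headI_cons_tail hne
    refine ⟨by rw [List.length_tail, hlen], hht, ?_, ?_⟩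
    · exact c.blocks_pos (by rw [← hht]; exact List.mem_cons_self)
    · intro x hx; exact c.blocks_pos (List.mem_of_mem_tail hx)
  have hstep : ∀ c ∈ A k, mul (zw [c.blocks.headI]) (zw c.blocks.tail) =
      (∑ i ∈ Finset.range k, zw (c.blocks.tail.insertIdx i c.blocks.headI)) +
      ∑ i ∈ Finset.range (k - 1), zw (QSAux.mrg c.blocks.headI i c.blocks.tail) := by
    intro c hc
    obtain ⟨hlen, _, hhd, htl⟩ := hfacts c hc
    rw [key_lemma mul hunitl hunitr hrec _ hhd _ htl, hlen]
    have : k - 1 + 1 = k := by omega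
    rw [this]
  rw [Finset.sum_congr rfl hstep, Finset.sum_add_distrib]
  congr 1
  · -- first sum
    rw [← Finset.sum_product' (A k) (Finset.range k)
      (fun c i => zw (c.blocks.tail.insertIdx i c.blocks.headI))]
    have hbij : ∑ p ∈ A k ×ˢ Finset.range k,
          zw (p.1.blocks.tail.insertIdx p.2 p.1.blocks.headI)
        = ∑ p ∈ A k ×ˢ Finset.range k, zw p.1.blocks := by
      refine Finset.sum_nbij'
        (fun p => (QSAux.mk n (p.1.blocks.tail.insertIdx p.2 p.1.blocks.headI), p.2))
        (fun q => (QSAux.mk n ((q.1.blocks.getD q.2 0) :: q.1.blocks.eraseIdx q.2), q.2))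
        ?_ ?_ ?_ ?_ ?_
      · rintro ⟨c, i⟩ hp
        rw [Finset.mem_product] at hp ⊢
        obtain ⟨hc, hi⟩ := hp
        rw [Finset.mem_range] at hi
        obtain ⟨hlen, hht, hhd, htl⟩ := hfacts c hc
        have hi' : i ≤ c.blocks.tail.length := by omega
        have hpos : ∀ x ∈ c.blocks.tail.insertIdx i c.blocks.headI, 0 < x := by
          intro x hx
          rcases (List.mem_insertIdx hi').1 hx with h | h
          · omega
          · exact htl x h
        have hsum : (c.blocks.tail.insertIdx i c.blocks.headI).sum = n := by
          rw [QSAux.sum_insertIdx _ _ _ hi']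
          have : (c.blocks.headI :: c.blocks.tail).sum = n := by rw [hht, c.blocks_sum]
          simpa using this
        refine ⟨?_, by simpa using hi⟩
        rw [hmemA, QSAux.mk_blocks hpos hsum, List.length_insertIdx_of_le_length hi', hlen]
        omega
      · rintro ⟨d, i⟩ hq
        rw [Finset.mem_product] at hq ⊢
        obtain ⟨hd, hi⟩ := hq
        rw [Finset.mem_range] at hi
        have hlen : d.blocks.length = k := (hmemA k d).1 hd
        have hilt : i < d.blocks.length := by omega
        have hget : d.blocks.getD i 0 ∈ d.blocks := by
          rw [List.getD_eq_getElem _ _ hilt]; exact List.getElem_mem _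
        have hpos : ∀ x ∈ (d.blocks.getD i 0) :: d.blocks.eraseIdx i, 0 < x := by
          intro x hx
          rcases List.mem_cons.1 hx with h | h
          · exact h ▸ d.blocks_pos hget
          · exact d.blocks_pos (List.mem_of_mem_eraseIdx h)
        have hsum : ((d.blocks.getD i 0) :: d.blocks.eraseIdx i).sum = n := by
          rw [List.sum_cons, QSAux.getD_add_sum_eraseIdx _ _ hilt, d.blocks_sum]
        refine ⟨?_, by simpa using hi⟩
        rw [hmemA, QSAux.mk_blocks hpos hsum, List.length_cons,
          List.length_eraseIdx_of_lt hilt, hlen]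
        omega
      · rintro ⟨c, i⟩ hp
        rw [Finset.mem_product, Finset.mem_range] at hp
        obtain ⟨hc, hi⟩ := hp
        obtain ⟨hlen, hht, hhd, htl⟩ := hfacts c hc
        have hi' : i ≤ c.blocks.tail.length := by omega
        have hpos : ∀ x ∈ c.blocks.tail.insertIdx i c.blocks.headI, 0 < x := by
          intro x hx
          rcases (List.mem_insertIdx hi').1 hx with h | h
          · omega
          · exact htl x h
        have hsum : (c.blocks.tail.insertIdx i c.blocks.headI).sum = n := by
          rw [QSAux.sum_insertIdx _ _ _ hi']
          have : (c.blocks.headI :: c.blocks.tail).sum = n := by rw [hht, c.blocks_sum]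
          simpa using this
        have hb := QSAux.mk_blocks (n := n) hpos hsum
        have hilt : i < (c.blocks.tail.insertIdx i c.blocks.headI).length := by
          rw [List.length_insertIdx_of_le_length hi']; omega
        have hgd : (c.blocks.tail.insertIdx i c.blocks.headI).getD i 0 = c.blocks.headI := by
          rw [List.getD_eq_getElem _ _ hilt, List.getElem_insertIdx_self hilt]
        simp only [hb, hgd, List.eraseIdx_insertIdx_self, Prod.mk.injEq, and_true]
        rw [hht]
        exact QSAux.mk_self c
      · rintro ⟨d, i⟩ hq
        rw [Finset.mem_product, Finset.mem_range] at hq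
        obtain ⟨hd, hi⟩ := hq
        have hlen : d.blocks.length = k := (hmemA k d).1 hd
        have hilt : i < d.blocks.length := by omega
        have hget : d.blocks.getD i 0 ∈ d.blocks := by
          rw [List.getD_eq_getElem _ _ hilt]; exact List.getElem_mem _
        have hpos : ∀ x ∈ (d.blocks.getD i 0) :: d.blocks.eraseIdx i, 0 < x := by
          intro x hx
          rcases List.mem_cons.1 hx with h | h
          · exact h ▸ d.blocks_pos hget
          · exact d.blocks_pos (List.mem_of_mem_eraseIdx h)
        have hsum : ((d.blocks.getD i 0) :: d.blocks.eraseIdx i).sum = n := by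
          rw [List.sum_cons, QSAux.getD_add_sum_eraseIdx _ _ hilt, d.blocks_sum]
        have hb := QSAux.mk_blocks (n := n) hpos hsum
        simp only [hb, List.headI_cons, List.tail_cons, Prod.mk.injEq, and_true]
        rw [QSAux.insertIdx_getD_eraseIdx _ _ hilt]
        exact QSAux.mk_self d
      · rintro ⟨c, i⟩ hp
        rw [Finset.mem_product, Finset.mem_range] at hp
        obtain ⟨hc, hi⟩ := hp
        obtain ⟨hlen, hht, hhd, htl⟩ := hfacts c hc
        have hi' : i ≤ c.blocks.tail.length := by omega
        have hpos : ∀ x ∈ c.blocks.tail.insertIdx i c.blocks.headI, 0 < x := by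
          intro x hx
          rcases (List.mem_insertIdx hi').1 hx with h | h
          · omega
          · exact htl x h
        have hsum : (c.blocks.tail.insertIdx i c.blocks.headI).sum = n := by
          rw [QSAux.sum_insertIdx _ _ _ hi']
          have : (c.blocks.headI :: c.blocks.tail).sum = n := by rw [hht, c.blocks_sum]
          simpa using this
        rw [QSAux.mk_blocks hpos hsum]
    rw [hbij, Finset.sum_product' (A k) (Finset.range k) (fun c _ => zw c.blocks)]
    simp only [Finset.sum_const, Finset.card_range]
    rw [Finset.smul_sum]
    exact Finset.sum_congr rfl fun c _ => (Nat.cast_smul_eq_nsmul ℤ k _).symm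
  · -- second sum
    rw [← Finset.sum_product' (A k) (Finset.range (k - 1))
      (fun c i => zw (QSAux.mrg c.blocks.headI i c.blocks.tail))]
    have hbij : ∑ p ∈ A k ×ˢ Finset.range (k - 1),
          zw (QSAux.mrg p.1.blocks.headI p.2 p.1.blocks.tail)
        = ∑ q ∈ (A (k - 1) ×ˢ Finset.range (k - 1)).sigma
            (fun p => Finset.Ico 1 (p.1.blocks.getD p.2 0)), zw q.1.1.blocks := by
      refine Finset.sum_nbij'
        (fun p => ⟨(QSAux.mk n (QSAux.mrg p.1.blocks.headI p.2 p.1.blocks.tail), p.2),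
          p.1.blocks.headI⟩)
        (fun q => (QSAux.mk n (q.2 :: QSAux.dec q.2 q.1.2 q.1.1.blocks), q.1.2))
        ?_ ?_ ?_ ?_ ?_
      · rintro ⟨c, i⟩ hp
        rw [Finset.mem_product, Finset.mem_range] at hp
        obtain ⟨hc, hi⟩ := hp
        obtain ⟨hlen, hht, hhd, htl⟩ := hfacts c hc
        have hi' : i < c.blocks.tail.length := by omega
        have hpos : ∀ x ∈ QSAux.mrg c.blocks.headI i c.blocks.tail, 0 < x := by
          intro x hx
          rcases QSAux.mrg_mem _ _ _ _ hx with h | ⟨y, hy, hxy⟩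
          · exact htl x h
          · have := htl y hy; omega
        have hsum : (QSAux.mrg c.blocks.headI i c.blocks.tail).sum = n := by
          rw [QSAux.mrg_sum _ _ _ hi']
          have : (c.blocks.headI :: c.blocks.tail).sum = n := by rw [hht, c.blocks_sum]
          simp at this; omega
        have hb := QSAux.mk_blocks (n := n) hpos hsum
        rw [Finset.mem_sigma, Finset.mem_product, Finset.mem_range]
        dsimp only
        refine ⟨⟨?_, by omega⟩, ?_⟩
        · rw [hmemA, hb, QSAux.mrg_length, hlen]
        · rw [hb, QSAux.mrg_getD _ _ _ hi', Finset.mem_Ico]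
          have hgd : c.blocks.tail.getD i 0 ∈ c.blocks.tail := by
            rw [List.getD_eq_getElem _ _ hi']; exact List.getElem_mem _
          have := htl _ hgd
          omega
      · rintro ⟨⟨d, i⟩, rr⟩ hq
        rw [Finset.mem_sigma, Finset.mem_product, Finset.mem_range, Finset.mem_Ico] at hq
        dsimp only at hq
        obtain ⟨⟨hd, hi⟩, hrr1, hrr2⟩ := hq
        have hlen : d.blocks.length = k - 1 := (hmemA _ d).1 hd
        have hilt : i < d.blocks.length := by omega
        have hpos : ∀ x ∈ rr :: QSAux.dec rr i d.blocks, 0 < x := by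
          intro x hx
          rcases List.mem_cons.1 hx with h | h
          · omega
          · exact QSAux.dec_pos rr i d.blocks hilt hrr2
              (fun y hy => d.blocks_pos hy) x h
        have hsum : (rr :: QSAux.dec rr i d.blocks).sum = n := by
          rw [List.sum_cons, QSAux.dec_sum rr i d.blocks hilt (by omega), d.blocks_sum]
        rw [Finset.mem_product, Finset.mem_range]
        dsimp only
        refine ⟨?_, by omega⟩
        rw [hmemA, QSAux.mk_blocks hpos hsum, List.length_cons,
          QSAux.dec_length, hlen]
        omega
      · rintro ⟨c, i⟩ hp
        rw [Finset.mem_product, Finset.mem_range] at hp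
        obtain ⟨hc, hi⟩ := hp
        obtain ⟨hlen, hht, hhd, htl⟩ := hfacts c hc
        have hi' : i < c.blocks.tail.length := by omega
        have hpos : ∀ x ∈ QSAux.mrg c.blocks.headI i c.blocks.tail, 0 < x := by
          intro x hx
          rcases QSAux.mrg_mem _ _ _ _ hx with h | ⟨y, hy, hxy⟩
          · exact htl x h
          · have := htl y hy; omega
        have hsum : (QSAux.mrg c.blocks.headI i c.blocks.tail).sum = n := by
          rw [QSAux.mrg_sum _ _ _ hi']
          have : (c.blocks.headI :: c.blocks.tail).sum = n := by rw [hht, c.blocks_sum]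
          simp at this; omega
        have hb := QSAux.mk_blocks (n := n) hpos hsum
        simp only [hb, QSAux.dec_mrg, Prod.mk.injEq, and_true]
        rw [hht]
        exact QSAux.mk_self c
      · rintro ⟨⟨d, i⟩, rr⟩ hq
        rw [Finset.mem_sigma, Finset.mem_product, Finset.mem_range, Finset.mem_Ico] at hq
        dsimp only at hq
        obtain ⟨⟨hd, hi⟩, hrr1, hrr2⟩ := hq
        have hlen : d.blocks.length = k - 1 := (hmemA _ d).1 hd
        have hilt : i < d.blocks.length := by omega
        have hpos : ∀ x ∈ rr :: QSAux.dec rr i d.blocks, 0 < x := by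
          intro x hx
          rcases List.mem_cons.1 hx with h | h
          · omega
          · exact QSAux.dec_pos rr i d.blocks hilt hrr2
              (fun y hy => d.blocks_pos hy) x h
        have hsum : (rr :: QSAux.dec rr i d.blocks).sum = n := by
          rw [List.sum_cons, QSAux.dec_sum rr i d.blocks hilt (by omega), d.blocks_sum]
        have hb := QSAux.mk_blocks (n := n) hpos hsum
        have hmd : QSAux.mrg rr i (QSAux.dec rr i d.blocks) = d.blocks :=
          QSAux.mrg_dec rr i d.blocks hilt (by omega)
        have hfinal : QSAux.mk n (QSAux.mrg ((QSAux.mk n (rr :: QSAux.dec rr i d.blocks)).blocks.headI) i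
            ((QSAux.mk n (rr :: QSAux.dec rr i d.blocks)).blocks.tail)) = d := by
          rw [hb]
          simp only [List.headI_cons, List.tail_cons]
          rw [hmd]
          exact QSAux.mk_self d
        simp only [hb, List.headI_cons, List.tail_cons, hmd]
        rw [QSAux.mk_self d]
      · rintro ⟨c, i⟩ hp
        rw [Finset.mem_product, Finset.mem_range] at hp
        obtain ⟨hc, hi⟩ := hp
        obtain ⟨hlen, hht, hhd, htl⟩ := hfacts c hc
        have hi' : i < c.blocks.tail.length := by omega
        have hpos : ∀ x ∈ QSAux.mrg c.blocks.headI i c.blocks.tail, 0 < x := by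
          intro x hx
          rcases QSAux.mrg_mem _ _ _ _ hx with h | ⟨y, hy, hxy⟩
          · exact htl x h
          · have := htl y hy; omega
        have hsum : (QSAux.mrg c.blocks.headI i c.blocks.tail).sum = n := by
          rw [QSAux.mrg_sum _ _ _ hi']
          have : (c.blocks.headI :: c.blocks.tail).sum = n := by rw [hht, c.blocks_sum]
          simp at this; omega
        rw [QSAux.mk_blocks hpos hsum]
    rw [hbij, Finset.sum_sigma]
    have hinner : ∀ p ∈ A (k - 1) ×ˢ Finset.range (k - 1),
        (∑ rr ∈ Finset.Ico 1 (p.1.blocks.getD p.2 0), zw p.1.blocks)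
          = ((p.1.blocks.getD p.2 0 - 1 : ℕ) : ℤ) • zw p.1.blocks := by
      intro p _
      rw [Finset.sum_const, Nat.card_Ico, Nat.cast_smul_eq_nsmul]
    rw [Finset.sum_congr rfl hinner,
      Finset.sum_product' (A (k - 1)) (Finset.range (k - 1))
        (fun d i => ((d.blocks.getD i 0 - 1 : ℕ) : ℤ) • zw d.blocks)]
    have hinner2 : ∀ d ∈ A (k - 1),
        (∑ i ∈ Finset.range (k - 1), ((d.blocks.getD i 0 - 1 : ℕ) : ℤ) • zw d.blocks)
          = ((n : ℤ) - k + 1) • zw d.blocks := by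
      intro d hd
      have hlen : d.blocks.length = k - 1 := (hmemA _ d).1 hd
      rw [← Finset.sum_smul]
      congr 1
      have hcast : ∀ i ∈ Finset.range (k - 1),
          ((d.blocks.getD i 0 - 1 : ℕ) : ℤ) = (d.blocks.getD i 0 : ℤ) - 1 := by
        intro i hi
        rw [Finset.mem_range] at hi
        have hilt : i < d.blocks.length := by omega
        have hgd : d.blocks.getD i 0 ∈ d.blocks := by
          rw [List.getD_eq_getElem _ _ hilt]; exact List.getElem_mem _
        have := d.blocks_pos hgd
        omega
      rw [Finset.sum_congr rfl hcast, Finset.sum_sub_distrib, Finset.sum_const,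
        Finset.card_range]
      have hsum : ∑ i ∈ Finset.range (k - 1), (d.blocks.getD i 0 : ℤ)
          = (n : ℤ) := by
        have := QSAux.sum_getD d.blocks
        rw [hlen, d.blocks_sum] at this
        exact_mod_cast congrArg (Nat.cast : ℕ → ℤ) this
      rw [hsum, nsmul_eq_mul, mul_one]
      have : ((k - 1 : ℕ) : ℤ) = (k : ℤ) - 1 := by omega
      rw [this]
      ring
    rw [Finset.sum_congr rfl hinner2, Finset.smul_sum]
end

section
/- With the quasi-shuffle algebra as above, for positive integers k ≥ 2 and n ≥ k+1: ∑_{r ≥ 1, s1 ≥ 2, s2,...,s_{k-1} ≥ 1, r + s1 + ... + s_{k-1} = n} z_r * z_{s1,...,s_{k-1}} equals ∑_{t1 = 1, t2 ≥ 2, ti ≥ 1, ∑ti = n} z_{t1,...,tk} + (k-1) ∑_{t1 ≥ 2, t2 = 1, ti ≥ 1, ∑ti = n} z_{t1,...,tk} + k ∑_{t1 ≥ 2, t2 ≥ 2, ti ≥ 1, ∑ti = n} z_{t1,...,tk} + (n-k) ∑_{u1 ≥ 2, ui ≥ 1, u1+...+u_{k-1} = n} z_{u1,...,u_{k-1}}.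 -/
open Finsupp

lemma zcons_zw (r : ℕ) (l : List ℕ) : zcons r (zw l) = zw (r :: l) := by
  simp [zcons, zw, Finsupp.lmapDomain, Finsupp.mapDomain_single]

lemma expand (mul : QWords →ₗ[ℤ] QWords →ₗ[ℤ] QWords)
    (hunitl : ∀ w : QWords, mul (zw []) w = w)
    (hunitr : ∀ w : QWords, mul w (zw []) = w)
    (hrec : ∀ (r s : ℕ) (u v : List ℕ), 1 ≤ r → 1 ≤ s →
      (∀ x ∈ u, 1 ≤ x) → (∀ x ∈ v, 1 ≤ x) →
      mul (zw (r :: u)) (zw (s :: v)) =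
        zcons r (mul (zw u) (zw (s :: v))) + zcons s (mul (zw (r :: u)) (zw v)) +
          zcons (r + s) (mul (zw u) (zw v))) :
    ∀ (v : List ℕ) (r : ℕ), 1 ≤ r → (∀ x ∈ v, 1 ≤ x) →
      mul (zw [r]) (zw v) =
        (∑ i ∈ Finset.range (v.length + 1), zw (v.insertIdx i r)) +
        (∑ j ∈ Finset.range v.length, zw (v.set j (r + v.getD j 0)))
  | [], r, hr, hv => by simp [hunitr]
  | s :: v, r, hr, hv => by
    have hs : 1 ≤ s := hv s (List.mem_cons_self)
    have hv' : ∀ x ∈ v, 1 ≤ x := fun x hx => hv x (List.mem_cons_of_mem _ hx)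
    rw [hrec r s [] v hr hs (by simp) hv', hunitl, hunitl,
      expand mul hunitl hunitr hrec v r hr hv']
    rw [map_add, map_sum, map_sum]
    simp only [zcons_zw]
    simp only [List.length_cons]
    rw [Finset.sum_range_succ' (fun i => zw ((s :: v).insertIdx i r)) (v.length + 1),
        Finset.sum_range_succ' (fun j => zw ((s :: v).set j (r + (s :: v).getD j 0))) v.length]
    simp only [List.insertIdx_succ_cons, List.insertIdx_zero, List.set_cons_succ,
      List.set_cons_zero, List.getD_cons_succ, List.getD_cons_zero]
    abel

section helpers
lemma sum_insertIdx' : ∀ (i : ℕ) (l : List ℕ) (a : ℕ), i ≤ l.length →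
    (l.insertIdx i a).sum = a + l.sum
  | 0, l, a, _ => by simp
  | (i+1), [], a, h => by simp at h
  | (i+1), x :: l, a, h => by
    simp only [List.insertIdx_succ_cons, List.sum_cons,
      sum_insertIdx' i l a (Nat.succ_le_succ_iff.mp h)]
    ring
lemma getD_insertIdx_self (i : ℕ) (l : List ℕ) (a : ℕ) (h : i ≤ l.length) :
    (l.insertIdx i a).getD i 0 = a := by
  rw [List.getD_eq_getElem _ _ (by rw [List.length_insertIdx_of_le_length h]; omega)]
  exact List.getElem_insertIdx_self _
lemma insertIdx_eraseIdx_getD : ∀ (i : ℕ) (l : List ℕ), i < l.length →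
    (l.eraseIdx i).insertIdx i (l.getD i 0) = l
  | 0, [], h => by simp at h
  | 0, x :: l, h => by simp
  | (i+1), [], h => by simp at h
  | (i+1), x :: l, h => by
    simp only [List.eraseIdx_cons_succ, List.insertIdx_succ_cons, List.getD_cons_succ]
    rw [insertIdx_eraseIdx_getD i l (by simpa using h)]
lemma sum_eraseIdx' (i : ℕ) (l : List ℕ) (h : i < l.length) :
    (l.eraseIdx i).sum + l.getD i 0 = l.sum := by
  conv_rhs => rw [← insertIdx_eraseIdx_getD i l h]
  rw [sum_insertIdx' i _ _ (by rw [List.length_eraseIdx]; split <;> omega)]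
  ring
lemma getD_mem' (i : ℕ) (l : List ℕ) (h : i < l.length) : l.getD i 0 ∈ l := by
  rw [List.getD_eq_getElem _ _ h]; exact List.getElem_mem h

lemma sum_set' : ∀ (j : ℕ) (l : List ℕ) (v : ℕ), j < l.length →
    (l.set j v).sum + l.getD j 0 = l.sum + v
  | 0, [], v, h => by simp at h
  | 0, x :: l, v, h => by simp; ring
  | (j+1), [], v, h => by simp at h
  | (j+1), x :: l, v, h => by
    simp only [List.set_cons_succ, List.sum_cons, List.getD_cons_succ]
    have := sum_set' j l v (by simpa using h)
    omega

lemma set_getD_self : ∀ (j : ℕ) (l : List ℕ), j < l.length → l.set j (l.getD j 0) = l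
  | 0, [], h => by simp at h
  | 0, x :: l, h => by simp
  | (j+1), [], h => by simp at h
  | (j+1), x :: l, h => by
    simp only [List.set_cons_succ, List.getD_cons_succ]
    rw [set_getD_self j l (by simpa using h)]

lemma mem_set' : ∀ (j : ℕ) (l : List ℕ) (v x : ℕ), x ∈ l.set j v → x = v ∨ x ∈ l
  | j, [], v, x, h => by simp at h
  | 0, y :: l, v, x, h => by
    rcases List.mem_cons.mp h with h | h
    · exact Or.inl h
    · exact Or.inr (List.mem_cons_of_mem _ h)
  | (j+1), y :: l, v, x, h => by
    rcases List.mem_cons.mp h with h | h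
    · exact Or.inr (h ▸ List.mem_cons_self)
    · rcases mem_set' j l v x h with h | h
      · exact Or.inl h
      · exact Or.inr (List.mem_cons_of_mem _ h)

end helpers

/-- Build a composition from a list, defaulting to `ones`. -/
noncomputable def toComp (n : ℕ) (l : List ℕ) : Composition n :=
  if h : (∀ x ∈ l, 0 < x) ∧ l.sum = n then ⟨l, fun hi => h.1 _ hi, h.2⟩
  else Composition.ones n

lemma toComp_blocks (n : ℕ) (l : List ℕ) (h1 : ∀ x ∈ l, 0 < x) (h2 : l.sum = n) :
    (toComp n l).blocks = l := by
  rw [toComp, dif_pos ⟨h1, h2⟩]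

lemma toComp_self (n : ℕ) (c : Composition n) : toComp n c.blocks = c := by
  apply Composition.ext
  exact toComp_blocks n c.blocks (fun x hx => c.blocks_pos hx) c.blocks_sum

lemma insert_facts (x y : ℕ) (rest : List ℕ) (i : ℕ) (hx : 1 ≤ x) (hy : 2 ≤ y)
    (hrest : ∀ z ∈ rest, 1 ≤ z) (hi : i ≤ rest.length + 1) :
    1 ≤ (List.insertIdx (y :: rest) i x).headI ∧
    1 ≤ (List.insertIdx (y :: rest) i x).tail.headI ∧
    ((List.insertIdx (y :: rest) i x).headI = 1 →
      i = 0 ∧ 2 ≤ (List.insertIdx (y :: rest) i x).tail.headI) ∧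
    ((List.insertIdx (y :: rest) i x).tail.headI = 1 →
      1 ≤ i ∧ 2 ≤ (List.insertIdx (y :: rest) i x).headI) := by
  match i, rest with
  | 0, rest => simp; omega
  | 1, rest => simp; omega
  | (i+2), [] => simp at hi
  | (i+2), z :: rest =>
    have hz : 1 ≤ z := hrest z (List.mem_cons_self)
    simp only [List.insertIdx_succ_cons, List.headI_cons, List.tail_cons]
    refine ⟨by omega, by omega, by omega, fun _ => ⟨by omega, by omega⟩⟩

lemma heads_destruct (n k : ℕ) (hk : 2 ≤ k) (c : Composition n) (hlen : c.length = k) :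
    ∃ x y rest, c.blocks = x :: y :: rest ∧ 1 ≤ x ∧ 1 ≤ y ∧ (∀ z ∈ rest, 1 ≤ z) ∧
      x + (y + rest.sum) = n ∧ rest.length + 2 = k := by
  have hl : c.blocks.length = k := by rw [Composition.blocks_length, hlen]
  match hb : c.blocks with
  | [] => rw [hb] at hl; simp at hl; omega
  | [x] => rw [hb] at hl; simp at hl; omega
  | x :: y :: rest =>
    have hpos : ∀ z ∈ c.blocks, 1 ≤ z := fun z hz => c.blocks_pos hz
    rw [hb] at hpos hl
    have hsum := c.blocks_sum
    rw [hb] at hsum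
    simp only [List.sum_cons] at hsum
    simp only [List.length_cons] at hl
    exact ⟨x, y, rest, rfl, hpos x (by simp), hpos y (by simp),
      fun z hz => hpos z (by simp [hz]), by omega, by omega⟩

lemma heads_pos (n k : ℕ) (hk : 2 ≤ k) (c : Composition n) (hlen : c.length = k) :
    1 ≤ c.blocks.headI ∧ 1 ≤ c.blocks.tail.headI := by
  obtain ⟨x, y, rest, hb, hx, hy, -, -, -⟩ := heads_destruct n k hk c hlen
  rw [hb]; exact ⟨hx, hy⟩

lemma part1 (n k : ℕ) (hk : 2 ≤ k) :
    (∑ c ∈ Finset.univ.filter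
        (fun c : Composition n => c.length = k ∧ 2 ≤ c.blocks.tail.headI),
      ∑ i ∈ Finset.range k, zw (c.blocks.tail.insertIdx i c.blocks.headI))
    = (∑ c ∈ Finset.univ.filter (fun c : Composition n =>
          c.length = k ∧ c.blocks.headI = 1 ∧ 2 ≤ c.blocks.tail.headI), zw c.blocks)
      + ((k:ℤ)-1) • (∑ c ∈ Finset.univ.filter (fun c : Composition n =>
          c.length = k ∧ 2 ≤ c.blocks.headI ∧ c.blocks.tail.headI = 1), zw c.blocks)
      + (k:ℤ) • (∑ c ∈ Finset.univ.filter (fun c : Composition n =>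
          c.length = k ∧ 2 ≤ c.blocks.headI ∧ 2 ≤ c.blocks.tail.headI), zw c.blocks) := by
  classical
  set idx : Composition n → Finset ℕ := fun t =>
    if t.blocks.headI = 1 then {0}
    else if t.blocks.tail.headI = 1 then Finset.Icc 1 (k-1)
    else Finset.range k with hidx
  set U : Finset (Composition n) := Finset.univ.filter (fun t : Composition n =>
    t.length = k ∧ ((t.blocks.headI = 1 ∧ 2 ≤ t.blocks.tail.headI) ∨
      (2 ≤ t.blocks.headI ∧ t.blocks.tail.headI = 1) ∨
      (2 ≤ t.blocks.headI ∧ 2 ≤ t.blocks.tail.headI))) with hU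
  have hsig := Finset.sum_sigma (Finset.univ.filter
      (fun c : Composition n => c.length = k ∧ 2 ≤ c.blocks.tail.headI))
      (fun _ => Finset.range k)
      (fun p : Σ _ : Composition n, ℕ => zw (p.1.blocks.tail.insertIdx p.2 p.1.blocks.headI))
  rw [← hsig]
  rw [Finset.sum_nbij'
    (i := fun p : Σ _ : Composition n, ℕ =>
      (⟨toComp n (p.1.blocks.tail.insertIdx p.2 p.1.blocks.headI), p.2⟩ : Σ _ : Composition n, ℕ))
    (j := fun q : Σ _ : Composition n, ℕ =>
      (⟨toComp n (q.1.blocks.getD q.2 0 :: q.1.blocks.eraseIdx q.2), q.2⟩ : Σ _ : Composition n, ℕ))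
    (t := U.sigma (fun t => idx t)) (g := fun q => zw q.1.blocks)
    ?memfwd ?membwd ?li ?ri ?val]
  · -- now compute the sum over the sigma set
    rw [Finset.sum_sigma]
    dsimp only
    simp only [Finset.sum_const]
    have e1 : U.filter (fun t => t.blocks.headI = 1)
        = Finset.univ.filter (fun c : Composition n =>
          c.length = k ∧ c.blocks.headI = 1 ∧ 2 ≤ c.blocks.tail.headI) := by
      ext t
      simp only [hU, Finset.mem_filter, Finset.mem_univ, true_and]
      by_cases hlen : t.length = k
      · obtain ⟨p1, p2⟩ := heads_pos n k hk t hlen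
        constructor
        · rintro ⟨⟨-, h⟩, h1⟩; exact ⟨hlen, h1, by omega⟩
        · rintro ⟨-, h1, h2⟩; exact ⟨⟨hlen, Or.inl ⟨h1, h2⟩⟩, h1⟩
      · constructor
        · rintro ⟨⟨h, -⟩, -⟩; exact absurd h hlen
        · rintro ⟨h, -⟩; exact absurd h hlen
    have e2 : (U.filter (fun t => ¬ t.blocks.headI = 1)).filter
          (fun t => t.blocks.tail.headI = 1)
        = Finset.univ.filter (fun c : Composition n =>
          c.length = k ∧ 2 ≤ c.blocks.headI ∧ c.blocks.tail.headI = 1) := by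
      ext t
      simp only [hU, Finset.mem_filter, Finset.mem_univ, true_and]
      by_cases hlen : t.length = k
      · obtain ⟨p1, p2⟩ := heads_pos n k hk t hlen
        constructor
        · rintro ⟨⟨⟨-, h⟩, h1⟩, h2⟩; exact ⟨hlen, by omega, h2⟩
        · rintro ⟨-, h1, h2⟩; exact ⟨⟨⟨hlen, Or.inr (Or.inl ⟨h1, h2⟩)⟩, by omega⟩, h2⟩
      · constructor
        · rintro ⟨⟨⟨h, -⟩, -⟩, -⟩; exact absurd h hlen
        · rintro ⟨h, -⟩; exact absurd h hlen
    have e3 : (U.filter (fun t => ¬ t.blocks.headI = 1)).filter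
          (fun t => ¬ t.blocks.tail.headI = 1)
        = Finset.univ.filter (fun c : Composition n =>
          c.length = k ∧ 2 ≤ c.blocks.headI ∧ 2 ≤ c.blocks.tail.headI) := by
      ext t
      simp only [hU, Finset.mem_filter, Finset.mem_univ, true_and]
      by_cases hlen : t.length = k
      · obtain ⟨p1, p2⟩ := heads_pos n k hk t hlen
        constructor
        · rintro ⟨⟨⟨-, h⟩, h1⟩, h2⟩; exact ⟨hlen, by omega, by omega⟩
        · rintro ⟨-, h1, h2⟩; exact ⟨⟨⟨hlen, Or.inr (Or.inr ⟨h1, h2⟩)⟩, by omega⟩, by omega⟩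
      · constructor
        · rintro ⟨⟨⟨h, -⟩, -⟩, -⟩; exact absurd h hlen
        · rintro ⟨h, -⟩; exact absurd h hlen
    rw [← Finset.sum_filter_add_sum_filter_not U (fun t => t.blocks.headI = 1),
      ← Finset.sum_filter_add_sum_filter_not
        (U.filter (fun t => ¬ t.blocks.headI = 1)) (fun t => t.blocks.tail.headI = 1),
      e1, e2, e3]
    have v1 : ∑ t ∈ Finset.univ.filter (fun c : Composition n =>
          c.length = k ∧ c.blocks.headI = 1 ∧ 2 ≤ c.blocks.tail.headI),
        (idx t).card • zw t.blocks
        = ∑ t ∈ Finset.univ.filter (fun c : Composition n =>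
          c.length = k ∧ c.blocks.headI = 1 ∧ 2 ≤ c.blocks.tail.headI), zw t.blocks := by
      refine Finset.sum_congr rfl (fun t ht => ?_)
      obtain ⟨-, -, h1, -⟩ := Finset.mem_filter.mp ht
      simp only [hidx]
      rw [if_pos h1]
      simp
    have v2 : ∑ t ∈ Finset.univ.filter (fun c : Composition n =>
          c.length = k ∧ 2 ≤ c.blocks.headI ∧ c.blocks.tail.headI = 1),
        (idx t).card • zw t.blocks
        = ((k:ℤ)-1) • ∑ t ∈ Finset.univ.filter (fun c : Composition n =>
          c.length = k ∧ 2 ≤ c.blocks.headI ∧ c.blocks.tail.headI = 1), zw t.blocks := by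
      rw [show ((k:ℤ)-1) = ((k-1:ℕ):ℤ) by omega, natCast_zsmul, Finset.smul_sum]
      refine Finset.sum_congr rfl (fun t ht => ?_)
      obtain ⟨-, -, h1, h2⟩ := Finset.mem_filter.mp ht
      simp only [hidx]
      rw [if_neg (by omega), if_pos h2, Nat.card_Icc,
        show k - 1 + 1 - 1 = k - 1 from by omega]
    have v3 : ∑ t ∈ Finset.univ.filter (fun c : Composition n =>
          c.length = k ∧ 2 ≤ c.blocks.headI ∧ 2 ≤ c.blocks.tail.headI),
        (idx t).card • zw t.blocks
        = (k:ℤ) • ∑ t ∈ Finset.univ.filter (fun c : Composition n =>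
          c.length = k ∧ 2 ≤ c.blocks.headI ∧ 2 ≤ c.blocks.tail.headI), zw t.blocks := by
      rw [natCast_zsmul, Finset.smul_sum]
      refine Finset.sum_congr rfl (fun t ht => ?_)
      obtain ⟨-, -, h1, h2⟩ := Finset.mem_filter.mp ht
      simp only [hidx]
      rw [if_neg (by omega), if_neg (by omega), Finset.card_range]
    rw [v1, v2, v3, add_assoc]
  · -- memfwd
    rintro ⟨c, i⟩ hp
    rw [Finset.mem_sigma] at hp
    dsimp only at hp ⊢
    obtain ⟨hcA, hiR⟩ := hp
    rw [Finset.mem_filter] at hcA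
    obtain ⟨-, hlen, h2⟩ := hcA
    rw [Finset.mem_range] at hiR
    obtain ⟨x, y, rest, hb, hx, hy, hrest, hsum, hrl⟩ := heads_destruct n k hk c hlen
    rw [hb] at h2
    simp only [List.tail_cons, List.headI_cons] at h2 ⊢
    rw [hb]
    simp only [List.tail_cons, List.headI_cons]
    have hilen : i ≤ (y :: rest).length := by simp; omega
    have hLpos : ∀ z ∈ List.insertIdx (y :: rest) i x, 0 < z := by
      intro z hz
      rcases (List.mem_insertIdx hilen).mp hz with h | h
      · omega
      · rcases List.mem_cons.mp h with h | h
        · omega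
        · exact hrest z h
    have hLsum : (List.insertIdx (y :: rest) i x).sum = n := by
      rw [sum_insertIdx' i _ x hilen]; simp; omega
    have hLb := toComp_blocks n _ hLpos hLsum
    obtain ⟨f1, f2, f3, f4⟩ := insert_facts x y rest i hx h2 hrest (by simpa using hilen)
    rw [Finset.mem_sigma]
    constructor
    · rw [hU, Finset.mem_filter]
      refine ⟨Finset.mem_univ _, ?_, ?_⟩
      · rw [← Composition.blocks_length, hLb, List.length_insertIdx_of_le_length hilen]
        simp; omega
      · rw [hLb]; omega
    · rw [hidx]
      simp only [hLb]
      split_ifs with g1 g2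
      · simp only [Finset.mem_singleton]; exact (f3 g1).1
      · simp only [Finset.mem_Icc]; exact ⟨(f4 g2).1, by omega⟩
      · simp only [Finset.mem_range]; omega
  · -- membwd
    rintro ⟨t, i⟩ hq
    rw [Finset.mem_sigma] at hq
    dsimp only at hq ⊢
    obtain ⟨htU, hiI⟩ := hq
    rw [hU, Finset.mem_filter] at htU
    obtain ⟨-, hlen, hclass⟩ := htU
    obtain ⟨a, b, rest, hb, ha, hb1, hrest, hsum, hrl⟩ := heads_destruct n k hk t hlen
    rw [hb] at hclass
    simp only [List.headI_cons, List.tail_cons] at hclass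
    simp only [hidx] at hiI
    rw [hb] at hiI
    simp only [List.headI_cons, List.tail_cons] at hiI
    have hlb : t.blocks.length = k := by rw [Composition.blocks_length, hlen]
    have hik : i < k := by
      by_cases g1 : a = 1 <;> by_cases g2 : b = 1 <;> simp [g1, g2, Finset.mem_Icc] at hiI <;> omega
    have hRpos : ∀ z ∈ t.blocks.getD i 0 :: t.blocks.eraseIdx i, 0 < z := by
      intro z hz
      rcases List.mem_cons.mp hz with h | h
      · rw [h]; exact t.blocks_pos (getD_mem' i t.blocks (by omega))
      · exact t.blocks_pos (List.mem_of_mem_eraseIdx h)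
    have hRsum : (t.blocks.getD i 0 :: t.blocks.eraseIdx i).sum = n := by
      simp only [List.sum_cons]
      rw [add_comm, sum_eraseIdx' i t.blocks (by omega), t.blocks_sum]
    have hRb := toComp_blocks n _ hRpos hRsum
    rw [Finset.mem_sigma]
    constructor
    · rw [Finset.mem_filter]
      refine ⟨Finset.mem_univ _, ?_, ?_⟩
      · rw [← Composition.blocks_length, hRb]
        simp only [List.length_cons]
        rw [List.length_eraseIdx]
        simp only [hlb]
        split <;> omega
      · rw [hRb]
        simp only [List.tail_cons]
        match i, hik with
        | 0, _ =>
          rw [hb]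
          simp only [List.eraseIdx_cons_zero, List.headI_cons]
          by_cases g1 : a = 1 <;> by_cases g2 : b = 1 <;> simp [g1, g2, Finset.mem_Icc] at hiI <;> omega
        | (i'+1), _ =>
          rw [hb]
          simp only [List.eraseIdx_cons_succ, List.headI_cons]
          by_cases g1 : a = 1 <;> by_cases g2 : b = 1 <;> simp [g1, g2, Finset.mem_Icc] at hiI <;> omega
    · simpa using hik
  · -- left inverse
    rintro ⟨c, i⟩ hp
    rw [Finset.mem_sigma] at hp
    dsimp only at hp ⊢
    obtain ⟨hcA, hiR⟩ := hp
    rw [Finset.mem_filter] at hcA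
    obtain ⟨-, hlen, h2⟩ := hcA
    rw [Finset.mem_range] at hiR
    obtain ⟨x, y, rest, hb, hx, hy, hrest, hsum, hrl⟩ := heads_destruct n k hk c hlen
    simp only [hb, List.tail_cons, List.headI_cons]
    have hilen : i ≤ (y :: rest).length := by simp; omega
    have hLpos : ∀ z ∈ List.insertIdx (y :: rest) i x, 0 < z := by
      intro z hz
      rcases (List.mem_insertIdx hilen).mp hz with h | h
      · omega
      · rcases List.mem_cons.mp h with h | h
        · omega
        · exact hrest z h
    have hLsum : (List.insertIdx (y :: rest) i x).sum = n := by
      rw [sum_insertIdx' i _ x hilen]; simp; omega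
    have hLb := toComp_blocks n _ hLpos hLsum
    simp only [hLb, getD_insertIdx_self i _ x hilen, List.eraseIdx_insertIdx_self, Sigma.mk.inj_iff,
      heq_eq_eq, and_true]
    rw [← hb, toComp_self]
  · -- right inverse
    rintro ⟨t, i⟩ hq
    rw [Finset.mem_sigma] at hq
    dsimp only at hq ⊢
    obtain ⟨htU, hiI⟩ := hq
    rw [hU, Finset.mem_filter] at htU
    obtain ⟨-, hlen, hclass⟩ := htU
    have hlb : t.blocks.length = k := by rw [Composition.blocks_length, hlen]
    have hik : i < k := by
      simp only [hidx] at hiI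
      split_ifs at hiI with g1 g2
      · simp at hiI; omega
      · simp [Finset.mem_Icc] at hiI; omega
      · simpa using hiI
    have hRpos : ∀ z ∈ t.blocks.getD i 0 :: t.blocks.eraseIdx i, 0 < z := by
      intro z hz
      rcases List.mem_cons.mp hz with h | h
      · rw [h]; exact t.blocks_pos (getD_mem' i t.blocks (by omega))
      · exact t.blocks_pos (List.mem_of_mem_eraseIdx h)
    have hRsum : (t.blocks.getD i 0 :: t.blocks.eraseIdx i).sum = n := by
      simp only [List.sum_cons]
      rw [add_comm, sum_eraseIdx' i t.blocks (by omega), t.blocks_sum]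
    have hRb := toComp_blocks n _ hRpos hRsum
    simp only [hRb, List.tail_cons, List.headI_cons, Sigma.mk.inj_iff, heq_eq_eq, and_true]
    rw [insertIdx_eraseIdx_getD i t.blocks (by omega), toComp_self]
  · -- values
    rintro ⟨c, i⟩ hp
    rw [Finset.mem_sigma] at hp
    dsimp only at hp ⊢
    obtain ⟨hcA, hiR⟩ := hp
    rw [Finset.mem_filter] at hcA
    obtain ⟨-, hlen, h2⟩ := hcA
    rw [Finset.mem_range] at hiR
    obtain ⟨x, y, rest, hb, hx, hy, hrest, hsum, hrl⟩ := heads_destruct n k hk c hlen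
    simp only [hb, List.tail_cons, List.headI_cons]
    have hilen : i ≤ (y :: rest).length := by simp; omega
    have hLpos : ∀ z ∈ List.insertIdx (y :: rest) i x, 0 < z := by
      intro z hz
      rcases (List.mem_insertIdx hilen).mp hz with h | h
      · omega
      · rcases List.mem_cons.mp h with h | h
        · omega
        · exact hrest z h
    have hLsum : (List.insertIdx (y :: rest) i x).sum = n := by
      rw [sum_insertIdx' i _ x hilen]; simp; omega
    rw [toComp_blocks n _ hLpos hLsum]

lemma getD_set_self' (j : ℕ) (l : List ℕ) (v : ℕ) (h : j < l.length) :
    (l.set j v).getD j 0 = v := by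
  rw [List.getD_eq_getElem _ _ (by rw [List.length_set]; exact h)]
  exact List.getElem_set_self _

lemma sum_getD : ∀ l : List ℕ, ∑ j ∈ Finset.range l.length, l.getD j 0 = l.sum
  | [] => by simp
  | x :: l => by
    rw [List.length_cons, Finset.sum_range_succ' (fun j => (x :: l).getD j 0) l.length]
    simp only [List.getD_cons_succ, List.getD_cons_zero, List.sum_cons, sum_getD l]
    ring

lemma head_destruct (n m : ℕ) (hm : 1 ≤ m) (c : Composition n) (hlen : c.length = m) :
    ∃ a rest, c.blocks = a :: rest ∧ 1 ≤ a ∧ (∀ z ∈ rest, 1 ≤ z) ∧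
      a + rest.sum = n ∧ rest.length + 1 = m := by
  have hl : c.blocks.length = m := by rw [Composition.blocks_length, hlen]
  match hb : c.blocks with
  | [] => rw [hb] at hl; simp at hl; omega
  | a :: rest =>
    have hpos : ∀ z ∈ c.blocks, 1 ≤ z := fun z hz => c.blocks_pos hz
    rw [hb] at hpos hl
    have hsum := c.blocks_sum
    rw [hb] at hsum
    simp only [List.sum_cons] at hsum
    simp only [List.length_cons] at hl
    exact ⟨a, rest, rfl, hpos a (by simp), fun z hz => hpos z (by simp [hz]), hsum, hl⟩

lemma part2 (n k : ℕ) (hk : 2 ≤ k) (hn : k + 1 ≤ n) :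
    (∑ c ∈ Finset.univ.filter
        (fun c : Composition n => c.length = k ∧ 2 ≤ c.blocks.tail.headI),
      ∑ j ∈ Finset.range (k-1),
        zw (c.blocks.tail.set j (c.blocks.headI + c.blocks.tail.getD j 0)))
    = ((n:ℤ)-k) • ∑ c ∈ Finset.univ.filter (fun c : Composition n =>
        c.length = k - 1 ∧ 2 ≤ c.blocks.headI), zw c.blocks := by
  classical
  set T4 : Finset (Composition n) := Finset.univ.filter (fun c : Composition n =>
    c.length = k - 1 ∧ 2 ≤ c.blocks.headI) with hT4
  set inner : Composition n → Finset (Σ _ : ℕ, ℕ) := fun t =>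
    (Finset.range (k-1)).sigma (fun j => Finset.Icc 1 (t.blocks.getD j 0 - (if j = 0 then 2 else 1)))
    with hinner
  have hsig := Finset.sum_sigma (Finset.univ.filter
      (fun c : Composition n => c.length = k ∧ 2 ≤ c.blocks.tail.headI))
      (fun _ => Finset.range (k-1))
      (fun p : Σ _ : Composition n, ℕ =>
        zw (p.1.blocks.tail.set p.2 (p.1.blocks.headI + p.1.blocks.tail.getD p.2 0)))
  rw [← hsig]
  rw [Finset.sum_nbij'
    (i := fun p : Σ _ : Composition n, ℕ =>
      (⟨toComp n (p.1.blocks.tail.set p.2 (p.1.blocks.headI + p.1.blocks.tail.getD p.2 0)),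
        p.2, p.1.blocks.headI⟩ : Σ _ : Composition n, Σ _ : ℕ, ℕ))
    (j := fun q : Σ _ : Composition n, Σ _ : ℕ, ℕ =>
      (⟨toComp n (q.2.2 :: q.1.blocks.set q.2.1 (q.1.blocks.getD q.2.1 0 - q.2.2)), q.2.1⟩ :
        Σ _ : Composition n, ℕ))
    (t := T4.sigma (fun t => inner t)) (g := fun q => zw q.1.blocks)
    ?memfwd ?membwd ?li ?ri ?val]
  · -- final computation
    rw [Finset.sum_sigma]
    dsimp only
    simp only [Finset.sum_const]
    rw [show ((n:ℤ)-k) = ((n - k : ℕ) : ℤ) by omega, natCast_zsmul, Finset.smul_sum]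
    refine Finset.sum_congr rfl (fun t ht => ?_)
    rw [hT4, Finset.mem_filter] at ht
    obtain ⟨-, hlen, hhead⟩ := ht
    obtain ⟨a, rest, hb, ha, hrest, hsum, hrl⟩ := head_destruct n (k-1) (by omega) t hlen
    have hlb : t.blocks.length = k - 1 := by rw [Composition.blocks_length, hlen]
    have hcard : (inner t).card = n - k := by
      rw [hinner]
      dsimp only
      rw [Finset.card_sigma]
      simp only [Nat.card_Icc, Nat.add_sub_cancel]
      have hsum2 : ∑ j ∈ Finset.range (k-1),
          (t.blocks.getD j 0 - (if j = 0 then 2 else 1))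
          = ∑ j ∈ Finset.range (k-1), t.blocks.getD j 0
            - ∑ j ∈ Finset.range (k-1), (if j = 0 then (2:ℕ) else 1) := by
        rw [eq_tsub_iff_add_eq_of_le, ← Finset.sum_add_distrib]
        · refine Finset.sum_congr rfl (fun j hj => ?_)
          rw [Finset.mem_range] at hj
          have hel : 1 ≤ t.blocks.getD j 0 :=
            t.blocks_pos (getD_mem' j t.blocks (by omega))
          have h0 : j = 0 → 2 ≤ t.blocks.getD j 0 := by
            intro h; rw [h]; rw [hb]; simpa using (by rw [hb] at hhead; simpa using hhead)
          split_ifs with hj0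
          · have := h0 hj0; omega
          · omega
        · refine Finset.sum_le_sum (fun j hj => ?_)
          rw [Finset.mem_range] at hj
          have hel : 1 ≤ t.blocks.getD j 0 :=
            t.blocks_pos (getD_mem' j t.blocks (by omega))
          have h0 : j = 0 → 2 ≤ t.blocks.getD j 0 := by
            intro h; rw [h]; rw [hb]; simpa using (by rw [hb] at hhead; simpa using hhead)
          split_ifs with hj0
          · have := h0 hj0; omega
          · omega
      rw [hsum2]
      have hg : ∑ j ∈ Finset.range (k-1), t.blocks.getD j 0 = n := by
        rw [← hlb, sum_getD, t.blocks_sum]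
      have he : ∑ j ∈ Finset.range (k-1), (if j = 0 then (2:ℕ) else 1) = k := by
        have : ∀ j : ℕ, (if j = 0 then (2:ℕ) else 1) = (if j = 0 then (1:ℕ) else 0) + 1 := by
          intro j; split_ifs <;> rfl
        simp only [this]
        rw [Finset.sum_add_distrib, Finset.sum_const, Finset.sum_ite_eq' (Finset.range (k-1))
          (0:ℕ) (fun _ => (1:ℕ))]
        simp only [Finset.mem_range, Finset.card_range, smul_eq_mul, mul_one]
        rw [if_pos (by omega)]
        omega
      rw [hg, he]
    rw [hcard]
  · -- memfwd
    rintro ⟨c, j⟩ hp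
    rw [Finset.mem_sigma] at hp
    dsimp only at hp ⊢
    obtain ⟨hcA, hjR⟩ := hp
    rw [Finset.mem_filter] at hcA
    obtain ⟨-, hlen, h2⟩ := hcA
    rw [Finset.mem_range] at hjR
    obtain ⟨x, y, rest, hb, hx, hy, hrest, hsum, hrl⟩ := heads_destruct n k hk c hlen
    rw [hb] at h2
    simp only [List.tail_cons, List.headI_cons] at h2 ⊢
    rw [hb]
    simp only [List.tail_cons, List.headI_cons]
    have hjlen : j < (y :: rest).length := by simp; omega
    have hd1 : 1 ≤ (y :: rest).getD j 0 := by
      rcases List.mem_cons.mp (getD_mem' j (y :: rest) hjlen) with h | h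
      · omega
      · exact hrest _ h
    have hde : (if j = 0 then 2 else 1) ≤ (y :: rest).getD j 0 := by
      split_ifs with hj0
      · rw [hj0]; simpa using h2
      · exact hd1
    have hLpos : ∀ z ∈ (y :: rest).set j (x + (y :: rest).getD j 0), 0 < z := by
      intro z hz
      rcases mem_set' j (y :: rest) _ z hz with h | h
      · omega
      · rcases List.mem_cons.mp h with h | h
        · omega
        · exact hrest z h
    have hLsum : ((y :: rest).set j (x + (y :: rest).getD j 0)).sum = n := by
      have := sum_set' j (y :: rest) (x + (y :: rest).getD j 0) hjlen
      simp only [List.sum_cons] at this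
      omega
    have hLb := toComp_blocks n _ hLpos hLsum
    rw [Finset.mem_sigma]
    constructor
    · rw [hT4, Finset.mem_filter]
      refine ⟨Finset.mem_univ _, ?_, ?_⟩
      · rw [← Composition.blocks_length, hLb, List.length_set]
        simp; omega
      · rw [hLb]
        cases j with
        | zero => simp only [List.set_cons_zero, List.getD_cons_zero, List.headI_cons]; omega
        | succ j' => simp only [List.set_cons_succ, List.headI_cons]; omega
    · simp only [hinner]
      rw [Finset.mem_sigma]
      refine ⟨by simpa using hjR, ?_⟩
      dsimp only
      rw [hLb, getD_set_self' j _ _ hjlen, Finset.mem_Icc]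
      constructor
      · omega
      · split_ifs with hj0 <;> split_ifs at hde <;> omega
  · -- membwd
    rintro ⟨t, j, r⟩ hq
    rw [Finset.mem_sigma] at hq
    dsimp only at hq ⊢
    obtain ⟨htT, hjr⟩ := hq
    rw [hT4, Finset.mem_filter] at htT
    obtain ⟨-, hlen, hhead⟩ := htT
    simp only [hinner] at hjr
    rw [Finset.mem_sigma] at hjr
    dsimp only at hjr
    obtain ⟨hjR, hrI⟩ := hjr
    rw [Finset.mem_range] at hjR
    rw [Finset.mem_Icc] at hrI
    obtain ⟨hr1, hr2⟩ := hrI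
    obtain ⟨a, rest, hb, ha, hrest, hsum, hrl⟩ := head_destruct n (k-1) (by omega) t hlen
    have hlb : t.blocks.length = k - 1 := by rw [Composition.blocks_length, hlen]
    have hjlen : j < t.blocks.length := by omega
    have hel : 1 ≤ t.blocks.getD j 0 := t.blocks_pos (getD_mem' j t.blocks hjlen)
    have hh : t.blocks.headI = a := by rw [hb]; rfl
    have h0 : j = 0 → t.blocks.getD j 0 = t.blocks.headI := by
      intro h; rw [h, hb]; rfl
    have hre : (if j = 0 then 2 else 1) ≤ t.blocks.getD j 0 := by
      split_ifs at hr2 ⊢ with hj0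
      · omega
      · omega
    have hMpos : ∀ z ∈ r :: t.blocks.set j (t.blocks.getD j 0 - r), 0 < z := by
      intro z hz
      rcases List.mem_cons.mp hz with h | h
      · omega
      · rcases mem_set' j t.blocks _ z h with h | h
        · split_ifs at hre hr2 <;> omega
        · exact t.blocks_pos h
    have hMsum : (r :: t.blocks.set j (t.blocks.getD j 0 - r)).sum = n := by
      have := sum_set' j t.blocks (t.blocks.getD j 0 - r) hjlen
      rw [t.blocks_sum] at this
      simp only [List.sum_cons]
      split_ifs at hre hr2 <;> omega
    have hMb := toComp_blocks n _ hMpos hMsum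
    rw [Finset.mem_sigma]
    constructor
    · rw [Finset.mem_filter]
      refine ⟨Finset.mem_univ _, ?_, ?_⟩
      · rw [← Composition.blocks_length, hMb]
        simp only [List.length_cons, List.length_set]
        omega
      · rw [hMb]
        simp only [List.tail_cons]
        cases j with
        | zero =>
          rw [hb] at hr2 ⊢
          simp only [List.set_cons_zero, List.getD_cons_zero, List.headI_cons,
            reduceIte] at hr2 ⊢
          rw [hh] at hhead
          omega
        | succ j' =>
          rw [hb]
          simp only [List.set_cons_succ, List.headI_cons]
          rw [hh] at hhead
          exact hhead
    · simpa using hjR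
  · -- left inverse
    rintro ⟨c, j⟩ hp
    rw [Finset.mem_sigma] at hp
    dsimp only at hp ⊢
    obtain ⟨hcA, hjR⟩ := hp
    rw [Finset.mem_filter] at hcA
    obtain ⟨-, hlen, h2⟩ := hcA
    rw [Finset.mem_range] at hjR
    obtain ⟨x, y, rest, hb, hx, hy, hrest, hsum, hrl⟩ := heads_destruct n k hk c hlen
    rw [hb] at h2
    simp only [List.tail_cons, List.headI_cons] at h2
    simp only [hb, List.tail_cons, List.headI_cons]
    have hjlen : j < (y :: rest).length := by simp; omega
    have hLpos : ∀ z ∈ (y :: rest).set j (x + (y :: rest).getD j 0), 0 < z := by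
      intro z hz
      rcases mem_set' j (y :: rest) _ z hz with h | h
      · omega
      · rcases List.mem_cons.mp h with h | h
        · omega
        · exact hrest z h
    have hLsum : ((y :: rest).set j (x + (y :: rest).getD j 0)).sum = n := by
      have := sum_set' j (y :: rest) (x + (y :: rest).getD j 0) hjlen
      simp only [List.sum_cons] at this
      omega
    have hLb := toComp_blocks n _ hLpos hLsum
    simp only [hLb, getD_set_self' j _ _ hjlen, Nat.add_sub_cancel_left, List.set_set,
      set_getD_self j _ hjlen, Sigma.mk.inj_iff, heq_eq_eq, and_true]
    rw [← hb, toComp_self]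
  · -- right inverse
    rintro ⟨t, j, r⟩ hq
    rw [Finset.mem_sigma] at hq
    dsimp only at hq ⊢
    obtain ⟨htT, hjr⟩ := hq
    rw [hT4, Finset.mem_filter] at htT
    obtain ⟨-, hlen, hhead⟩ := htT
    simp only [hinner] at hjr
    rw [Finset.mem_sigma] at hjr
    dsimp only at hjr
    obtain ⟨hjR, hrI⟩ := hjr
    rw [Finset.mem_range] at hjR
    rw [Finset.mem_Icc] at hrI
    obtain ⟨hr1, hr2⟩ := hrI
    have hlb : t.blocks.length = k - 1 := by rw [Composition.blocks_length, hlen]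
    have hjlen : j < t.blocks.length := by omega
    have hel : 1 ≤ t.blocks.getD j 0 := t.blocks_pos (getD_mem' j t.blocks hjlen)
    have hre : (if j = 0 then 2 else 1) ≤ t.blocks.getD j 0 := by
      split_ifs at hr2 ⊢ with hj0 <;> omega
    have hMpos : ∀ z ∈ r :: t.blocks.set j (t.blocks.getD j 0 - r), 0 < z := by
      intro z hz
      rcases List.mem_cons.mp hz with h | h
      · omega
      · rcases mem_set' j t.blocks _ z h with h | h
        · split_ifs at hre hr2 <;> omega
        · exact t.blocks_pos h
    have hMsum : (r :: t.blocks.set j (t.blocks.getD j 0 - r)).sum = n := by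
      have := sum_set' j t.blocks (t.blocks.getD j 0 - r) hjlen
      rw [t.blocks_sum] at this
      simp only [List.sum_cons]
      split_ifs at hre hr2 <;> omega
    have hMb := toComp_blocks n _ hMpos hMsum
    have hjlen' : j < (t.blocks.set j (t.blocks.getD j 0 - r)).length := by
      rw [List.length_set]; exact hjlen
    simp only [hMb, List.tail_cons, List.headI_cons,
      getD_set_self' j _ _ hjlen, List.set_set, Sigma.mk.inj_iff, heq_eq_eq, and_true]
    rw [show r + (t.blocks.getD j 0 - r) = t.blocks.getD j 0 by split_ifs at hre hr2 <;> omega,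
      set_getD_self j _ hjlen, toComp_self]
  · -- values
    rintro ⟨c, j⟩ hp
    rw [Finset.mem_sigma] at hp
    dsimp only at hp ⊢
    obtain ⟨hcA, hjR⟩ := hp
    rw [Finset.mem_filter] at hcA
    obtain ⟨-, hlen, h2⟩ := hcA
    rw [Finset.mem_range] at hjR
    obtain ⟨x, y, rest, hb, hx, hy, hrest, hsum, hrl⟩ := heads_destruct n k hk c hlen
    rw [hb] at h2
    simp only [List.tail_cons, List.headI_cons] at h2
    simp only [hb, List.tail_cons, List.headI_cons]
    have hjlen : j < (y :: rest).length := by simp; omega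
    have hLpos : ∀ z ∈ (y :: rest).set j (x + (y :: rest).getD j 0), 0 < z := by
      intro z hz
      rcases mem_set' j (y :: rest) _ z hz with h | h
      · omega
      · rcases List.mem_cons.mp h with h | h
        · omega
        · exact hrest z h
    have hLsum : ((y :: rest).set j (x + (y :: rest).getD j 0)).sum = n := by
      have := sum_set' j (y :: rest) (x + (y :: rest).getD j 0) hjlen
      simp only [List.sum_cons] at this
      omega
    rw [toComp_blocks n _ hLpos hLsum]

/-- Admissible sum formula for the quasi-shuffle product, `k ≥ 2`,
`n ≥ k+1`. -/
theorem quasi_shuffle_sum_formula_admissible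
    (mul : QWords →ₗ[ℤ] QWords →ₗ[ℤ] QWords)
    (hunitl : ∀ w : QWords, mul (zw []) w = w)
    (hunitr : ∀ w : QWords, mul w (zw []) = w)
    (hrec : ∀ (r s : ℕ) (u v : List ℕ), 1 ≤ r → 1 ≤ s →
      (∀ x ∈ u, 1 ≤ x) → (∀ x ∈ v, 1 ≤ x) →
      mul (zw (r :: u)) (zw (s :: v)) =
        zcons r (mul (zw u) (zw (s :: v))) + zcons s (mul (zw (r :: u)) (zw v)) +
          zcons (r + s) (mul (zw u) (zw v)))
    (k n : ℕ) (hk : 2 ≤ k) (hn : k + 1 ≤ n) :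
    ∑ c ∈ Finset.univ.filter
        (fun c : Composition n => c.length = k ∧ 2 ≤ c.blocks.tail.headI),
        mul (zw [c.blocks.headI]) (zw c.blocks.tail)
      = (∑ c ∈ Finset.univ.filter (fun c : Composition n =>
            c.length = k ∧ c.blocks.headI = 1 ∧ 2 ≤ c.blocks.tail.headI), zw c.blocks)
        + ((k : ℤ) - 1) • (∑ c ∈ Finset.univ.filter (fun c : Composition n =>
            c.length = k ∧ 2 ≤ c.blocks.headI ∧ c.blocks.tail.headI = 1), zw c.blocks)
        + (k : ℤ) • (∑ c ∈ Finset.univ.filter (fun c : Composition n =>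
            c.length = k ∧ 2 ≤ c.blocks.headI ∧ 2 ≤ c.blocks.tail.headI), zw c.blocks)
        + ((n : ℤ) - k) • (∑ c ∈ Finset.univ.filter (fun c : Composition n =>
            c.length = k - 1 ∧ 2 ≤ c.blocks.headI), zw c.blocks) := by
  have hstep : ∀ c ∈ Finset.univ.filter
      (fun c : Composition n => c.length = k ∧ 2 ≤ c.blocks.tail.headI),
      mul (zw [c.blocks.headI]) (zw c.blocks.tail) =
      (∑ i ∈ Finset.range k, zw (c.blocks.tail.insertIdx i c.blocks.headI)) +
      (∑ j ∈ Finset.range (k-1),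
        zw (c.blocks.tail.set j (c.blocks.headI + c.blocks.tail.getD j 0))) := by
    intro c hc
    rw [Finset.mem_filter] at hc
    obtain ⟨-, hlen, h2⟩ := hc
    obtain ⟨x, y, rest, hb, hx, hy, hrest, hsum, hrl⟩ := heads_destruct n k hk c hlen
    rw [hb]
    simp only [List.headI_cons, List.tail_cons]
    rw [expand mul hunitl hunitr hrec (y :: rest) x hx ?hv]
    case hv =>
      intro z hz
      rcases List.mem_cons.mp hz with h | h
      · omega
      · exact hrest z h
    rw [show (y :: rest).length = k - 1 by simp; omega, show k - 1 + 1 = k by omega]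
  rw [Finset.sum_congr rfl hstep, Finset.sum_add_distrib, part1 n k hk, part2 n k hk hn]
end

section
/- Let H⧢ be the shuffle algebra: the free Z-module on words in two letters x0, x1, with shuffle product defined by (a u) ⧢ (b v) = a (u ⧢ (b v)) + b ((a u) ⧢ v) for a, b ∈ {x0, x1} and empty word as unit. Transport ⧢ to words z_{s1,...,sk} (si ≥ 1) via the bijection z_{s1,...,sk} ↔ x0^{s1-1} x1 ··· x0^{sk-1} x1, yielding a product ш on the span of the z-words. Then for positive integers k ≥ 2 and n ≥ k: z_1 ш (∑_{s1+...+s_{k-1} = n-1, si ≥ 1} z_{s1,...,s_{k-1}}) = k ∑_{∑ti = n, ti ≥ 1, tk = 1} z_{t1,...,tk} + (k-1) ∑_{∑ti = n, ti ≥ 1, tk ≥ 2} z_{t1,...,tk}. -/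
open Finsupp

/-- The free ℤ-module on words in the two letters `x₀, x₁`
(`false` plays the role of `x₀` and `true` the role of `x₁`). -/
abbrev XWords : Type := (List Bool) →₀ ℤ

/-- A word in `x₀, x₁` as a basis element. -/
noncomputable def xw (l : List Bool) : XWords := Finsupp.single l 1

/-- The bijection `z_{s₁,…,s_k} ↔ x₀^{s₁-1} x₁ ⋯ x₀^{s_k-1} x₁` on words. -/
def encodeWord : List ℕ → List Bool
  | [] => []
  | s :: t => List.replicate (s - 1) false ++ true :: encodeWord t

/-! ### Auxiliary definitions -/

/-- A left inverse of `encodeWord` on lists of positive numbers. -/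
def decodeWord : List Bool → List ℕ
  | [] => []
  | true :: w => 1 :: decodeWord w
  | false :: w =>
    match decodeWord w with
    | [] => []
    | a :: t => (a + 1) :: t

/-- The result of shuffling `z₁` into `z_s`. -/
noncomputable def Qw : List ℕ → QWords
  | [] => zw [1]
  | a :: t => (∑ j ∈ Finset.range a, zw ((j + 1) :: (a - j) :: t))
      + Finsupp.mapDomain (List.cons a) (Qw t)

/-- The finset of compositions of `n` with `k` parts, as lists. -/
def LF : ℕ → ℕ → Finset (List ℕ)
  | n, 0 => if n = 0 then {[]} else ∅
  | n, (k+1) => (Finset.Icc 1 n).biUnion (fun a => (LF (n - a) k).image (List.cons a))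

/-- The coefficient in the conjectured formula. -/
def cf (K : ℕ) (l : List ℕ) : ℤ := if l.getLastD 0 = 1 then (K : ℤ) else (K : ℤ) - 1

/-! ### decode/encode -/

lemma decode_rep (m : ℕ) (w : List Bool) :
    decodeWord (List.replicate m false ++ true :: w) = (m + 1) :: decodeWord w := by
  induction m with
  | zero => simp [decodeWord]
  | succ m ih => rw [List.replicate_succ, List.cons_append, decodeWord, ih]

lemma decode_encode (s : List ℕ) (hs : ∀ x ∈ s, 1 ≤ x) : decodeWord (encodeWord s) = s := by
  induction s with
  | nil => rfl
  | cons a t ih =>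
    have ha : 1 ≤ a := hs a (by simp)
    rw [encodeWord, decode_rep, ih (fun x hx => hs x (by simp [hx]))]
    congr 1
    omega

/-! ### Basic properties of `LF` -/

lemma mem_LF {k : ℕ} : ∀ {n : ℕ} {l : List ℕ},
    l ∈ LF n k ↔ l.length = k ∧ l.sum = n ∧ ∀ x ∈ l, 1 ≤ x := by
  induction k with
  | zero =>
    intro n l
    rw [LF]
    split_ifs with h
    · subst h
      simp only [Finset.mem_singleton, List.length_eq_zero_iff]
      constructor
      · rintro rfl; simp
      · rintro ⟨rfl, -⟩; rfl
    · simp only [Finset.notMem_empty, false_iff, List.length_eq_zero_iff]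
      rintro ⟨rfl, h2, -⟩
      exact h h2.symm
  | succ k ih =>
    intro n l
    rw [LF]
    simp only [Finset.mem_biUnion, Finset.mem_image, Finset.mem_Icc]
    constructor
    · rintro ⟨a, ⟨ha1, ha2⟩, t, ht, rfl⟩
      obtain ⟨h1, h2, h3⟩ := ih.1 ht
      refine ⟨by simp [h1], by simp [h2]; omega, ?_⟩
      intro x hx
      rcases List.mem_cons.1 hx with rfl | hx
      · exact ha1
      · exact h3 x hx
    · rintro ⟨h1, h2, h3⟩
      match l with
      | [] => simp at h1
      | a :: t =>
        have ha : 1 ≤ a := h3 a (by simp)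
        simp only [List.length_cons, Nat.succ_inj] at h1
        simp only [List.sum_cons] at h2
        refine ⟨a, ⟨ha, by omega⟩, t, ih.2 ⟨h1, by omega, fun x hx => h3 x (by simp [hx])⟩, rfl⟩

lemma LF_sum {M : Type*} [AddCommMonoid M] (f : List ℕ → M) (n k : ℕ) :
    ∑ l ∈ LF n (k+1), f l = ∑ a ∈ Finset.Icc 1 n, ∑ t ∈ LF (n - a) k, f (a :: t) := by
  rw [LF, Finset.sum_biUnion]
  · exact Finset.sum_congr rfl fun a _ => Finset.sum_image (by intros x _ y _ h; simpa using h)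
  · intro a _ b _ hab
    simp only [Function.onFun, Finset.disjoint_left, Finset.mem_image]
    rintro l ⟨t, -, rfl⟩ ⟨u, -, h⟩
    exact hab (by simpa using (List.cons.injEq _ _ _ _ ▸ h).1.symm) |>.elim

lemma LF_one (m : ℕ) : LF m 1 = if 1 ≤ m then {[m]} else ∅ := by
  ext l
  rw [mem_LF]
  split_ifs with h
  · simp only [Finset.mem_singleton]
    constructor
    · rintro ⟨h1, h2, h3⟩
      match l with
      | [a] => simp at h2; subst h2; rfl
    · rintro rfl; exact ⟨rfl, by simp, by simpa using h⟩
  · simp only [Finset.notMem_empty, iff_false]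
    rintro ⟨h1, h2, h3⟩
    match l with
    | [a] => simp at h2; subst h2; exact h (h3 _ (by simp))

lemma LF_zero_succ (k : ℕ) : LF 0 (k+1) = ∅ := by
  rw [LF]; simp

lemma sum_range_add {M : Type*} [AddCommMonoid M] (f : ℕ → M) (a b : ℕ) :
    ∑ i ∈ Finset.range (a+b), f i
      = (∑ i ∈ Finset.range a, f i) + ∑ i ∈ Finset.range b, f (a+i) := by
  rw [Finset.range_add, Finset.sum_union (by simp [Finset.disjoint_left]; omega)]
  simp [Finset.sum_map, addLeftEmbedding]

lemma cf_cons (K a : ℕ) (u : List ℕ) (hu : u ≠ []) : cf (K+1) (a :: u) = cf K u + 1 := by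
  match u with
  | b :: v =>
    simp only [cf, List.getLastD_cons]
    split_ifs <;> push_cast <;> ring

lemma getLastD_mem (l : List ℕ) (h : l ≠ []) : l.getLastD 0 ∈ l := by
  match l with
  | [a] => simp
  | a :: b :: v =>
    rw [List.getLastD_cons]
    exact List.mem_cons_of_mem _ (getLastD_mem (b :: v) (by simp))

lemma Icc_one_sum {M : Type*} [AddCommMonoid M] (g : ℕ → M) (m : ℕ) :
    ∑ a ∈ Finset.Icc 1 m, g a = ∑ j ∈ Finset.range m, g (j+1) := by
  induction m with
  | zero => simp
  | succ m ih => rw [Finset.sum_Icc_succ_top (by omega), Finset.sum_range_succ, ih]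

/-! ### The key combinatorial identity -/

lemma key (k : ℕ) (hk : 1 ≤ k) (n : ℕ) :
    ∑ s ∈ LF (n-1) k, Qw s = ∑ t ∈ LF n (k+1), cf (k+1) t • zw t := by
  induction k, hk using Nat.le_induction generalizing n with
  | base =>
    rcases Nat.lt_or_ge n 2 with h | h
    · have h1 : LF (n-1) 1 = ∅ := by rw [LF_one, if_neg (by omega)]
      have h2 : LF n 2 = ∅ := by
        ext l
        simp only [mem_LF, Finset.notMem_empty, iff_false]
        rintro ⟨hl1, hl2, hl3⟩
        match l with
        | [a, b] =>
          have := hl3 a (by simp)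
          have := hl3 b (by simp)
          simp at hl2
          omega
      rw [h1, h2]; simp
    · have h1 : LF (n-1) 1 = {[n-1]} := by rw [LF_one, if_pos (by omega)]
      rw [h1, Finset.sum_singleton, LF_sum]
      have step1 : ∀ a ∈ Finset.Icc 1 n,
          (∑ t ∈ LF (n-a) 1, cf 2 (a :: t) • zw (a :: t))
            = if a ≤ n - 1 then cf 2 [a, n-a] • zw [a, n-a] else 0 := by
        intro a ha
        simp only [Finset.mem_Icc] at ha
        by_cases hc : a ≤ n - 1
        · rw [LF_one, if_pos (by omega), Finset.sum_singleton, if_pos hc]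
        · rw [LF_one, if_neg (by omega), Finset.sum_empty, if_neg hc]
      rw [Finset.sum_congr rfl step1, Finset.sum_ite, Finset.sum_const_zero, add_zero]
      have hfilt : Finset.filter (fun a => a ≤ n - 1) (Finset.Icc 1 n) = Finset.Icc 1 (n-1) := by
        ext a; simp [Finset.mem_Icc]; omega
      rw [hfilt, Icc_one_sum]
      show Qw ((n-1) :: []) = _
      rw [Qw]
      show _ + Finsupp.mapDomain _ (Qw []) = _
      rw [Qw, zw, Finsupp.mapDomain_single]
      have hterm : ∀ j ∈ Finset.range (n-1),
          cf 2 [j+1, n-(j+1)] • zw [j+1, n-(j+1)]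
            = zw ((j+1) :: (n-1-j) :: []) + (if j = n-2 then Finsupp.single [n-1,(1:ℕ)] (1:ℤ) else 0) := by
        intro j hj
        simp only [Finset.mem_range] at hj
        have he : n - (j+1) = n - 1 - j := by omega
        rw [he]
        by_cases hc : j = n - 2
        · subst hc
          rw [if_pos rfl]
          have h1 : n - 1 - (n-2) = 1 := by omega
          have h2 : n - 2 + 1 = n - 1 := by omega
          rw [h1, h2]
          have : cf 2 [n-1, 1] = 2 := by simp [cf, List.getLastD_cons]
          rw [this, two_smul]
          rfl
        · rw [if_neg hc, add_zero]
          have : cf 2 [j+1, n-1-j] = 1 := by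
            simp only [cf, List.getLastD_cons]
            rw [if_neg (by simp [List.getLastD]; omega)]
            norm_num
          rw [this, one_smul]
      rw [Finset.sum_congr rfl hterm, Finset.sum_add_distrib,
        Finset.sum_ite_eq' (Finset.range (n-1)) (n-2)]
      rw [if_pos (by simp; omega)]
  | succ k hk ih =>
    rw [LF_sum]
    have hQ : ∀ a t, Qw (a :: t) = (∑ j ∈ Finset.range a, zw ((j + 1) :: (a - j) :: t))
        + Finsupp.mapDomain (List.cons a) (Qw t) := fun a t => rfl
    simp only [hQ]
    rw [Finset.sum_congr rfl (fun a _ => Finset.sum_add_distrib), Finset.sum_add_distrib]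
    -- second piece
    have hsecond : ∑ a ∈ Finset.Icc 1 (n-1), ∑ t ∈ LF (n-1-a) k, Finsupp.mapDomain (List.cons a) (Qw t)
        = ∑ a ∈ Finset.Icc 1 (n-1), ∑ u ∈ LF (n-a) (k+1), cf (k+1) u • zw (a :: u) := by
      apply Finset.sum_congr rfl
      intro a ha
      rw [← Finsupp.mapDomain_finset_sum]
      rw [show n - 1 - a = (n - a) - 1 by omega, ih (n-a), Finsupp.mapDomain_finset_sum]
      apply Finset.sum_congr rfl
      intro u hu
      rw [zw, zw, Finsupp.mapDomain_smul, Finsupp.mapDomain_single]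
    -- RHS
    rw [LF_sum]
    rw [← Finset.sum_subset (Finset.Icc_subset_Icc_right (show n - 1 ≤ n by omega))
      (by
        intro a ha ha'
        simp only [Finset.mem_Icc] at ha ha'
        rw [show n - a = 0 by omega, LF_zero_succ, Finset.sum_empty])]
    have hsplit : ∀ a ∈ Finset.Icc 1 (n-1), ∑ u ∈ LF (n-a) (k+1), cf (k+1+1) (a :: u) • zw (a :: u)
        = (∑ u ∈ LF (n-a) (k+1), cf (k+1) u • zw (a :: u)) + ∑ u ∈ LF (n-a) (k+1), zw (a :: u) := by
      intro a ha
      rw [← Finset.sum_add_distrib]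
      apply Finset.sum_congr rfl
      intro u hu
      have hu' : u ≠ [] := by
        have := (mem_LF.1 hu).1
        intro h; rw [h] at this; simp at this
      rw [cf_cons _ _ _ hu', add_smul, one_smul]
    rw [Finset.sum_congr rfl hsplit, Finset.sum_add_distrib, hsecond, add_comm]
    congr 1
    -- Part1 = ∑ a, ∑ u, zw (a::u)
    have hrhs : ∀ a ∈ Finset.Icc 1 (n-1), ∑ u ∈ LF (n-a) (k+1), zw (a :: u)
        = ∑ c ∈ Finset.Icc 1 (n-a), ∑ t ∈ LF (n-a-c) k, zw (a :: c :: t) :=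
      fun a _ => LF_sum (fun u => zw (a :: u)) (n-a) k
    rw [Finset.sum_congr rfl hrhs]
    have hlhs : ∀ a ∈ Finset.Icc 1 (n-1),
        ∑ t ∈ LF (n-1-a) k, ∑ j ∈ Finset.range a, zw ((j + 1) :: (a - j) :: t)
          = ∑ j ∈ Finset.range a, ∑ t ∈ LF (n-(j+1)-(a-j)) k, zw ((j + 1) :: (a - j) :: t) := by
      intro a ha
      simp only [Finset.mem_Icc] at ha
      rw [Finset.sum_comm]
      apply Finset.sum_congr rfl
      intro j hj
      simp only [Finset.mem_range] at hj
      rw [show n - (j+1) - (a-j) = n-1-a by omega]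
    rw [Finset.sum_congr rfl hlhs]
    conv_lhs => rw [Finset.sum_sigma']
    conv_rhs => rw [Finset.sum_sigma']
    apply Finset.sum_nbij' (i := fun p => (⟨p.2 + 1, p.1 - p.2⟩ : (_ : ℕ) × ℕ))
      (j := fun q => (⟨q.1 + q.2 - 1, q.1 - 1⟩ : (_ : ℕ) × ℕ))
    · rintro ⟨a, j⟩ hp
      simp only [Finset.mem_sigma, Finset.mem_Icc, Finset.mem_range] at hp
      show (⟨j + 1, a - j⟩ : (_ : ℕ) × ℕ) ∈ (Finset.Icc 1 (n-1)).sigma (fun b => Finset.Icc 1 (n - b))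
      simp only [Finset.mem_sigma, Finset.mem_Icc]
      omega
    · rintro ⟨b, c⟩ hq
      simp only [Finset.mem_sigma, Finset.mem_Icc, Finset.mem_range] at hq
      show (⟨b + c - 1, b - 1⟩ : (_ : ℕ) × ℕ) ∈ (Finset.Icc 1 (n-1)).sigma Finset.range
      simp only [Finset.mem_sigma, Finset.mem_Icc, Finset.mem_range]
      omega
    · rintro ⟨a, j⟩ hp
      simp only [Finset.mem_sigma, Finset.mem_Icc, Finset.mem_range] at hp
      obtain ⟨⟨h1, h2⟩, h3⟩ := hp
      show (⟨(j + 1) + (a - j) - 1, (j + 1) - 1⟩ : (_ : ℕ) × ℕ) = ⟨a, j⟩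
      rw [show (j + 1) + (a - j) - 1 = a by omega, show (j + 1) - 1 = j by omega]
    · rintro ⟨b, c⟩ hq
      simp only [Finset.mem_sigma, Finset.mem_Icc, Finset.mem_range] at hq
      obtain ⟨⟨h1, h2⟩, h3, h4⟩ := hq
      show (⟨(b - 1) + 1, (b + c - 1) - (b - 1)⟩ : (_ : ℕ) × ℕ) = ⟨b, c⟩
      rw [show (b - 1) + 1 = b by omega, show (b + c - 1) - (b - 1) = c by omega]
    · rintro ⟨a, j⟩ hp
      simp only [Finset.mem_sigma, Finset.mem_Icc, Finset.mem_range] at hp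
      rfl

/-! ### Shuffling a single letter -/

lemma shuffle_single (sh : XWords →ₗ[ℤ] XWords →ₗ[ℤ] XWords)
    (hsunitl : ∀ w : XWords, sh (xw []) w = w)
    (hsunitr : ∀ w : XWords, sh w (xw []) = w)
    (hsrec : ∀ (a b : Bool) (u v : List Bool),
      sh (xw (a :: u)) (xw (b :: v)) =
        Finsupp.mapDomain (List.cons a) (sh (xw u) (xw (b :: v))) +
          Finsupp.mapDomain (List.cons b) (sh (xw (a :: u)) (xw v)))
    (a : Bool) (w : List Bool) :
    sh (xw [a]) (xw w) = ∑ i ∈ Finset.range (w.length + 1), xw (w.take i ++ a :: w.drop i) := by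
  induction w with
  | nil => simp [hsunitr]
  | cons b v ih =>
    rw [show ([a] : List Bool) = a :: [] from rfl, hsrec a b [] v, hsunitl, ih,
      Finsupp.mapDomain_finset_sum]
    simp only [xw, Finsupp.mapDomain_single]
    rw [show (b :: v).length + 1 = (v.length + 1) + 1 from rfl]
    conv_rhs => rw [Finset.sum_range_succ']
    simp only [List.take_succ_cons, List.drop_succ_cons, List.take_zero, List.drop_zero,
      List.nil_append, List.cons_append]
    rw [add_comm]

lemma insert_encode_lt (m i : ℕ) (hi : i ≤ m) (w : List Bool) :
    (List.replicate m false ++ true :: w).take i ++ true :: (List.replicate m false ++ true :: w).drop i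
      = List.replicate i false ++ true :: (List.replicate (m - i) false ++ true :: w) := by
  rw [List.take_append, List.drop_append]
  simp only [List.take_replicate, List.drop_replicate, List.length_replicate,
    Nat.sub_eq_zero_of_le hi, List.take_zero, List.drop_zero, List.append_nil,
    min_eq_left hi, List.cons_append, List.append_assoc]

lemma insert_encode_ge (m i : ℕ) (w : List Bool) :
    (List.replicate m false ++ true :: w).take (m + 1 + i) ++ true :: (List.replicate m false ++ true :: w).drop (m + 1 + i)
      = List.replicate m false ++ true :: (w.take i ++ true :: w.drop i) := by
  rw [List.take_append, List.drop_append]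
  simp only [List.take_replicate, List.drop_replicate, List.length_replicate]
  rw [min_eq_right (by omega), show m + 1 + i - m = i + 1 from by omega,
    show m - (m + 1 + i) = 0 from by omega]
  simp only [List.take_succ_cons, List.drop_succ_cons, List.replicate_zero, List.nil_append,
    List.cons_append, List.append_assoc]

lemma mapDomain_encode_Q : ∀ (s : List ℕ), (∀ x ∈ s, 1 ≤ x) →
    Finsupp.mapDomain encodeWord (Qw s) =
      ∑ i ∈ Finset.range ((encodeWord s).length + 1),
        xw ((encodeWord s).take i ++ true :: (encodeWord s).drop i) := by
  intro s
  induction s with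
  | nil => intro _; simp [Qw, zw, encodeWord, xw, Finsupp.mapDomain_single]
  | cons a t ih =>
    intro hs
    obtain ⟨m, rfl⟩ : ∃ m, a = m + 1 := ⟨a - 1, by have := hs a (by simp); omega⟩
    have ht : ∀ x ∈ t, 1 ≤ x := fun x hx => hs x (by simp [hx])
    have henc : encodeWord ((m+1) :: t) = List.replicate m false ++ true :: encodeWord t := by
      simp [encodeWord]
    rw [henc]
    have hlen : (List.replicate m false ++ true :: encodeWord t).length + 1
        = (m + 1) + ((encodeWord t).length + 1) := by simp; omega
    rw [hlen, sum_range_add]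
    show Finsupp.mapDomain encodeWord (Qw ((m+1) :: t)) = _
    rw [Qw, Finsupp.mapDomain_add, Finsupp.mapDomain_finset_sum]
    congr 1
    · apply Finset.sum_congr rfl
      intro i hi
      simp only [Finset.mem_range] at hi
      rw [zw, Finsupp.mapDomain_single, insert_encode_lt m i (by omega)]
      have : encodeWord ((i + 1) :: (m + 1 - i) :: t)
          = List.replicate i false ++ true :: (List.replicate (m - i) false ++ true :: encodeWord t) := by
        rw [encodeWord, encodeWord, show i + 1 - 1 = i by omega, show m + 1 - i - 1 = m - i by omega]
      rw [this, xw]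
    · rw [← Finsupp.mapDomain_comp]
      have hcomp : encodeWord ∘ List.cons (m+1)
          = (fun u => List.replicate m false ++ true :: u) ∘ encodeWord := by
        funext u; simp [encodeWord]
      rw [hcomp, Finsupp.mapDomain_comp, ih ht, Finsupp.mapDomain_finset_sum]
      apply Finset.sum_congr rfl
      intro i hi
      rw [xw, Finsupp.mapDomain_single, insert_encode_ge, xw]

/-! ### Supports and injectivity -/

lemma suppQ : ∀ (s : List ℕ), (∀ x ∈ s, 1 ≤ x) → ∀ l ∈ (Qw s).support, ∀ x ∈ l, 1 ≤ x := by
  intro s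
  induction s with
  | nil =>
    intro _ l hl
    rw [Qw, zw] at hl
    rw [Finsupp.support_single_ne_zero _ (by norm_num)] at hl
    simp only [Finset.mem_singleton] at hl
    subst hl
    simp
  | cons a t ih =>
    intro hs l hl
    have ha : 1 ≤ a := hs a (by simp)
    have ht : ∀ x ∈ t, 1 ≤ x := fun x hx => hs x (by simp [hx])
    rw [Qw] at hl
    rcases Finset.mem_union.1 (Finsupp.support_add hl) with h | h
    · obtain ⟨j, hj, hmem⟩ := Finsupp.mem_support_finset_sum _ h
      simp only [Finset.mem_range] at hj
      rw [zw] at hmem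
      have := Finsupp.support_single_subset hmem
      simp only [Finset.mem_singleton] at this
      subst this
      intro x hx
      rcases List.mem_cons.1 hx with rfl | hx
      · omega
      rcases List.mem_cons.1 hx with rfl | hx
      · omega
      · exact ht x hx
    · classical
      have := Finsupp.mapDomain_support h
      simp only [Finset.mem_image] at this
      obtain ⟨l', hl', rfl⟩ := this
      intro x hx
      rcases List.mem_cons.1 hx with rfl | hx
      · exact ha
      · exact ih ht l' hl' x hx

lemma decode_inv (p : QWords) (hp : ∀ l ∈ p.support, ∀ x ∈ l, 1 ≤ x) :
    Finsupp.mapDomain decodeWord (Finsupp.mapDomain encodeWord p) = p := by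
  rw [← Finsupp.mapDomain_comp]
  rw [Finsupp.mapDomain_congr (g := id) (fun l hl => by
    simp only [Function.comp_apply, id_eq]
    exact decode_encode l (hp l hl))]
  exact Finsupp.mapDomain_id

/-! ### Sums over compositions -/

lemma comp_sum (n k : ℕ) (P : List ℕ → Prop) [DecidablePred P] (f : List ℕ → QWords) :
    ∑ c ∈ Finset.univ.filter (fun c : Composition n => c.length = k ∧ P c.blocks), f c.blocks
      = ∑ l ∈ (LF n k).filter P, f l := by
  have hmem : ∀ l ∈ (LF n k).filter P, (l.length = k ∧ l.sum = n ∧ ∀ x ∈ l, 1 ≤ x) :=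
    fun l hl => mem_LF.1 (Finset.mem_filter.1 hl).1
  refine Finset.sum_bij' (fun c _ => c.blocks)
    (fun l hl => (⟨l, fun hx => (hmem l hl).2.2 _ hx, (hmem l hl).2.1⟩ : Composition n))
    ?_ ?_ ?_ ?_ ?_
  · intro c hc
    simp only [Finset.mem_filter, Finset.mem_univ, true_and] at hc
    rw [Finset.mem_filter]
    exact ⟨mem_LF.2 ⟨hc.1, c.blocks_sum, fun x hx => c.blocks_pos hx⟩, hc.2⟩
  · intro l hl
    simp only [Finset.mem_filter, Finset.mem_univ, true_and]
    obtain ⟨h1, h2⟩ := Finset.mem_filter.1 hl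
    exact ⟨(mem_LF.1 h1).1, h2⟩
  · intro c hc
    rfl
  · intro l hl
    rfl
  · intro c hc
    rfl

/-- For `k ≥ 2`, `n ≥ k`:
`z₁ ш (∑_{s₁+⋯+s_{k-1}=n-1, sᵢ≥1} z_{s₁,…,s_{k-1}})
  = k ∑_{∑tᵢ=n, t_k=1} z_{t₁,…,t_k} + (k-1) ∑_{∑tᵢ=n, t_k≥2} z_{t₁,…,t_k}`. -/
theorem shuffle_z1_sum
    (sh : XWords →ₗ[ℤ] XWords →ₗ[ℤ] XWords)
    (hsunitl : ∀ w : XWords, sh (xw []) w = w)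
    (hsunitr : ∀ w : XWords, sh w (xw []) = w)
    (hsrec : ∀ (a b : Bool) (u v : List Bool),
      sh (xw (a :: u)) (xw (b :: v)) =
        Finsupp.mapDomain (List.cons a) (sh (xw u) (xw (b :: v))) +
          Finsupp.mapDomain (List.cons b) (sh (xw (a :: u)) (xw v)))
    (msh : QWords →ₗ[ℤ] QWords →ₗ[ℤ] QWords)
    (hsupp : ∀ u v : List ℕ, (∀ x ∈ u, 1 ≤ x) → (∀ x ∈ v, 1 ≤ x) →
      ∀ l ∈ (msh (zw u) (zw v)).support, ∀ x ∈ l, 1 ≤ x)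
    (hcompat : ∀ u v : List ℕ, (∀ x ∈ u, 1 ≤ x) → (∀ x ∈ v, 1 ≤ x) →
      Finsupp.mapDomain encodeWord (msh (zw u) (zw v)) =
        sh (xw (encodeWord u)) (xw (encodeWord v)))
    (k n : ℕ) (hk : 2 ≤ k) (hn : k ≤ n) :
    msh (zw [1])
        (∑ c ∈ Finset.univ.filter (fun c : Composition (n - 1) => c.length = k - 1),
          zw c.blocks)
      = (k : ℤ) • (∑ c ∈ Finset.univ.filter
            (fun c : Composition n => c.length = k ∧ c.blocks.getLastD 0 = 1),
            zw c.blocks)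
        + ((k : ℤ) - 1) • (∑ c ∈ Finset.univ.filter
            (fun c : Composition n => c.length = k ∧ 2 ≤ c.blocks.getLastD 0),
            zw c.blocks) := by
  classical
  have hone : ∀ x ∈ [1], 1 ≤ x := by simp
  -- the single-word computation
  have hmain : ∀ s : List ℕ, (∀ x ∈ s, 1 ≤ x) → msh (zw [1]) (zw s) = Qw s := by
    intro s hs
    have h1 : Finsupp.mapDomain encodeWord (msh (zw [1]) (zw s))
        = Finsupp.mapDomain encodeWord (Qw s) := by
      rw [hcompat [1] s hone hs, mapDomain_encode_Q s hs,
        show encodeWord [1] = [true] from rfl]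
      exact shuffle_single sh hsunitl hsunitr hsrec true (encodeWord s)
    have h2 := congrArg (Finsupp.mapDomain decodeWord) h1
    rwa [decode_inv _ (hsupp [1] s hone hs), decode_inv _ (suppQ s hs)] at h2
  -- left-hand side
  rw [map_sum]
  rw [Finset.sum_congr rfl (fun c _ =>
    hmain c.blocks (fun x hx => c.blocks_pos hx))]
  have e1 : Finset.univ.filter (fun c : Composition (n-1) => c.length = k-1)
      = Finset.univ.filter
          (fun c : Composition (n-1) => c.length = k-1 ∧ (fun _ : List ℕ => True) c.blocks) := by
    simp
  rw [e1, comp_sum (n-1) (k-1) (fun _ => True) Qw, Finset.filter_true,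
    key (k-1) (by omega) n, show k - 1 + 1 = k by omega]
  -- right-hand side
  rw [comp_sum n k (fun l => l.getLastD 0 = 1) zw, comp_sum n k (fun l => 2 ≤ l.getLastD 0) zw]
  rw [Finset.smul_sum, Finset.smul_sum,
    ← Finset.sum_filter_add_sum_filter_not (LF n k) (fun t => t.getLastD 0 = 1)]
  congr 1
  · apply Finset.sum_congr rfl
    intro t ht
    rw [Finset.mem_filter] at ht
    rw [cf, if_pos ht.2]
  · have hfe : (LF n k).filter (fun t => ¬ t.getLastD 0 = 1)
        = (LF n k).filter (fun t => 2 ≤ t.getLastD 0) := by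
      apply Finset.filter_congr
      intro t ht
      obtain ⟨h1, h2, h3⟩ := mem_LF.1 ht
      have hne : t ≠ [] := by intro h; rw [h] at h1; simp at h1; omega
      have := h3 _ (getLastD_mem t hne)
      constructor <;> intro hh <;> omega
    rw [hfe]
    apply Finset.sum_congr rfl
    intro t ht
    rw [Finset.mem_filter] at ht
    rw [cf, if_neg (by omega)]
end

section
/- With the transported shuffle product ш as above, for positive integers k ≥ 2 and n ≥ k: z_1 ш (∑_{s1 ≥ 2, s2,...,s_{k-1} ≥ 1, s1+...+s_{k-1} = n-1} z_{s1,...,s_{k-1}}) = ∑_{t1 = 1, t2 ≥ 2, ti ≥ 1, ∑ti = n} z_{t1,...,tk} + k ∑_{t1 ≥ 2, tk = 1, ti ≥ 1, ∑ti = n} z_{t1,...,tk} + (k-1) ∑_{t1 ≥ 2, tk ≥ 2, ti ≥ 1, ∑ti = n} z_{t1,...,tk}. -/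
open Finsupp

namespace ZAux

def inc1 : List ℕ → List ℕ
  | [] => []
  | a :: t => (a+1) :: t

def decodeWord : List Bool → List ℕ
  | [] => []
  | true :: w => 1 :: decodeWord w
  | false :: w => inc1 (decodeWord w)

lemma length_inc1 (l : List ℕ) : (inc1 l).length = l.length := by
  cases l <;> rfl

lemma length_decode (u : List Bool) : (decodeWord u).length = u.count true := by
  induction u with
  | nil => rfl
  | cons b w ih =>
    cases b <;> simp [decodeWord, List.count_cons, length_inc1, ih]

lemma decode_ne_nil (u : List Bool) (h : u.count true ≠ 0) : decodeWord u ≠ [] := by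
  intro hh
  apply h
  have := length_decode u
  rw [hh] at this
  simpa using this.symm

lemma decode_pos (u : List Bool) : ∀ x ∈ decodeWord u, 1 ≤ x := by
  induction u with
  | nil => simp [decodeWord]
  | cons b w ih =>
    cases b with
    | false =>
      cases h : decodeWord w with
      | nil => simp [decodeWord, h, inc1]
      | cons a t =>
        simp only [decodeWord, h, inc1]
        intro x hx
        rcases List.mem_cons.1 hx with rfl | hx
        · omega
        · exact ih x (h ▸ List.mem_cons_of_mem a hx)
    | true =>
      simp only [decodeWord]
      intro x hx
      rcases List.mem_cons.1 hx with rfl | hx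
      · omega
      · exact ih x hx

lemma decode_replicate (r : ℕ) (w : List Bool) :
    decodeWord (List.replicate r false ++ true :: w) = (r+1) :: decodeWord w := by
  induction r with
  | zero => simp [decodeWord]
  | succ m ih => simp [List.replicate_succ, decodeWord, ih, inc1]

lemma decode_encode (l : List ℕ) (hl : ∀ x ∈ l, 1 ≤ x) :
    decodeWord (encodeWord l) = l := by
  induction l with
  | nil => rfl
  | cons s t ih =>
    rw [encodeWord, decode_replicate]
    have h1 : 1 ≤ s := hl s List.mem_cons_self
    have : s - 1 + 1 = s := by omega
    rw [this, ih (fun x hx => hl x (List.mem_cons_of_mem s hx))]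

lemma encode_decode : ∀ v : List Bool, encodeWord (decodeWord (v ++ [true])) = v ++ [true] := by
  intro v
  induction v with
  | nil => rfl
  | cons b w ih =>
    cases b with
    | true =>
      show encodeWord (1 :: decodeWord (w ++ [true])) = _
      rw [encodeWord]
      simpa using ih
    | false =>
      have hne : decodeWord (w ++ [true]) ≠ [] := by
        intro h
        have := length_decode (w ++ [true])
        rw [h] at this
        simp [List.count_append] at this
      obtain ⟨a, t, ha⟩ : ∃ a t, decodeWord (w ++ [true]) = a :: t := by
        cases h : decodeWord (w ++ [true]) with
        | nil => exact absurd h hne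
        | cons a t => exact ⟨a, t, rfl⟩
      have ha1 : 1 ≤ a := decode_pos _ a (ha ▸ (List.mem_cons_self (a := a) (l := t)))
      show encodeWord (inc1 (decodeWord (w ++ [true]))) = _
      rw [ha, inc1, encodeWord]
      rw [ha, encodeWord] at ih
      have : a + 1 - 1 = (a - 1) + 1 := by omega
      rw [this, List.replicate_succ]
      simpa using ih

lemma sum_decode : ∀ v : List Bool, (decodeWord (v ++ [true])).sum = v.length + 1 := by
  intro v
  induction v with
  | nil => rfl
  | cons b w ih =>
    cases b with
    | true =>
      show (1 :: decodeWord (w ++ [true])).sum = _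
      simp [ih]
      omega
    | false =>
      have hne : decodeWord (w ++ [true]) ≠ [] := by
        intro h
        have := length_decode (w ++ [true])
        rw [h] at this
        simp [List.count_append] at this
      obtain ⟨a, t, ha⟩ : ∃ a t, decodeWord (w ++ [true]) = a :: t := by
        cases h : decodeWord (w ++ [true]) with
        | nil => exact absurd h hne
        | cons a t => exact ⟨a, t, rfl⟩
      show (inc1 (decodeWord (w ++ [true]))).sum = _
      rw [ha, inc1]
      rw [ha] at ih
      simp at ih ⊢
      omega

lemma encode_valid : ∀ l : List ℕ, l ≠ [] → ∃ v, encodeWord l = v ++ [true] := by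
  intro l
  induction l with
  | nil => intro h; exact absurd rfl h
  | cons s t ih =>
    intro _
    cases t with
    | nil => exact ⟨List.replicate (s-1) false, by simp [encodeWord]⟩
    | cons s' t' =>
      obtain ⟨v', hv'⟩ := ih (by simp)
      exact ⟨List.replicate (s-1) false ++ true :: v', by rw [encodeWord, hv']; simp⟩

lemma length_encode (l : List ℕ) (hl : ∀ x ∈ l, 1 ≤ x) :
    (encodeWord l).length = l.sum := by
  rcases l with _ | ⟨s, t⟩
  · rfl
  · obtain ⟨v, hv⟩ := encode_valid (s :: t) (by simp)
    have h1 := sum_decode v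
    rw [← hv, decode_encode _ hl] at h1
    rw [hv]
    simp [h1]

lemma count_encode (l : List ℕ) (hl : ∀ x ∈ l, 1 ≤ x) :
    (encodeWord l).count true = l.length := by
  rw [← length_decode, decode_encode l hl]

lemma insertIdx_append_left {α : Type*} :
    ∀ (j : ℕ) (v w : List α) (x : α), j ≤ v.length →
      (v ++ w).insertIdx j x = v.insertIdx j x ++ w := by
  intro j
  induction j with
  | zero => intro v w x _; simp [List.insertIdx]
  | succ m ih =>
    intro v w x h
    cases v with
    | nil => simp at h
    | cons a v' =>
      simp only [List.cons_append, List.insertIdx_succ_cons]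
      rw [ih v' w x (by simpa using h)]

lemma insertIdx_length_append {α : Type*} :
    ∀ (A B : List α) (x : α), (A ++ B).insertIdx A.length x = A ++ x :: B := by
  intro A
  induction A with
  | nil => intro B x; rfl
  | cons a A' ih =>
    intro B x
    simp only [List.cons_append, List.length_cons, List.insertIdx_succ_cons, ih]

lemma eraseIdx_append_left {α : Type*} :
    ∀ (j : ℕ) (v w : List α), j < v.length →
      (v ++ w).eraseIdx j = v.eraseIdx j ++ w := by
  intro j
  induction j with
  | zero =>
    intro v w h
    cases v with
    | nil => simp at h
    | cons a v' => rfl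
  | succ m ih =>
    intro v w h
    cases v with
    | nil => simp at h
    | cons a v' =>
      simp only [List.cons_append, List.eraseIdx_cons_succ]
      rw [ih v' w (by simpa using h)]

lemma eraseIdx_length_append {α : Type*} :
    ∀ (A : List α) (b : α) (B : List α), (A ++ b :: B).eraseIdx A.length = A ++ B := by
  intro A
  induction A with
  | nil => intro b B; rfl
  | cons a A' ih =>
    intro b B
    simp only [List.cons_append, List.length_cons, List.eraseIdx_cons_succ, ih]

lemma insert_erase (u : List Bool) (j : ℕ) (h : j < u.length) (ht : u[j] = true) :
    (u.eraseIdx j).insertIdx j true = u := by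
  have hlen : (List.take j u).length = j := List.length_take_of_le (le_of_lt h)
  have key := insertIdx_length_append (List.take j u) (List.drop (j+1) u) true
  rw [hlen] at key
  rw [List.eraseIdx_eq_take_drop_succ, key]
  conv_rhs => rw [← List.take_append_drop j u, List.drop_eq_getElem_cons h, ht]

lemma count_erase (u : List Bool) (j : ℕ) (h : j < u.length) (ht : u[j] = true) :
    (u.eraseIdx j).count true + 1 = u.count true := by
  conv_rhs => rw [← List.take_append_drop j u]
  rw [List.drop_eq_getElem_cons h, ht, List.eraseIdx_eq_take_drop_succ]
  simp [List.count_append, List.count_cons]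
  omega

lemma valid_iff (u : List Bool) : u.getLastD false = true ↔ ∃ v, u = v ++ [true] := by
  constructor
  · intro h
    rcases List.eq_nil_or_concat u with rfl | ⟨v, b, rfl⟩
    · simp at h
    · rw [List.concat_eq_append] at h ⊢
      rw [List.getLastD_eq_getLast?, List.getLast?_concat] at h
      simp at h
      exact ⟨v, by rw [h]⟩
  · rintro ⟨v, rfl⟩
    rw [List.getLastD_eq_getLast?, List.getLast?_concat]
    rfl

lemma card_filter_true : ∀ u : List Bool,
    ((Finset.range u.length).filter (fun j => u.getD j false = true)).card = u.count true := by
  intro u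
  induction u with
  | nil => rfl
  | cons b w ih =>
    rw [Finset.card_filter, List.length_cons, Finset.sum_range_succ']
    rw [Finset.card_filter] at ih
    simp only [List.getD_cons_succ, List.getD_cons_zero]
    rw [ih, List.count_cons]
    cases b <;> simp

lemma headI_decode_false (w : List Bool) (h : decodeWord w ≠ []) :
    2 ≤ (decodeWord (false :: w)).headI := by
  obtain ⟨a, t, ha⟩ : ∃ a t, decodeWord w = a :: t := by
    cases hh : decodeWord w with
    | nil => exact absurd hh h
    | cons a t => exact ⟨a, t, rfl⟩
  have h1 : 1 ≤ a := decode_pos w a (ha ▸ (List.mem_cons_self (a := a) (l := t)))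
  show 2 ≤ (inc1 (decodeWord w)).headI
  rw [ha]
  show 2 ≤ a + 1
  omega

lemma encode_head_false (s : ℕ) (t : List ℕ) (h2 : 2 ≤ s) :
    encodeWord (s :: t) = false :: (List.replicate (s-2) false ++ true :: encodeWord t) := by
  rw [encodeWord]
  have : s - 1 = (s-2) + 1 := by omega
  rw [this, List.replicate_succ]
  rfl

lemma DL1 : ∀ v : List Bool, decodeWord (v ++ [true, true]) = decodeWord (v ++ [true]) ++ [1] := by
  intro v
  induction v with
  | nil => rfl
  | cons b w ih =>
    cases b with
    | true =>
      show 1 :: decodeWord (w ++ [true, true]) = (1 :: decodeWord (w ++ [true])) ++ [1]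
      rw [ih]
      rfl
    | false =>
      show inc1 (decodeWord (w ++ [true, true])) = inc1 (decodeWord (w ++ [true])) ++ [1]
      rw [ih]
      obtain ⟨a, t, ha⟩ : ∃ a t, decodeWord (w ++ [true]) = a :: t := by
        cases h : decodeWord (w ++ [true]) with
        | nil =>
          exfalso
          apply decode_ne_nil (w ++ [true]) _ h
          simp [List.count_append]
        | cons a t => exact ⟨a, t, rfl⟩
      rw [ha]
      rfl

lemma DL2 : ∀ v : List Bool, ∃ A a, decodeWord (v ++ [false, true]) = A ++ [a] ∧ 2 ≤ a := by
  intro v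
  induction v with
  | nil => exact ⟨[], 2, rfl, le_refl 2⟩
  | cons b w ih =>
    obtain ⟨A, a, hA, ha⟩ := ih
    cases b with
    | true =>
      refine ⟨1 :: A, a, ?_, ha⟩
      show 1 :: decodeWord (w ++ [false, true]) = (1 :: A) ++ [a]
      rw [hA]
      rfl
    | false =>
      show ∃ A' a', inc1 (decodeWord (w ++ [false, true])) = A' ++ [a'] ∧ 2 ≤ a'
      rw [hA]
      cases A with
      | nil => exact ⟨[], a + 1, rfl, by omega⟩
      | cons x A' => exact ⟨(x+1) :: A', a, rfl, ha⟩

end ZAux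

namespace ZAux

lemma getD_append_length {α : Type*} (v : List α) (x d : α) :
    (v ++ [x]).getD v.length d = x := by
  induction v with
  | nil => rfl
  | cons a w ih => simpa using ih

lemma comp_pos {m : ℕ} (c : Composition m) : ∀ x ∈ c.blocks, 1 ≤ x :=
  fun _ hx => c.blocks_pos hx

lemma comp_decode {m : ℕ} (c : Composition m) : decodeWord (encodeWord c.blocks) = c.blocks :=
  decode_encode _ (comp_pos c)

lemma comp_elength {m : ℕ} (c : Composition m) : (encodeWord c.blocks).length = m := by
  rw [length_encode _ (comp_pos c), c.blocks_sum]

lemma comp_count {m : ℕ} (c : Composition m) : (encodeWord c.blocks).count true = c.length := by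
  rw [count_encode _ (comp_pos c), Composition.blocks_length]

noncomputable def compOfWord (m : ℕ) (u : List Bool) : Composition m :=
  if h : (decodeWord u).sum = m then ⟨decodeWord u, fun hi => decode_pos u _ hi, h⟩
  else Composition.ones m

lemma compOfWord_blocks (m : ℕ) (u : List Bool) (h : (decodeWord u).sum = m) :
    (compOfWord m u).blocks = decodeWord u := by
  rw [compOfWord, dif_pos h]

def Fset (n : ℕ) (c : Composition n) : Finset ℕ :=
  (Finset.range n).filter (fun j =>
    (encodeWord c.blocks).getD j false = true ∧
    ((encodeWord c.blocks).eraseIdx j).headI = false ∧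
    ((encodeWord c.blocks).eraseIdx j).getLastD false = true)

lemma Fset_head_one (n k : ℕ) (hk : 2 ≤ k) (hn2 : 2 ≤ n) (c : Composition n)
    (hlen : c.length = k) (h1 : c.blocks.headI = 1) (h2 : 2 ≤ c.blocks.tail.headI) :
    Fset n c = {0} := by
  have hbl : c.blocks.length = k := by rw [Composition.blocks_length, hlen]
  obtain ⟨b1, b2, t, hb⟩ : ∃ b1 b2 t, c.blocks = b1 :: b2 :: t := by
    rcases hcb : c.blocks with _ | ⟨b1, _ | ⟨b2, t⟩⟩
    · rw [hcb] at hbl; simp at hbl; omega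
    · rw [hcb] at hbl; simp at hbl; omega
    · exact ⟨b1, b2, t, rfl⟩
  rw [hb] at h1 h2
  simp only [List.headI, List.tail_cons] at h1 h2
  subst h1
  have hu : encodeWord c.blocks = true :: encodeWord (b2 :: t) := by
    rw [hb, encodeWord]
    simp
  obtain ⟨w2, hw2⟩ : ∃ w2, encodeWord (b2 :: t) = false :: w2 :=
    ⟨_, encode_head_false b2 t h2⟩
  obtain ⟨v2, hv2⟩ := encode_valid (b2 :: t) (by simp)
  ext j
  simp only [Fset, Finset.mem_filter, Finset.mem_range, Finset.mem_singleton]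
  constructor
  · rintro ⟨hjn, hgd, hhd, hlast⟩
    rcases j with _ | m
    · rfl
    · exfalso
      rw [hu, List.eraseIdx_cons_succ] at hhd
      simp at hhd
  · rintro rfl
    refine ⟨by omega, by rw [hu]; rfl, ?_, ?_⟩
    · rw [hu]
      show (encodeWord (b2 :: t)).headI = false
      rw [hw2]
      rfl
    · rw [hu]
      show (encodeWord (b2 :: t)).getLastD false = true
      rw [hv2, List.getLastD_eq_getLast?, List.getLast?_concat]
      rfl

lemma Fset_card_last_one (n k : ℕ) (hk : 2 ≤ k) (hn2 : 2 ≤ n) (c : Composition n)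
    (hlen : c.length = k) (hh : 2 ≤ c.blocks.headI) (hl : c.blocks.getLastD 0 = 1) :
    (Fset n c).card = k := by
  have hbl : c.blocks.length = k := by rw [Composition.blocks_length, hlen]
  obtain ⟨b1, t, hb⟩ : ∃ b1 t, c.blocks = b1 :: t := by
    rcases hcb : c.blocks with _ | ⟨b1, t⟩
    · rw [hcb] at hbl; simp at hbl; omega
    · exact ⟨b1, t, rfl⟩
  have hb1 : 2 ≤ b1 := by rw [hb] at hh; simpa using hh
  obtain ⟨w0, hw0⟩ : ∃ w0, encodeWord c.blocks = false :: w0 := by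
    rw [hb]; exact ⟨_, encode_head_false b1 t hb1⟩
  obtain ⟨v, hv⟩ : ∃ v, encodeWord c.blocks = v ++ [true] := by
    rw [hb]; exact encode_valid _ (by simp)
  have ulen : (encodeWord c.blocks).length = n := comp_elength c
  have hvlen : v.length = n - 1 := by rw [hv] at ulen; simp at ulen; omega
  obtain ⟨v'', b, hv''⟩ : ∃ v'' b, v = v'' ++ [b] := by
    rcases List.eq_nil_or_concat v with rfl | ⟨v'', b, h⟩
    · exfalso; simp at hvlen; omega
    · exact ⟨v'', b, by rw [h, List.concat_eq_append]⟩
  have hbtrue : b = true := by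
    cases b
    · exfalso
      obtain ⟨A, a, hA, ha⟩ := DL2 v''
      have : c.blocks = A ++ [a] := by
        rw [← comp_decode c, hv, hv'', List.append_assoc]
        exact hA
      rw [this, List.getLastD_concat] at hl
      omega
    · rfl
  subst hbtrue
  have hFeq : Fset n c = (Finset.range n).filter
      (fun j => (encodeWord c.blocks).getD j false = true) := by
    ext j
    simp only [Fset, Finset.mem_filter, Finset.mem_range]
    constructor
    · rintro ⟨h1, h2, _, _⟩; exact ⟨h1, h2⟩
    · rintro ⟨hjn, hgd⟩
      refine ⟨hjn, hgd, ?_, ?_⟩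
      · obtain ⟨m, rfl⟩ : ∃ m, j = m + 1 := by
          rcases j with _ | m
          · exfalso; rw [hw0] at hgd; simp at hgd
          · exact ⟨m, rfl⟩
        rw [hw0, List.eraseIdx_cons_succ]
        rfl
      · by_cases hjn1 : j < n - 1
        · rw [hv, eraseIdx_append_left j v [true] (by omega)]
          rw [List.getLastD_eq_getLast?, List.getLast?_concat]
          rfl
        · have hj1 : j = n - 1 := by omega
          have : (encodeWord c.blocks).eraseIdx j = v := by
            rw [hv, hj1, ← hvlen]
            simpa using eraseIdx_length_append v true []
          rw [this, hv'', List.getLastD_eq_getLast?, List.getLast?_concat]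
          rfl
  rw [hFeq]
  have := card_filter_true (encodeWord c.blocks)
  rw [ulen] at this
  rw [this, comp_count c, hlen]

lemma Fset_card_last_big (n k : ℕ) (hk : 2 ≤ k) (hn2 : 2 ≤ n) (c : Composition n)
    (hlen : c.length = k) (hh : 2 ≤ c.blocks.headI) (hl : 2 ≤ c.blocks.getLastD 0) :
    (Fset n c).card = k - 1 := by
  have hbl : c.blocks.length = k := by rw [Composition.blocks_length, hlen]
  obtain ⟨b1, t, hb⟩ : ∃ b1 t, c.blocks = b1 :: t := by
    rcases hcb : c.blocks with _ | ⟨b1, t⟩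
    · rw [hcb] at hbl; simp at hbl; omega
    · exact ⟨b1, t, rfl⟩
  have hb1 : 2 ≤ b1 := by rw [hb] at hh; simpa using hh
  obtain ⟨w0, hw0⟩ : ∃ w0, encodeWord c.blocks = false :: w0 := by
    rw [hb]; exact ⟨_, encode_head_false b1 t hb1⟩
  obtain ⟨v, hv⟩ : ∃ v, encodeWord c.blocks = v ++ [true] := by
    rw [hb]; exact encode_valid _ (by simp)
  have ulen : (encodeWord c.blocks).length = n := comp_elength c
  have hvlen : v.length = n - 1 := by rw [hv] at ulen; simp at ulen; omega
  obtain ⟨v'', b, hv''⟩ : ∃ v'' b, v = v'' ++ [b] := by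
    rcases List.eq_nil_or_concat v with rfl | ⟨v'', b, h⟩
    · exfalso; simp at hvlen; omega
    · exact ⟨v'', b, by rw [h, List.concat_eq_append]⟩
  have hbfalse : b = false := by
    cases b
    · rfl
    · exfalso
      have hdl := DL1 v''
      have : c.blocks = decodeWord (v'' ++ [true]) ++ [1] := by
        rw [← comp_decode c, hv, hv'', List.append_assoc]
        exact hdl
      rw [this, List.getLastD_concat] at hl
      omega
  subst hbfalse
  have heraselast : (encodeWord c.blocks).eraseIdx (n-1) = v := by
    rw [hv, ← hvlen]
    simpa using eraseIdx_length_append v true []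
  have hFeq : Fset n c = ((Finset.range n).filter
      (fun j => (encodeWord c.blocks).getD j false = true)).erase (n-1) := by
    ext j
    simp only [Fset, Finset.mem_filter, Finset.mem_range, Finset.mem_erase]
    constructor
    · rintro ⟨h1, h2, h3, h4⟩
      refine ⟨?_, h1, h2⟩
      intro hj1
      rw [hj1, heraselast, hv'', List.getLastD_eq_getLast?, List.getLast?_concat] at h4
      simp at h4
    · rintro ⟨hne, hjn, hgd⟩
      refine ⟨hjn, hgd, ?_, ?_⟩
      · obtain ⟨m, rfl⟩ : ∃ m, j = m + 1 := by
          rcases j with _ | m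
          · exfalso; rw [hw0] at hgd; simp at hgd
          · exact ⟨m, rfl⟩
        rw [hw0, List.eraseIdx_cons_succ]
        rfl
      · have hjn1 : j < n - 1 := by omega
        rw [hv, eraseIdx_append_left j v [true] (by omega)]
        rw [List.getLastD_eq_getLast?, List.getLast?_concat]
        rfl
  rw [hFeq]
  have hmem : n - 1 ∈ (Finset.range n).filter
      (fun j => (encodeWord c.blocks).getD j false = true) := by
    refine Finset.mem_filter.2 ⟨Finset.mem_range.2 (by omega), ?_⟩
    rw [hv, ← hvlen]
    exact getD_append_length v true false
  rw [Finset.card_erase_of_mem hmem]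
  have := card_filter_true (encodeWord c.blocks)
  rw [ulen] at this
  rw [this, comp_count c, hlen]

end ZAux

namespace ZAux

lemma insert_facts (k n : ℕ) (hk : 2 ≤ k) (hn : k ≤ n) (c : Composition (n-1)) (j : ℕ)
    (hlen : c.length = k - 1) (hh : 2 ≤ c.blocks.headI) (hj : j < n) :
    (decodeWord ((encodeWord c.blocks).insertIdx j true)).sum = n ∧
    (decodeWord ((encodeWord c.blocks).insertIdx j true)).length = k ∧
    ((decodeWord ((encodeWord c.blocks).insertIdx j true)).headI = 1 ∧
        2 ≤ (decodeWord ((encodeWord c.blocks).insertIdx j true)).tail.headI ∨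
      2 ≤ (decodeWord ((encodeWord c.blocks).insertIdx j true)).headI) ∧
    ((encodeWord c.blocks).insertIdx j true).getD j false = true ∧
    ((encodeWord c.blocks).insertIdx j true).eraseIdx j = encodeWord c.blocks ∧
    encodeWord (decodeWord ((encodeWord c.blocks).insertIdx j true)) =
      (encodeWord c.blocks).insertIdx j true ∧
    (encodeWord c.blocks).headI = false ∧
    (encodeWord c.blocks).getLastD false = true := by
  have hn2 : 2 ≤ n := hk.trans hn
  have ulen : (encodeWord c.blocks).length = n - 1 := comp_elength c
  have hbl : c.blocks.length = k - 1 := by rw [Composition.blocks_length, hlen]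
  obtain ⟨b1, t, hb⟩ : ∃ b1 t, c.blocks = b1 :: t := by
    rcases hcb : c.blocks with _ | ⟨b1, t⟩
    · rw [hcb] at hbl; simp at hbl; omega
    · exact ⟨b1, t, rfl⟩
  have hb1 : 2 ≤ b1 := by rw [hb] at hh; simpa using hh
  obtain ⟨w0, hw0⟩ : ∃ w0, encodeWord c.blocks = false :: w0 := by
    rw [hb]; exact ⟨_, encode_head_false b1 t hb1⟩
  obtain ⟨v, hv⟩ : ∃ v, encodeWord c.blocks = v ++ [true] := by
    rw [hb]; exact encode_valid _ (by simp)
  have udec : decodeWord (encodeWord c.blocks) = c.blocks := comp_decode c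
  have ucount : (encodeWord c.blocks).count true = k - 1 := by rw [comp_count c, hlen]
  have hj' : j ≤ (encodeWord c.blocks).length := by omega
  have u'len : ((encodeWord c.blocks).insertIdx j true).length = n := by
    rw [List.length_insertIdx_of_le_length hj']
    omega
  have u'elem : ((encodeWord c.blocks).insertIdx j true)[j]'(by rw [u'len]; omega) = true :=
    List.getElem_insertIdx_self (by rw [u'len]; omega)
  have u'getD : ((encodeWord c.blocks).insertIdx j true).getD j false = true := by
    rw [List.getD_eq_getElem _ _ (by rw [u'len]; omega)]
    exact u'elem
  have herase : ((encodeWord c.blocks).insertIdx j true).eraseIdx j = encodeWord c.blocks :=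
    List.eraseIdx_insertIdx_self _
  have u'count : ((encodeWord c.blocks).insertIdx j true).count true = k := by
    have h2 := count_erase ((encodeWord c.blocks).insertIdx j true) j (by rw [u'len]; omega) u'elem
    rw [herase, ucount] at h2
    omega
  have u'val : ∃ v', (encodeWord c.blocks).insertIdx j true = v' ++ [true] := by
    by_cases hc : j ≤ v.length
    · exact ⟨v.insertIdx j true, by rw [hv, insertIdx_append_left j v [true] true hc]⟩
    · have hvlen : v.length + 1 = n - 1 := by rw [hv] at ulen; simpa using ulen
      have hju : j = (encodeWord c.blocks).length := by omega
      rw [hju, List.insertIdx_length_self, hv, List.append_assoc]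
      exact ⟨v ++ [true], by simp⟩
  obtain ⟨v', hv'⟩ := u'val
  have hv'len : v'.length = n - 1 := by
    rw [hv'] at u'len
    simp at u'len
    omega
  have hsum : (decodeWord ((encodeWord c.blocks).insertIdx j true)).sum = n := by
    rw [hv', sum_decode v', hv'len]
    omega
  have hdlen : (decodeWord ((encodeWord c.blocks).insertIdx j true)).length = k := by
    rw [length_decode, u'count]
  have hencdec : encodeWord (decodeWord ((encodeWord c.blocks).insertIdx j true)) =
      (encodeWord c.blocks).insertIdx j true := by
    rw [hv']
    exact encode_decode v'
  have hulast : (encodeWord c.blocks).getLastD false = true := (valid_iff _).2 ⟨v, hv⟩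
  have huh : (encodeWord c.blocks).headI = false := by rw [hw0]; rfl
  refine ⟨hsum, hdlen, ?_, u'getD, herase, hencdec, huh, hulast⟩
  rcases j with _ | m
  · left
    rw [List.insertIdx_zero]
    constructor
    · show (1 :: decodeWord (encodeWord c.blocks)).headI = 1
      rfl
    · show 2 ≤ (1 :: decodeWord (encodeWord c.blocks)).tail.headI
      show 2 ≤ (decodeWord (encodeWord c.blocks)).headI
      rw [udec]
      exact hh
  · right
    rw [hw0, List.insertIdx_succ_cons]
    show 2 ≤ (decodeWord (false :: w0.insertIdx m true)).headI
    apply headI_decode_false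
    apply decode_ne_nil
    have h3 := u'count
    rw [hw0, List.insertIdx_succ_cons, List.count_cons] at h3
    simp at h3
    omega

lemma erase_facts (k n : ℕ) (hk : 2 ≤ k) (hn : k ≤ n) (c : Composition n) (j : ℕ)
    (hlen : c.length = k) (hj : j < n)
    (hjt : (encodeWord c.blocks).getD j false = true)
    (hhead : ((encodeWord c.blocks).eraseIdx j).headI = false)
    (hlast : ((encodeWord c.blocks).eraseIdx j).getLastD false = true) :
    (decodeWord ((encodeWord c.blocks).eraseIdx j)).sum = n - 1 ∧
    (decodeWord ((encodeWord c.blocks).eraseIdx j)).length = k - 1 ∧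
    2 ≤ (decodeWord ((encodeWord c.blocks).eraseIdx j)).headI ∧
    ((encodeWord c.blocks).eraseIdx j).insertIdx j true = encodeWord c.blocks := by
  have hn2 : 2 ≤ n := hk.trans hn
  have ulen : (encodeWord c.blocks).length = n := comp_elength c
  have ucount : (encodeWord c.blocks).count true = k := by rw [comp_count c, hlen]
  have hjlt : j < (encodeWord c.blocks).length := by omega
  have helem : (encodeWord c.blocks)[j]'hjlt = true := by
    rw [← List.getD_eq_getElem _ false hjlt]
    exact hjt
  have herase := insert_erase (encodeWord c.blocks) j hjlt helem
  have ecount : ((encodeWord c.blocks).eraseIdx j).count true = k - 1 := by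
    have := count_erase (encodeWord c.blocks) j hjlt helem
    omega
  have elen : ((encodeWord c.blocks).eraseIdx j).length = n - 1 := by
    rw [List.length_eraseIdx, if_pos hjlt, ulen]
  obtain ⟨v, hv⟩ := (valid_iff _).1 hlast
  have hvlen : v.length = n - 2 := by
    rw [hv] at elen
    simp at elen
    omega
  have hsum : (decodeWord ((encodeWord c.blocks).eraseIdx j)).sum = n - 1 := by
    rw [hv, sum_decode, hvlen]
    omega
  have hdlen : (decodeWord ((encodeWord c.blocks).eraseIdx j)).length = k - 1 := by
    rw [length_decode, ecount]
  refine ⟨hsum, hdlen, ?_, herase⟩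
  obtain ⟨X, hX⟩ : ∃ X, (encodeWord c.blocks).eraseIdx j = false :: X := by
    rcases he : (encodeWord c.blocks).eraseIdx j with _ | ⟨b, X⟩
    · rw [he] at elen; simp at elen; omega
    · rw [he] at hhead
      simp at hhead
      exact ⟨X, by rw [hhead]⟩
  rw [hX]
  apply headI_decode_false
  apply decode_ne_nil
  rw [hX, List.count_cons] at ecount
  simp at ecount
  omega

lemma shuffle_single (sh : XWords →ₗ[ℤ] XWords →ₗ[ℤ] XWords)
    (hsunitl : ∀ w : XWords, sh (xw []) w = w)
    (hsunitr : ∀ w : XWords, sh w (xw []) = w)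
    (hsrec : ∀ (a b : Bool) (u v : List Bool),
      sh (xw (a :: u)) (xw (b :: v)) =
        Finsupp.mapDomain (List.cons a) (sh (xw u) (xw (b :: v))) +
          Finsupp.mapDomain (List.cons b) (sh (xw (a :: u)) (xw v))) :
    ∀ w : List Bool, sh (xw [true]) (xw w)
      = ∑ j ∈ Finset.range (w.length + 1), Finsupp.single (w.insertIdx j true) (1 : ℤ) := by
  intro w
  induction w with
  | nil => simpa [xw] using hsunitr (xw [true])
  | cons b v ih =>
    rw [hsrec true b [] v, hsunitl, ih, Finsupp.mapDomain_finset_sum]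
    simp only [xw, Finsupp.mapDomain_single]
    rw [List.length_cons, Finset.sum_range_succ' (fun j => Finsupp.single ((b :: v).insertIdx j true) (1:ℤ))]
    simp only [List.insertIdx_succ_cons, List.insertIdx_zero]
    rw [add_comm]

end ZAux

namespace ZAux

lemma key (k n : ℕ) (hk : 2 ≤ k) (hn : k ≤ n) :
    ∑ c ∈ Finset.univ.filter
        (fun c : Composition (n - 1) => c.length = k - 1 ∧ 2 ≤ c.blocks.headI),
      ∑ j ∈ Finset.range n, Finsupp.single ((encodeWord c.blocks).insertIdx j true) (1:ℤ)
    = (∑ c ∈ Finset.univ.filter (fun c : Composition n =>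
          c.length = k ∧ c.blocks.headI = 1 ∧ 2 ≤ c.blocks.tail.headI),
          Finsupp.single (encodeWord c.blocks) (1:ℤ))
      + (k : ℤ) • (∑ c ∈ Finset.univ.filter (fun c : Composition n =>
          c.length = k ∧ 2 ≤ c.blocks.headI ∧ c.blocks.getLastD 0 = 1),
          Finsupp.single (encodeWord c.blocks) (1:ℤ))
      + ((k : ℤ) - 1) • (∑ c ∈ Finset.univ.filter (fun c : Composition n =>
          c.length = k ∧ 2 ≤ c.blocks.headI ∧ 2 ≤ c.blocks.getLastD 0),
          Finsupp.single (encodeWord c.blocks) (1:ℤ)) := by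
  have hn2 : 2 ≤ n := hk.trans hn
  have main : (∑ c ∈ Finset.univ.filter
        (fun c : Composition (n - 1) => c.length = k - 1 ∧ 2 ≤ c.blocks.headI),
      ∑ j ∈ Finset.range n, Finsupp.single ((encodeWord c.blocks).insertIdx j true) (1:ℤ))
      = ∑ c ∈ Finset.univ.filter (fun c : Composition n => c.length = k ∧
            (c.blocks.headI = 1 ∧ 2 ≤ c.blocks.tail.headI ∨ 2 ≤ c.blocks.headI)),
          ∑ j ∈ Fset n c, Finsupp.single (encodeWord c.blocks) (1:ℤ) := by
    rw [Finset.sum_sigma', Finset.sum_sigma']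
    refine Finset.sum_nbij'
      (fun p => ⟨compOfWord n ((encodeWord p.1.blocks).insertIdx p.2 true), p.2⟩)
      (fun q => ⟨compOfWord (n-1) ((encodeWord q.1.blocks).eraseIdx q.2), q.2⟩)
      ?_ ?_ ?_ ?_ ?_
    · rintro ⟨c, j⟩ hp
      rw [Finset.mem_sigma, Finset.mem_filter] at hp
      obtain ⟨⟨-, hlen, hh⟩, hj⟩ := hp
      rw [Finset.mem_range] at hj
      obtain ⟨hsum, hdlen, hhead, hgd, herase, hencdec, huh, hul⟩ :=
        insert_facts k n hk hn c j hlen hh hj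
      rw [Finset.mem_sigma, Finset.mem_filter]
      have hbk := compOfWord_blocks n ((encodeWord c.blocks).insertIdx j true) hsum
      refine ⟨⟨Finset.mem_univ _, ?_, ?_⟩, ?_⟩
      · rw [← Composition.blocks_length, hbk, hdlen]
      · rw [hbk]; exact hhead
      · show j ∈ Fset n _
        rw [Fset, Finset.mem_filter, Finset.mem_range, hbk, hencdec, herase]
        exact ⟨hj, hgd, huh, hul⟩
    · rintro ⟨c, j⟩ hq
      rw [Finset.mem_sigma, Finset.mem_filter] at hq
      obtain ⟨⟨-, hlen, hcond⟩, hjF⟩ := hq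
      rw [Fset, Finset.mem_filter, Finset.mem_range] at hjF
      obtain ⟨hj, hgd, hhd, hlast⟩ := hjF
      obtain ⟨hsum, hdlen, hhead, hins⟩ := erase_facts k n hk hn c j hlen hj hgd hhd hlast
      rw [Finset.mem_sigma, Finset.mem_filter]
      have hbk := compOfWord_blocks (n-1) _ hsum
      refine ⟨⟨Finset.mem_univ _, ?_, ?_⟩, Finset.mem_range.2 hj⟩
      · rw [← Composition.blocks_length, hbk, hdlen]
      · rw [hbk]; exact hhead
    · rintro ⟨c, j⟩ hp
      rw [Finset.mem_sigma, Finset.mem_filter] at hp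
      obtain ⟨⟨-, hlen, hh⟩, hj⟩ := hp
      rw [Finset.mem_range] at hj
      obtain ⟨hsum, hdlen, hhead, hgd, herase, hencdec, huh, hul⟩ :=
        insert_facts k n hk hn c j hlen hh hj
      have hbk := compOfWord_blocks n _ hsum
      have hcc : compOfWord (n-1) ((encodeWord (compOfWord n
          ((encodeWord c.blocks).insertIdx j true)).blocks).eraseIdx j) = c := by
        rw [hbk, hencdec, herase]
        apply Composition.ext
        rw [compOfWord_blocks (n-1) _ (by rw [comp_decode c, c.blocks_sum])]
        exact comp_decode c
      show (⟨_, j⟩ : Σ _ : Composition (n-1), ℕ) = ⟨c, j⟩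
      rw [hcc]
    · rintro ⟨c, j⟩ hq
      rw [Finset.mem_sigma, Finset.mem_filter] at hq
      obtain ⟨⟨-, hlen, hcond⟩, hjF⟩ := hq
      rw [Fset, Finset.mem_filter, Finset.mem_range] at hjF
      obtain ⟨hj, hgd, hhd, hlast⟩ := hjF
      obtain ⟨hsum, hdlen, hhead, hins⟩ := erase_facts k n hk hn c j hlen hj hgd hhd hlast
      have hbk := compOfWord_blocks (n-1) _ hsum
      have hcc : compOfWord n ((encodeWord (compOfWord (n-1)
          ((encodeWord c.blocks).eraseIdx j)).blocks).insertIdx j true) = c := by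
        rw [hbk]
        obtain ⟨v, hv⟩ := (valid_iff _).1 hlast
        rw [hv, encode_decode v, ← hv, hins]
        apply Composition.ext
        rw [compOfWord_blocks n _ (by rw [comp_decode c, c.blocks_sum])]
        exact comp_decode c
      show (⟨_, j⟩ : Σ _ : Composition n, ℕ) = ⟨c, j⟩
      rw [hcc]
    · rintro ⟨c, j⟩ hp
      rw [Finset.mem_sigma, Finset.mem_filter] at hp
      obtain ⟨⟨-, hlen, hh⟩, hj⟩ := hp
      rw [Finset.mem_range] at hj
      obtain ⟨hsum, hdlen, hhead, hgd, herase, hencdec, huh, hul⟩ :=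
        insert_facts k n hk hn c j hlen hh hj
      have hbk := compOfWord_blocks n _ hsum
      show Finsupp.single ((encodeWord c.blocks).insertIdx j true) (1:ℤ) = _
      rw [hbk, hencdec]
  rw [main]
  simp_rw [Finset.sum_const]
  rw [← Finset.sum_filter_add_sum_filter_not (Finset.univ.filter (fun c : Composition n =>
        c.length = k ∧ (c.blocks.headI = 1 ∧ 2 ≤ c.blocks.tail.headI ∨ 2 ≤ c.blocks.headI)))
      (fun c => c.blocks.headI = 1)]
  rw [← Finset.sum_filter_add_sum_filter_not ((Finset.univ.filter (fun c : Composition n =>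
        c.length = k ∧ (c.blocks.headI = 1 ∧ 2 ≤ c.blocks.tail.headI ∨ 2 ≤ c.blocks.headI))).filter
        (fun c => ¬c.blocks.headI = 1))
      (fun c => c.blocks.getLastD 0 = 1)]
  have hlastpos : ∀ c : Composition n, c.length = k → 1 ≤ c.blocks.getLastD 0 := by
    intro c hlen
    have hbl : c.blocks.length = k := by rw [Composition.blocks_length, hlen]
    obtain ⟨A, b, hA⟩ : ∃ A b, c.blocks = A ++ [b] := by
      rcases List.eq_nil_or_concat c.blocks with h | ⟨A, b, h⟩
      · rw [h] at hbl; simp at hbl; omega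
      · exact ⟨A, b, by rw [h, List.concat_eq_append]⟩
    rw [hA, List.getLastD_concat]
    exact comp_pos c b (by rw [hA]; simp)
  have hT1 : (Finset.univ.filter (fun c : Composition n =>
        c.length = k ∧ (c.blocks.headI = 1 ∧ 2 ≤ c.blocks.tail.headI ∨ 2 ≤ c.blocks.headI))).filter
        (fun c => c.blocks.headI = 1)
      = Finset.univ.filter (fun c : Composition n =>
          c.length = k ∧ c.blocks.headI = 1 ∧ 2 ≤ c.blocks.tail.headI) := by
    ext c
    simp only [Finset.mem_filter, Finset.mem_univ, true_and]
    constructor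
    · rintro ⟨⟨hlen, hc⟩, h1⟩
      rcases hc with ⟨-, h2⟩ | h2
      · exact ⟨hlen, h1, h2⟩
      · omega
    · rintro ⟨hlen, h1, h2⟩
      exact ⟨⟨hlen, Or.inl ⟨h1, h2⟩⟩, h1⟩
  have hT2 : ((Finset.univ.filter (fun c : Composition n =>
        c.length = k ∧ (c.blocks.headI = 1 ∧ 2 ≤ c.blocks.tail.headI ∨ 2 ≤ c.blocks.headI))).filter
        (fun c => ¬c.blocks.headI = 1)).filter (fun c => c.blocks.getLastD 0 = 1)
      = Finset.univ.filter (fun c : Composition n =>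
          c.length = k ∧ 2 ≤ c.blocks.headI ∧ c.blocks.getLastD 0 = 1) := by
    ext c
    simp only [Finset.mem_filter, Finset.mem_univ, true_and]
    constructor
    · rintro ⟨⟨⟨hlen, hc⟩, h1⟩, h2⟩
      refine ⟨hlen, ?_, h2⟩
      rcases hc with ⟨h3, -⟩ | h3
      · exact absurd h3 h1
      · exact h3
    · rintro ⟨hlen, h1, h2⟩
      exact ⟨⟨⟨hlen, Or.inr h1⟩, by omega⟩, h2⟩
  have hT3 : ((Finset.univ.filter (fun c : Composition n =>
        c.length = k ∧ (c.blocks.headI = 1 ∧ 2 ≤ c.blocks.tail.headI ∨ 2 ≤ c.blocks.headI))).filter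
        (fun c => ¬c.blocks.headI = 1)).filter (fun c => ¬c.blocks.getLastD 0 = 1)
      = Finset.univ.filter (fun c : Composition n =>
          c.length = k ∧ 2 ≤ c.blocks.headI ∧ 2 ≤ c.blocks.getLastD 0) := by
    ext c
    simp only [Finset.mem_filter, Finset.mem_univ, true_and]
    constructor
    · rintro ⟨⟨⟨hlen, hc⟩, h1⟩, h2⟩
      have := hlastpos c hlen
      refine ⟨hlen, ?_, by omega⟩
      rcases hc with ⟨h3, -⟩ | h3
      · exact absurd h3 h1
      · exact h3
    · rintro ⟨hlen, h1, h2⟩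
      exact ⟨⟨⟨hlen, Or.inr h1⟩, by omega⟩, by omega⟩
  rw [hT1, hT2, hT3]
  have e1 : ∑ c ∈ Finset.univ.filter (fun c : Composition n =>
        c.length = k ∧ c.blocks.headI = 1 ∧ 2 ≤ c.blocks.tail.headI),
        (Fset n c).card • Finsupp.single (encodeWord c.blocks) (1:ℤ)
      = ∑ c ∈ Finset.univ.filter (fun c : Composition n =>
        c.length = k ∧ c.blocks.headI = 1 ∧ 2 ≤ c.blocks.tail.headI),
        Finsupp.single (encodeWord c.blocks) (1:ℤ) := by
    refine Finset.sum_congr rfl ?_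
    intro c hc
    rw [Finset.mem_filter] at hc
    obtain ⟨-, hlen, h1, h2⟩ := hc
    rw [Fset_head_one n k hk hn2 c hlen h1 h2]
    simp
  have e2 : ∑ c ∈ Finset.univ.filter (fun c : Composition n =>
        c.length = k ∧ 2 ≤ c.blocks.headI ∧ c.blocks.getLastD 0 = 1),
        (Fset n c).card • Finsupp.single (encodeWord c.blocks) (1:ℤ)
      = (k:ℤ) • ∑ c ∈ Finset.univ.filter (fun c : Composition n =>
        c.length = k ∧ 2 ≤ c.blocks.headI ∧ c.blocks.getLastD 0 = 1),
        Finsupp.single (encodeWord c.blocks) (1:ℤ) := by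
    rw [Finset.smul_sum]
    refine Finset.sum_congr rfl ?_
    intro c hc
    rw [Finset.mem_filter] at hc
    obtain ⟨-, hlen, h1, h2⟩ := hc
    rw [Fset_card_last_one n k hk hn2 c hlen h1 h2, natCast_zsmul]
  have e3 : ∑ c ∈ Finset.univ.filter (fun c : Composition n =>
        c.length = k ∧ 2 ≤ c.blocks.headI ∧ 2 ≤ c.blocks.getLastD 0),
        (Fset n c).card • Finsupp.single (encodeWord c.blocks) (1:ℤ)
      = ((k:ℤ) - 1) • ∑ c ∈ Finset.univ.filter (fun c : Composition n =>
        c.length = k ∧ 2 ≤ c.blocks.headI ∧ 2 ≤ c.blocks.getLastD 0),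
        Finsupp.single (encodeWord c.blocks) (1:ℤ) := by
    rw [Finset.smul_sum]
    refine Finset.sum_congr rfl ?_
    intro c hc
    rw [Finset.mem_filter] at hc
    obtain ⟨-, hlen, h1, h2⟩ := hc
    rw [Fset_card_last_big n k hk hn2 c hlen h1 h2]
    have hcast : ((k:ℤ) - 1) = ((k - 1 : ℕ) : ℤ) := by omega
    rw [hcast, natCast_zsmul]
  rw [e1, e2, e3]
  abel

end ZAux

/-- For `k ≥ 2`, `n ≥ k`:
`z₁ ш (∑_{s₁≥2, s₁+⋯+s_{k-1}=n-1} z_{s₁,…,s_{k-1}})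
  = ∑_{t₁=1, t₂≥2, ∑tᵢ=n} z_{t₁,…,t_k} + k ∑_{t₁≥2, t_k=1, ∑tᵢ=n} z_{t₁,…,t_k}
    + (k-1) ∑_{t₁≥2, t_k≥2, ∑tᵢ=n} z_{t₁,…,t_k}`. -/
theorem shuffle_z1_sum_admissible
    (sh : XWords →ₗ[ℤ] XWords →ₗ[ℤ] XWords)
    (hsunitl : ∀ w : XWords, sh (xw []) w = w)
    (hsunitr : ∀ w : XWords, sh w (xw []) = w)
    (hsrec : ∀ (a b : Bool) (u v : List Bool),
      sh (xw (a :: u)) (xw (b :: v)) =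
        Finsupp.mapDomain (List.cons a) (sh (xw u) (xw (b :: v))) +
          Finsupp.mapDomain (List.cons b) (sh (xw (a :: u)) (xw v)))
    (msh : QWords →ₗ[ℤ] QWords →ₗ[ℤ] QWords)
    (hsupp : ∀ u v : List ℕ, (∀ x ∈ u, 1 ≤ x) → (∀ x ∈ v, 1 ≤ x) →
      ∀ l ∈ (msh (zw u) (zw v)).support, ∀ x ∈ l, 1 ≤ x)
    (hcompat : ∀ u v : List ℕ, (∀ x ∈ u, 1 ≤ x) → (∀ x ∈ v, 1 ≤ x) →
      Finsupp.mapDomain encodeWord (msh (zw u) (zw v)) =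
        sh (xw (encodeWord u)) (xw (encodeWord v)))
    (k n : ℕ) (hk : 2 ≤ k) (hn : k ≤ n) :
    msh (zw [1])
        (∑ c ∈ Finset.univ.filter
          (fun c : Composition (n - 1) => c.length = k - 1 ∧ 2 ≤ c.blocks.headI),
          zw c.blocks)
      = (∑ c ∈ Finset.univ.filter (fun c : Composition n =>
            c.length = k ∧ c.blocks.headI = 1 ∧ 2 ≤ c.blocks.tail.headI), zw c.blocks)
        + (k : ℤ) • (∑ c ∈ Finset.univ.filter (fun c : Composition n =>
            c.length = k ∧ 2 ≤ c.blocks.headI ∧ c.blocks.getLastD 0 = 1), zw c.blocks)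
        + ((k : ℤ) - 1) • (∑ c ∈ Finset.univ.filter (fun c : Composition n =>
            c.length = k ∧ 2 ≤ c.blocks.headI ∧ 2 ≤ c.blocks.getLastD 0),
            zw c.blocks) := by

  have hn2 : 2 ≤ n := hk.trans hn
  have hposS : Set.InjOn encodeWord {l : List ℕ | ∀ x ∈ l, 1 ≤ x} := by
    intro a ha b hb hab
    rw [← ZAux.decode_encode a ha, hab, ZAux.decode_encode b hb]
  apply Finsupp.mapDomain_injOn {l : List ℕ | ∀ x ∈ l, 1 ≤ x} hposS
  · simp only [Set.mem_setOf_eq]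
    intro l hl
    rw [Finset.mem_coe, map_sum] at hl
    obtain ⟨c, -, hc⟩ := Finset.mem_biUnion.1 (Finsupp.support_finset_sum hl)
    exact hsupp [1] c.blocks (by simp) (ZAux.comp_pos c) l hc
  · simp only [Set.mem_setOf_eq]
    intro l hl
    rw [Finset.mem_coe] at hl
    have hsub : ∀ (m : ℕ) (s : Finset (Composition m)) (l : List ℕ),
        l ∈ (∑ c ∈ s, zw c.blocks).support → ∀ x ∈ l, 1 ≤ x := by
      intro m s l' hm
      obtain ⟨c, -, hc⟩ := Finset.mem_biUnion.1 (Finsupp.support_finset_sum hm)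
      have hmem := Finsupp.support_single_subset hc
      rw [Finset.mem_singleton] at hmem
      subst hmem
      exact ZAux.comp_pos c
    rcases Finset.mem_union.1 (Finsupp.support_add hl) with h | h
    · rcases Finset.mem_union.1 (Finsupp.support_add h) with h' | h'
      · exact hsub _ _ l h'
      · exact hsub _ _ l (Finsupp.support_smul h')
    · exact hsub _ _ l (Finsupp.support_smul h)
  · show Finsupp.mapDomain encodeWord _ = Finsupp.mapDomain encodeWord _
    rw [map_sum, Finsupp.mapDomain_finset_sum]
    have step : ∀ c ∈ Finset.univ.filter
        (fun c : Composition (n-1) => c.length = k - 1 ∧ 2 ≤ c.blocks.headI),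
        Finsupp.mapDomain encodeWord (msh (zw [1]) (zw c.blocks)) =
          ∑ j ∈ Finset.range n,
            Finsupp.single ((encodeWord c.blocks).insertIdx j true) (1:ℤ) := by
      intro c _
      rw [hcompat [1] c.blocks (by simp) (ZAux.comp_pos c)]
      have he1 : encodeWord [1] = [true] := rfl
      rw [he1, ZAux.shuffle_single sh hsunitl hsunitr hsrec]
      have hlen : (encodeWord c.blocks).length + 1 = n := by
        rw [ZAux.comp_elength c]; omega
      rw [hlen]
    rw [Finset.sum_congr rfl step]
    simp only [Finsupp.mapDomain_add, Finsupp.mapDomain_smul, Finsupp.mapDomain_finset_sum]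
    simp only [zw, Finsupp.mapDomain_single]
    exact ZAux.key k n hk hn
end

section
/- With the transported shuffle product ш and the coefficient function C(t1,...,t_{k-1}) = ∑_{j=1}^{k-1} 2^{t1+...+tj - j} + 2^{t1+...+t_{k-1} - (k-1)}: for positive integers k ≥ 2 and n ≥ k, ∑_{r + s1 + ... + s_{k-1} = n, all ≥ 1} z_r ш z_{s1,...,s_{k-1}} = ∑_{t1+...+tk = n, ti ≥ 1} C(t1,...,t_{k-1}) · z_{t1,...,tk}. -/
open Finsupp

/-- The coefficient `C(t₁,…,t_m) = ∑_{j=1}^{m} 2^{(t₁+⋯+t_j)-j} + 2^{(t₁+⋯+t_m)-m}`,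
with `C` of the empty tuple equal to `1`. -/
def Ccoef (t : List ℕ) : ℤ :=
  (∑ j ∈ Finset.range t.length, 2 ^ ((t.take (j + 1)).sum - (j + 1)))
    + 2 ^ (t.sum - t.length)

/-- concrete shuffle -/
noncomputable def sf : List Bool → List Bool → XWords
  | [], v => xw v
  | a :: u, [] => xw (a :: u)
  | a :: u, b :: v => Finsupp.mapDomain (List.cons a) (sf u (b :: v))
      + Finsupp.mapDomain (List.cons b) (sf (a :: u) v)
  termination_by u v => u.length + v.length

lemma sf_nil_left (v : List Bool) : sf [] v = xw v := by cases v <;> simp [sf]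
lemma sf_nil_right (u : List Bool) : sf u [] = xw u := by cases u <;> simp [sf]
lemma sf_cons_cons (a b : Bool) (u v : List Bool) :
    sf (a :: u) (b :: v) = Finsupp.mapDomain (List.cons a) (sf u (b :: v))
      + Finsupp.mapDomain (List.cons b) (sf (a :: u) v) := by simp [sf]

/-- finsets of positive compositions as lists -/
def L (m j : ℕ) : Finset (List ℕ) := match j with
  | 0 => if m = 0 then {[]} else ∅
  | j+1 => (Finset.Icc 1 m).biUnion fun i => (L (m - i) j).image (List.cons i)

lemma mem_L : ∀ {j m : ℕ} {l : List ℕ},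
    l ∈ L m j ↔ l.sum = m ∧ l.length = j ∧ ∀ x ∈ l, 0 < x := by
  intro j
  induction j with
  | zero =>
    intro m l
    by_cases hm : m = 0
    · subst hm
      constructor
      · intro h
        have hl : l = [] := by simpa [L] using h
        subst hl; exact ⟨rfl, rfl, by simp⟩
      · rintro ⟨h1, h2, h3⟩
        have hl : l = [] := List.length_eq_zero_iff.1 h2
        subst hl; simp [L]
    · constructor
      · intro h; simp [L, hm] at h
      · rintro ⟨h1, h2, h3⟩
        have hl : l = [] := List.length_eq_zero_iff.1 h2
        subst hl; simp at h1; exact absurd h1.symm hm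
  | succ j ih =>
    intro m l
    simp only [L, Finset.mem_biUnion, Finset.mem_image, Finset.mem_Icc]
    constructor
    · rintro ⟨i, ⟨hi1, hi2⟩, s, hs, rfl⟩
      obtain ⟨h1, h2, h3⟩ := ih.1 hs
      refine ⟨by simp [h1]; omega, by simp [h2], ?_⟩
      intro x hx; rcases List.mem_cons.1 hx with rfl | hx
      · omega
      · exact h3 x hx
    · rintro ⟨h1, h2, h3⟩
      match l with
      | i :: s =>
        have hi : 0 < i := h3 i (by simp)
        have hsum : s.sum = m - i := by simp at h1; omega
        have him : i ≤ m := by simp at h1; omega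
        exact ⟨i, ⟨hi, him⟩, s, ih.2 ⟨hsum, by simpa using h2,
          fun x hx => h3 x (List.mem_cons_of_mem _ hx)⟩, rfl⟩

lemma L_succ_sum {M : Type*} [AddCommMonoid M] (m j : ℕ) (f : List ℕ → M) :
    ∑ l ∈ L m (j+1), f l = ∑ i ∈ Finset.Icc 1 m, ∑ s ∈ L (m-i) j, f (i :: s) := by
  rw [show L m (j+1) = (Finset.Icc 1 m).biUnion
      (fun i => (L (m - i) j).image (List.cons i)) from rfl]
  rw [Finset.sum_biUnion]
  · refine Finset.sum_congr rfl fun i _ => ?_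
    rw [Finset.sum_image]
    intro x _ y _ h; simpa using h
  · intro i _ i' _ hne
    simp only [Function.onFun, Finset.disjoint_left]
    intro a ha ha'
    simp only [Finset.mem_image] at ha ha'
    obtain ⟨s, _, rfl⟩ := ha
    obtain ⟨s', _, h⟩ := ha'
    exact hne (by simpa using (List.cons.injEq _ _ _ _ ▸ h).1.symm ▸ rfl)

def incHead : List ℕ → List ℕ
  | [] => []
  | a :: t => (a + 1) :: t

lemma L_zero_succ (j : ℕ) : L 0 (j+1) = ∅ := by simp [L]

lemma L_succ_zero (m : ℕ) : L (m+1) 0 = ∅ := by simp [L]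

lemma L_one (m : ℕ) (hm : 1 ≤ m) : L m 1 = {[m]} := by
  ext l
  rw [mem_L, Finset.mem_singleton]
  constructor
  · rintro ⟨h1, h2, h3⟩
    match l with
    | [x] => simp at h1; rw [h1]
  · rintro rfl
    exact ⟨by simp, by simp, by intro x hx; simp at hx; omega⟩

lemma L_split {M : Type*} [AddCommMonoid M] (m j : ℕ) (F : List ℕ → M) :
    ∑ l ∈ L (m+1) (j+1), F l
      = (∑ s ∈ L m j, F (1 :: s)) + ∑ t ∈ L m (j+1), F (incHead t) := by
  rw [L_succ_sum, L_succ_sum m j (fun t => F (incHead t))]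
  rw [← Finset.Ioc_insert_left (by omega : (1:ℕ) ≤ m+1),
    Finset.sum_insert Finset.left_notMem_Ioc]
  congr 1
  apply Finset.sum_nbij' (fun x => x - 1) (fun x => x + 1)
  · intro a ha
    simp only [Finset.mem_Ioc] at ha
    simp only [Finset.mem_Icc]; omega
  · intro b hb
    simp only [Finset.mem_Icc] at hb
    simp only [Finset.mem_Ioc]; omega
  · intro a ha; simp only [Finset.mem_Ioc] at ha; omega
  · intro b _; omega
  · intro a ha
    simp only [Finset.mem_Ioc] at ha
    obtain ⟨a', rfl⟩ : ∃ a', a = a' + 1 := ⟨a - 1, by omega⟩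
    have h1 : m + 1 - (a' + 1) = m - (a' + 1 - 1) := by omega
    rw [h1]
    rfl

lemma enc_one_cons (t : List ℕ) : encodeWord (1 :: t) = true :: encodeWord t := by
  simp [encodeWord]

lemma enc_single (c : ℕ) : encodeWord [c] = List.replicate (c-1) false ++ [true] := by
  simp [encodeWord]

lemma enc_succ_cons (a : ℕ) (t : List ℕ) :
    encodeWord ((a+2) :: t) = false :: encodeWord ((a+1) :: t) := by
  simp [encodeWord, List.replicate_succ]

lemma enc_incHead (a : ℕ) (ha : 0 < a) (t : List ℕ) :
    encodeWord (incHead (a :: t)) = false :: encodeWord (a :: t) := by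
  obtain ⟨a', rfl⟩ : ∃ a', a = a' + 1 := ⟨a - 1, by omega⟩
  simp [incHead, enc_succ_cons]

lemma rep_true_inj : ∀ (a : ℕ) {b : ℕ} {E1 E2 : List Bool},
    List.replicate a false ++ true :: E1 = List.replicate b false ++ true :: E2 →
    a = b ∧ E1 = E2 := by
  intro a
  induction a with
  | zero =>
    intro b E1 E2 h
    cases b with
    | zero => simpa using h
    | succ b => simp [List.replicate_succ] at h
  | succ a ih =>
    intro b E1 E2 h
    cases b with
    | zero => simp [List.replicate_succ] at h
    | succ b =>
      simp only [List.replicate_succ, List.cons_append, List.cons.injEq, true_and] at h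
      obtain ⟨h1, h2⟩ := ih h
      exact ⟨by omega, h2⟩

lemma enc_inj : ∀ (l1 l2 : List ℕ), (∀ x ∈ l1, 0 < x) → (∀ x ∈ l2, 0 < x) →
    encodeWord l1 = encodeWord l2 → l1 = l2 := by
  intro l1
  induction l1 with
  | nil =>
    intro l2 _ h2 h
    cases l2 with
    | nil => rfl
    | cons b t =>
      exfalso
      simp only [encodeWord] at h
      exact absurd h.symm (by simp)
  | cons a t ih =>
    intro l2 h1 h2 h
    cases l2 with
    | nil =>
      exfalso
      simp only [encodeWord] at h
      exact absurd h (by simp)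
    | cons b s =>
      simp only [encodeWord] at h
      obtain ⟨hab, hts⟩ := rep_true_inj _ h
      have ha : 0 < a := h1 a (by simp)
      have hb : 0 < b := h2 b (by simp)
      have : a = b := by omega
      subst this
      rw [ih s (fun x hx => h1 x (List.mem_cons_of_mem _ hx))
        (fun x hx => h2 x (List.mem_cons_of_mem _ hx)) hts]

lemma length_le_sum : ∀ (l : List ℕ), (∀ x ∈ l, 0 < x) → l.length ≤ l.sum := by
  intro l
  induction l with
  | nil => simp
  | cons a t ih =>
    intro h
    have ha : 0 < a := h a (by simp)
    have := ih (fun x hx => h x (List.mem_cons_of_mem _ hx))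
    simp only [List.length_cons, List.sum_cons]; omega

lemma take_sum_ge (t : List ℕ) (ht : ∀ x ∈ t, 0 < x) (j : ℕ) (hj : j ≤ t.length) :
    j ≤ (t.take j).sum := by
  have h1 : (t.take j).length = j := by rw [List.length_take]; omega
  have := length_le_sum (t.take j) (fun x hx => ht x (List.mem_of_mem_take hx))
  omega

lemma Ccoef_one_cons (t : List ℕ) : Ccoef (1 :: t) = 1 + Ccoef t := by
  unfold Ccoef
  simp only [List.length_cons, List.sum_cons]
  rw [Finset.sum_range_succ']
  have h0 : ((1 :: t).take (0 + 1)).sum - (0 + 1) = 0 := by simp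
  rw [h0]
  have h1 : ∀ j, (((1 :: t).take (j + 1 + 1)).sum - (j + 1 + 1))
      = ((t.take (j + 1)).sum - (j + 1)) := by
    intro j
    rw [List.take_succ_cons]
    simp only [List.sum_cons]
    omega
  rw [Finset.sum_congr rfl (fun j _ => by rw [h1 j])]
  have h2 : 1 + t.sum - (t.length + 1) = t.sum - t.length := by omega
  rw [h2]
  ring

lemma Ccoef_succ_cons (a : ℕ) (t : List ℕ) (ht : ∀ x ∈ t, 0 < x) :
    Ccoef ((a + 2) :: t) = 2 * Ccoef ((a + 1) :: t) := by
  unfold Ccoef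
  simp only [List.length_cons, List.sum_cons]
  rw [mul_add, Finset.mul_sum]
  congr 1
  · refine Finset.sum_congr rfl fun j hj => ?_
    simp only [Finset.mem_range] at hj
    rw [List.take_succ_cons, List.take_succ_cons]
    simp only [List.sum_cons]
    have hge : j ≤ (t.take j).sum := take_sum_ge t ht j (by omega)
    have he : a + 2 + (t.take j).sum - (j + 1) = (a + 1 + (t.take j).sum - (j + 1)) + 1 := by
      omega
    rw [he, pow_succ]; ring
  · have hge : t.length ≤ t.sum := length_le_sum t ht
    have he : a + 2 + t.sum - (t.length + 1) = (a + 1 + t.sum - (t.length + 1)) + 1 := by omega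
    rw [he, pow_succ]; ring

def Dd : ℕ → List ℕ → ℤ
  | _, [] => 0
  | p, [c] => if c = p + 1 then 1 else 0
  | _, 0 :: _ :: _ => 0
  | p, 1 :: c :: l => (if p = 0 then 1 else 0) + Dd p (c :: l)
  | 0, (a+2) :: c :: l => Dd 0 ((a+1) :: c :: l)
  | p+1, (a+2) :: c :: l => Dd p ((a+1) :: c :: l) + Dd (p+1) ((a+1) :: c :: l)
  termination_by p l => l.sum
  decreasing_by all_goals (simp only [List.sum_cons]; omega)

lemma Dd_one_cons (p c : ℕ) (l : List ℕ) :
    Dd p (1 :: c :: l) = (if p = 0 then 1 else 0) + Dd p (c :: l) := by rw [Dd]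

lemma Dd_zero_big (a c : ℕ) (l : List ℕ) :
    Dd 0 ((a+2) :: c :: l) = Dd 0 ((a+1) :: c :: l) := by rw [Dd]

lemma Dd_succ_big (p a c : ℕ) (l : List ℕ) :
    Dd (p+1) ((a+2) :: c :: l) = Dd p ((a+1) :: c :: l) + Dd (p+1) ((a+1) :: c :: l) := by
  rw [Dd]

lemma Dd_single (p c : ℕ) : Dd p [c] = if c = p + 1 then 1 else 0 := by rw [Dd]

lemma Dd_vanish : ∀ (p : ℕ) (l : List ℕ), l ≠ [] → l.sum ≤ p → Dd p l = 0 := by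
  intro p l
  induction p, l using Dd.induct with
  | case1 p => intro h; exact absurd rfl h
  | case2 p => intro _ h; simp at h
  | case3 p c hc => intro _ _; simp [Dd_single, hc]
  | case4 x c l => intro _ _; rw [Dd]
  | case5 p c l ih =>
    intro _ hs
    simp only [List.sum_cons] at hs
    rw [Dd_one_cons, if_neg (by omega), ih (by simp) (by simp only [List.sum_cons]; omega)]
    simp
  | case6 a c l ih =>
    intro _ hs
    simp only [List.sum_cons] at hs; omega
  | case7 p a c l ih1 ih2 =>
    intro _ hs
    simp only [List.sum_cons] at hs
    rw [Nat.succ_eq_add_one, Dd_succ_big,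
      ih1 (by simp) (by simp only [List.sum_cons]; omega),
      ih2 (by simp) (by simp only [List.sum_cons]; omega)]
    simp

lemma Dd_vanish' : ∀ (p : ℕ) (l : List ℕ), 2 ≤ l.length → (∀ x ∈ l, 0 < x) →
    l.sum = p + 1 → Dd p l = 0 := by
  intro p l
  induction p, l using Dd.induct with
  | case1 p => intro h; simp at h
  | case2 p => intro h; simp at h
  | case3 p c hc => intro h; simp at h
  | case4 x c l => intro _ _ _; rw [Dd]
  | case5 p c l ih =>
    intro _ hpos hs
    simp only [List.sum_cons] at hs
    have hc : 0 < c := hpos c (by simp)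
    have hp : ¬ p = 0 := by omega
    rw [Dd_one_cons, if_neg hp,
      Dd_vanish p (c :: l) (by simp) (by simp only [List.sum_cons]; omega)]
    simp
  | case6 a c l ih =>
    intro _ hpos hs
    simp only [List.sum_cons] at hs
    have hc : 0 < c := hpos c (by simp)
    omega
  | case7 p a c l ih1 ih2 =>
    intro hlen hpos hs
    simp only [List.sum_cons] at hs
    rw [Nat.succ_eq_add_one, Dd_succ_big]
    have h1 : Dd p ((a+1) :: c :: l) = 0 := by
      apply ih1 (by simp)
      · intro x hx
        rcases List.mem_cons.1 hx with rfl | hx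
        · omega
        · exact hpos x (List.mem_cons_of_mem _ hx)
      · simp only [List.sum_cons]; omega
    have h2 : Dd (p+1) ((a+1) :: c :: l) = 0 :=
      Dd_vanish _ _ (by simp) (by simp only [List.sum_cons]; omega)
    rw [h1, h2]; simp

lemma sum_if_single (c : ℕ) (hc : 0 < c) :
    ∑ p ∈ Finset.range c, (if c = p + 1 then (1:ℤ) else 0) = 1 := by
  have h : ∀ p, (if c = p + 1 then (1:ℤ) else 0) = (if p = c - 1 then (1:ℤ) else 0) := by
    intro p
    by_cases h : c = p + 1
    · rw [if_pos h, if_pos (by omega)]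
    · rw [if_neg h, if_neg (by omega)]
  rw [Finset.sum_congr rfl (fun p _ => h p), Finset.sum_ite_eq' (Finset.range c) (c-1)]
  rw [if_pos (by simp; omega)]

lemma Dsum : ∀ (N : ℕ) (l : List ℕ), l.sum ≤ N → 2 ≤ l.length → (∀ x ∈ l, 0 < x) →
    ∑ p ∈ Finset.range l.sum, Dd p l = Ccoef (l.take (l.length - 1)) := by
  intro N
  induction N with
  | zero =>
    intro l h1 h2 h3
    have := length_le_sum l h3
    omega
  | succ N ih =>
    intro l hsum hlen hpos
    rcases l with _ | ⟨a, l'⟩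
    · simp at hlen
    rcases l' with _ | ⟨c, t⟩
    · simp at hlen
    rcases a with _ | a
    · exact absurd (hpos 0 (by simp)) (by simp)
    rcases a with _ | a
    · -- head = 1
      have hc : 0 < c := hpos c (by simp)
      have hs1 : (1 :: c :: t).sum = (c :: t).sum + 1 := by
        simp only [List.sum_cons]; omega
      rw [hs1, Finset.sum_range_succ]
      rw [Finset.sum_congr rfl (fun p _ => Dd_one_cons p c t),
        Dd_one_cons, Finset.sum_add_distrib]
      rw [Finset.sum_ite_eq' (Finset.range ((c :: t).sum)) 0 (fun _ => (1:ℤ)),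
        if_pos (by simp only [Finset.mem_range, List.sum_cons]; omega)]
      rw [Dd_vanish (c :: t).sum (c :: t) (by simp) le_rfl,
        if_neg (by simp only [List.sum_cons]; omega)]
      rcases t with _ | ⟨d, t⟩
      · -- l = [1, c]
        rw [Finset.sum_congr rfl (fun p _ => Dd_single p c), List.sum_cons, List.sum_nil,
          Nat.add_zero, sum_if_single c hc]
        norm_num [Ccoef]
      · -- l = 1 :: c :: d :: t
        rw [ih (c :: d :: t) (by simp only [List.sum_cons] at hsum ⊢; omega) (by simp)
          (fun x hx => hpos x (List.mem_cons_of_mem _ hx))]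
        have htake : (1 :: c :: d :: t).take ((1 :: c :: d :: t).length - 1)
            = 1 :: ((c :: d :: t).take ((c :: d :: t).length - 1)) := by
          simp [List.take_succ_cons]
        rw [htake, Ccoef_one_cons]
        ring
    · -- head = a + 2
      have hK : ((a + 2) :: c :: t).sum = ((a+1) :: c :: t).sum + 1 := by
        simp only [List.sum_cons]; omega
      set K := ((a+1) :: c :: t).sum with hKdef
      rw [hK, Finset.sum_range_succ']
      rw [Finset.sum_congr rfl (fun p _ => Dd_succ_big p a c t), Dd_zero_big,
        Finset.sum_add_distrib]
      have e1 : ∑ p ∈ Finset.range K, Dd (p+1) ((a+1) :: c :: t) + Dd 0 ((a+1) :: c :: t)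
          = ∑ p ∈ Finset.range (K+1), Dd p ((a+1) :: c :: t) := by
        rw [Finset.sum_range_succ']
      rw [add_assoc, e1, Finset.sum_range_succ,
        Dd_vanish K ((a+1) :: c :: t) (by simp) le_rfl, add_zero]
      have hih := ih ((a+1) :: c :: t)
        (by simp only [List.sum_cons] at hsum ⊢; omega) (by simp)
        (by intro x hx; rcases List.mem_cons.1 hx with rfl | hx;
            · omega
            · exact hpos x (List.mem_cons_of_mem _ hx))
      rw [hih]
      have htake1 : ((a+1) :: c :: t).take (((a+1) :: c :: t).length - 1)
          = (a+1) :: ((c :: t).take ((c :: t).length - 1)) := by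
        simp [List.take_succ_cons]
      have htake2 : ((a+2) :: c :: t).take (((a+2) :: c :: t).length - 1)
          = (a+2) :: ((c :: t).take ((c :: t).length - 1)) := by
        simp [List.take_succ_cons]
      rw [htake1, htake2, Ccoef_succ_cons a _
        (fun x hx => hpos x (List.mem_cons_of_mem _ (List.mem_of_mem_take hx)))]
      ring


section TRs
lemma Dd_cons_one' (p : ℕ) (l : List ℕ) (h : l ≠ []) :
    Dd p (1 :: l) = (if p = 0 then 1 else 0) + Dd p l := by
  match l with
  | c :: l => exact Dd_one_cons p c l

lemma Dd_incHead_zero (t : List ℕ) (h2 : 2 ≤ t.length) (hpos : ∀ x ∈ t, 0 < x) :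
    Dd 0 (incHead t) = Dd 0 t := by
  match t, h2 with
  | a :: c :: l, _ =>
    have ha : 0 < a := hpos a (by simp)
    obtain ⟨a', rfl⟩ : ∃ a', a = a' + 1 := ⟨a - 1, by omega⟩
    exact Dd_zero_big a' c l

lemma Dd_incHead_succ (p : ℕ) (t : List ℕ) (h2 : 2 ≤ t.length) (hpos : ∀ x ∈ t, 0 < x) :
    Dd (p+1) (incHead t) = Dd p t + Dd (p+1) t := by
  match t, h2 with
  | a :: c :: l, _ =>
    have ha : 0 < a := hpos a (by simp)
    obtain ⟨a', rfl⟩ : ∃ a', a = a' + 1 := ⟨a - 1, by omega⟩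
    exact Dd_succ_big p a' c l

lemma enc_incHead_of (t : List ℕ) (h : t ≠ []) (hpos : ∀ x ∈ t, 0 < x) :
    encodeWord (incHead t) = false :: encodeWord t := by
  match t with
  | a :: t' => exact enc_incHead a (hpos a (by simp)) t'

lemma mD_xw (b : Bool) (w : List Bool) :
    Finsupp.mapDomain (List.cons b) (xw w) = xw (b :: w) := by
  simp [xw, Finsupp.mapDomain_single]

lemma mD_push (b : Bool) (P Q p : ℕ) :
    Finsupp.mapDomain (List.cons b) (∑ l ∈ L P Q, Dd p l • xw (encodeWord l))
      = ∑ l ∈ L P Q, Dd p l • xw (b :: encodeWord l) := by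
  rw [Finsupp.mapDomain_finset_sum]
  exact Finset.sum_congr rfl fun l _ => by rw [Finsupp.mapDomain_smul, mD_xw]

lemma sf_true_cons (b : Bool) (w : List Bool) :
    sf [true] (b :: w)
      = xw (true :: b :: w) + Finsupp.mapDomain (List.cons b) (sf [true] w) := by
  rw [sf_cons_cons, sf_nil_left, mD_xw]

lemma sf_false_cons (u' : List Bool) (b : Bool) (w : List Bool) :
    sf (false :: u') (b :: w)
      = Finsupp.mapDomain (List.cons false) (sf u' (b :: w))
        + Finsupp.mapDomain (List.cons b) (sf (false :: u') w) := sf_cons_cons _ _ _ _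

lemma TR_m0 (p j : ℕ) :
    (∑ s ∈ L 0 j, sf (List.replicate p false ++ [true]) (encodeWord s))
      = ∑ l ∈ L (p + 1 + 0) (j + 1), Dd p l • xw (encodeWord l) := by
  rcases j with _ | j'
  · have h0 : L 0 0 = {[]} := by simp [L]
    rw [h0, Finset.sum_singleton]
    have h1 : L (p + 1 + 0) 1 = {[p+1]} := by rw [Nat.add_zero]; exact L_one _ (by omega)
    rw [h1, Finset.sum_singleton, Dd_single, if_pos rfl, one_smul, enc_single]
    show sf _ [] = _
    rw [sf_nil_right]
    norm_num
  · rw [L_zero_succ, Finset.sum_empty]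
    symm
    apply Finset.sum_eq_zero
    intro l hl
    obtain ⟨h1, h2, h3⟩ := mem_L.1 hl
    rw [Dd_vanish' p l (by omega) h3 (by omega), zero_smul]

lemma TR_j0 (p m : ℕ) (hm : 0 < m) :
    (∑ s ∈ L m 0, sf (List.replicate p false ++ [true]) (encodeWord s))
      = ∑ l ∈ L (p + 1 + m) (0 + 1), Dd p l • xw (encodeWord l) := by
  obtain ⟨m', rfl⟩ : ∃ m', m = m' + 1 := ⟨m - 1, by omega⟩
  rw [L_succ_zero, Finset.sum_empty]
  have h1 : L (p + 1 + (m' + 1)) (0 + 1) = {[p + 1 + (m' + 1)]} := L_one _ (by omega)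
  rw [h1, Finset.sum_singleton, Dd_single, if_neg (by omega), zero_smul]

lemma TR : ∀ (N p m j : ℕ), p + m ≤ N →
    (∑ s ∈ L m j, sf (List.replicate p false ++ [true]) (encodeWord s))
      = ∑ l ∈ L (p + 1 + m) (j + 1), Dd p l • xw (encodeWord l) := by
  intro N
  induction N with
  | zero =>
    intro p m j h
    obtain rfl : m = 0 := by omega
    exact TR_m0 p j
  | succ N ih =>
    intro p m j hN
    rcases m with _ | m'
    · exact TR_m0 p j
    rcases j with _ | j'
    · exact TR_j0 p (m' + 1) (by omega)
    -- main case
    have hdest : ∀ {P Q : ℕ} {t : List ℕ}, t ∈ L P (Q+1) → t ≠ [] ∧ ∀ x ∈ t, 0 < x := by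
      intro P Q t ht
      obtain ⟨h1, h2, h3⟩ := mem_L.1 ht
      exact ⟨by intro h; subst h; simp at h2, h3⟩
    rcases p with _ | p'
    · -- p = 0
      have hu : List.replicate 0 false ++ [true] = [true] := by simp
      rw [hu]
      rw [L_split m' j' (fun s => sf [true] (encodeWord s))]
      have hS1 : ∑ s ∈ L m' j', sf [true] (encodeWord (1 :: s))
          = (∑ s ∈ L m' j', xw (true :: encodeWord (1 :: s)))
            + Finsupp.mapDomain (List.cons true) (∑ s ∈ L m' j', sf [true] (encodeWord s)) := by
        rw [Finsupp.mapDomain_finset_sum, ← Finset.sum_add_distrib]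
        refine Finset.sum_congr rfl fun s _ => ?_
        rw [enc_one_cons, sf_true_cons]
      have hS2 : ∑ t ∈ L m' (j'+1), sf [true] (encodeWord (incHead t))
          = (∑ t ∈ L m' (j'+1), xw (true :: encodeWord (incHead t)))
            + Finsupp.mapDomain (List.cons false) (∑ t ∈ L m' (j'+1), sf [true] (encodeWord t)) := by
        rw [Finsupp.mapDomain_finset_sum, ← Finset.sum_add_distrib]
        refine Finset.sum_congr rfl fun t ht => ?_
        obtain ⟨hne, hpos⟩ := hdest ht
        rw [enc_incHead_of t hne hpos, sf_true_cons]
      rw [hS1, hS2]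
      have hIH1 := ih 0 m' j' (by omega)
      have hIH2 := ih 0 m' (j'+1) (by omega)
      rw [hu] at hIH1 hIH2
      rw [hIH1, hIH2, mD_push, mD_push]
      rw [show (0:ℕ) + 1 + m' = m' + 1 by omega] at *
      -- combine the two xw sums via L_split reversed
      have hW : (∑ s ∈ L m' j', xw (true :: encodeWord (1 :: s)))
          + (∑ t ∈ L m' (j'+1), xw (true :: encodeWord (incHead t)))
          = ∑ l ∈ L (m'+1) (j'+1), xw (true :: encodeWord l) :=
        (L_split m' j' (fun l => xw (true :: encodeWord l))).symm
      -- now the RHS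
      rw [show (0:ℕ) + 1 + (m' + 1) = m' + 1 + 1 by omega]
      rw [L_split (m'+1) (j'+1) (fun l => Dd 0 l • xw (encodeWord l))]
      have hR1 : ∑ l ∈ L (m'+1) (j'+1), Dd 0 (1 :: l) • xw (encodeWord (1 :: l))
          = (∑ l ∈ L (m'+1) (j'+1), xw (true :: encodeWord l))
            + ∑ l ∈ L (m'+1) (j'+1), Dd 0 l • xw (true :: encodeWord l) := by
        rw [← Finset.sum_add_distrib]
        refine Finset.sum_congr rfl fun l hl => ?_
        obtain ⟨hne, hpos⟩ := hdest hl
        rw [Dd_cons_one' 0 l hne, if_pos rfl, enc_one_cons, add_smul, one_smul]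
      have hR2 : ∑ t ∈ L (m'+1) (j'+1+1), Dd 0 (incHead t) • xw (encodeWord (incHead t))
          = ∑ t ∈ L (m'+1) (j'+1+1), Dd 0 t • xw (false :: encodeWord t) := by
        refine Finset.sum_congr rfl fun t ht => ?_
        obtain ⟨h1, h2, h3⟩ := mem_L.1 ht
        rw [Dd_incHead_zero t (by omega) h3, enc_incHead_of t (by intro hc; subst hc; simp at h2) h3]
      rw [hR1, hR2, ← hW]
      abel
    · -- p = p' + 1
      have hu : List.replicate (p'+1) false ++ [true]
          = false :: (List.replicate p' false ++ [true]) := by simp [List.replicate_succ]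
      rw [hu]
      rw [L_split m' j' (fun s => sf (false :: (List.replicate p' false ++ [true])) (encodeWord s))]
      have hS1 : ∑ s ∈ L m' j',
            sf (false :: (List.replicate p' false ++ [true])) (encodeWord (1 :: s))
          = Finsupp.mapDomain (List.cons false)
              (∑ s ∈ L m' j', sf (List.replicate p' false ++ [true]) (encodeWord (1 :: s)))
            + Finsupp.mapDomain (List.cons true)
              (∑ s ∈ L m' j', sf (false :: (List.replicate p' false ++ [true])) (encodeWord s)) := by
        rw [Finsupp.mapDomain_finset_sum, Finsupp.mapDomain_finset_sum, ← Finset.sum_add_distrib]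
        refine Finset.sum_congr rfl fun s _ => ?_
        rw [enc_one_cons, sf_false_cons]
      have hS2 : ∑ t ∈ L m' (j'+1),
            sf (false :: (List.replicate p' false ++ [true])) (encodeWord (incHead t))
          = Finsupp.mapDomain (List.cons false)
              (∑ t ∈ L m' (j'+1), sf (List.replicate p' false ++ [true]) (encodeWord (incHead t)))
            + Finsupp.mapDomain (List.cons false)
              (∑ t ∈ L m' (j'+1), sf (false :: (List.replicate p' false ++ [true])) (encodeWord t)) := by
        rw [Finsupp.mapDomain_finset_sum, Finsupp.mapDomain_finset_sum, ← Finset.sum_add_distrib]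
        refine Finset.sum_congr rfl fun t ht => ?_
        obtain ⟨hne, hpos⟩ := hdest ht
        rw [enc_incHead_of t hne hpos, sf_false_cons]
      rw [hS1, hS2]
      -- the two sf u' sums combine by L_split reversed
      have hC : (∑ s ∈ L m' j', sf (List.replicate p' false ++ [true]) (encodeWord (1 :: s)))
          + (∑ t ∈ L m' (j'+1), sf (List.replicate p' false ++ [true]) (encodeWord (incHead t)))
          = ∑ l ∈ L (m'+1) (j'+1), sf (List.replicate p' false ++ [true]) (encodeWord l) :=
        (L_split m' j' (fun l => sf (List.replicate p' false ++ [true]) (encodeWord l))).symm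
      have hIH0 := ih p' (m'+1) (j'+1) (by omega)
      have hIH1 := ih (p'+1) m' j' (by omega)
      have hIH2 := ih (p'+1) m' (j'+1) (by omega)
      rw [hu] at hIH1 hIH2
      have hTot : (Finsupp.mapDomain (List.cons false)
              (∑ s ∈ L m' j', sf (List.replicate p' false ++ [true]) (encodeWord (1 :: s)))
            + Finsupp.mapDomain (List.cons true)
              (∑ s ∈ L m' j', sf (false :: (List.replicate p' false ++ [true])) (encodeWord s)))
          + (Finsupp.mapDomain (List.cons false)
              (∑ t ∈ L m' (j'+1), sf (List.replicate p' false ++ [true]) (encodeWord (incHead t)))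
            + Finsupp.mapDomain (List.cons false)
              (∑ t ∈ L m' (j'+1), sf (false :: (List.replicate p' false ++ [true])) (encodeWord t)))
          = Finsupp.mapDomain (List.cons false)
              (∑ l ∈ L (m'+1) (j'+1), sf (List.replicate p' false ++ [true]) (encodeWord l))
            + Finsupp.mapDomain (List.cons true)
              (∑ s ∈ L m' j', sf (false :: (List.replicate p' false ++ [true])) (encodeWord s))
            + Finsupp.mapDomain (List.cons false)
              (∑ t ∈ L m' (j'+1), sf (false :: (List.replicate p' false ++ [true])) (encodeWord t)) := by
        rw [← hC, Finsupp.mapDomain_add]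
        abel
      rw [hTot, hIH0, hIH1, hIH2, mD_push, mD_push, mD_push]
      -- normalize indices
      rw [show p' + 1 + (m' + 1) = p' + m' + 2 by omega,
        show p' + 1 + 1 + m' = p' + m' + 2 by omega]
      -- RHS
      rw [show p' + 1 + 1 + (m' + 1) = (p' + m' + 2) + 1 by omega]
      rw [L_split (p' + m' + 2) (j'+1) (fun l => Dd (p'+1) l • xw (encodeWord l))]
      have hR1 : ∑ l ∈ L (p' + m' + 2) (j'+1), Dd (p'+1) (1 :: l) • xw (encodeWord (1 :: l))
          = ∑ l ∈ L (p' + m' + 2) (j'+1), Dd (p'+1) l • xw (true :: encodeWord l) := by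
        refine Finset.sum_congr rfl fun l hl => ?_
        obtain ⟨hne, hpos⟩ := hdest hl
        rw [Dd_cons_one' (p'+1) l hne, if_neg (by omega), enc_one_cons, zero_add]
      have hR2 : ∑ t ∈ L (p' + m' + 2) (j'+1+1),
            Dd (p'+1) (incHead t) • xw (encodeWord (incHead t))
          = (∑ t ∈ L (p' + m' + 2) (j'+1+1), Dd p' t • xw (false :: encodeWord t))
            + ∑ t ∈ L (p' + m' + 2) (j'+1+1), Dd (p'+1) t • xw (false :: encodeWord t) := by
        rw [← Finset.sum_add_distrib]
        refine Finset.sum_congr rfl fun t ht => ?_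
        obtain ⟨h1, h2, h3⟩ := mem_L.1 ht
        rw [Dd_incHead_succ (p') t (by omega) h3,
          enc_incHead_of t (by intro hc; subst hc; simp at h2) h3, add_smul]
      rw [hR1, hR2]
      abel
end TRs

/-- Sum formula for the transported shuffle product: for `k ≥ 2`,
`n ≥ k`, `∑_{r+s₁+⋯+s_{k-1}=n, all ≥1} z_r ш z_{s₁,…,s_{k-1}}
  = ∑_{t₁+⋯+t_k=n, tᵢ≥1} C(t₁,…,t_{k-1}) z_{t₁,…,t_k}`. -/
theorem shuffle_sum_formula
    (sh : XWords →ₗ[ℤ] XWords →ₗ[ℤ] XWords)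
    (hsunitl : ∀ w : XWords, sh (xw []) w = w)
    (hsunitr : ∀ w : XWords, sh w (xw []) = w)
    (hsrec : ∀ (a b : Bool) (u v : List Bool),
      sh (xw (a :: u)) (xw (b :: v)) =
        Finsupp.mapDomain (List.cons a) (sh (xw u) (xw (b :: v))) +
          Finsupp.mapDomain (List.cons b) (sh (xw (a :: u)) (xw v)))
    (msh : QWords →ₗ[ℤ] QWords →ₗ[ℤ] QWords)
    (hsupp : ∀ u v : List ℕ, (∀ x ∈ u, 1 ≤ x) → (∀ x ∈ v, 1 ≤ x) →
      ∀ l ∈ (msh (zw u) (zw v)).support, ∀ x ∈ l, 1 ≤ x)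
    (hcompat : ∀ u v : List ℕ, (∀ x ∈ u, 1 ≤ x) → (∀ x ∈ v, 1 ≤ x) →
      Finsupp.mapDomain encodeWord (msh (zw u) (zw v)) =
        sh (xw (encodeWord u)) (xw (encodeWord v)))
    (k n : ℕ) (hk : 2 ≤ k) (hn : k ≤ n) :
    ∑ c ∈ Finset.univ.filter (fun c : Composition n => c.length = k),
        msh (zw [c.blocks.headI]) (zw c.blocks.tail)
      = ∑ c ∈ Finset.univ.filter (fun c : Composition n => c.length = k),
          Ccoef (c.blocks.take (k - 1)) • zw c.blocks := by
  classical
  -- step 0 : sh agrees with sf on basis words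
  have shEq' : ∀ (N : ℕ) (u v : List Bool), u.length + v.length ≤ N →
      sh (xw u) (xw v) = sf u v := by
    intro N
    induction N with
    | zero =>
      intro u v h
      obtain rfl : u = [] := by
        cases u; · rfl
        · simp at h
      rw [hsunitl, sf_nil_left]
    | succ N ih =>
      intro u v h
      rcases u with _ | ⟨a, u⟩
      · rw [hsunitl, sf_nil_left]
      rcases v with _ | ⟨b, v⟩
      · rw [hsunitr, sf_nil_right]
      rw [hsrec, sf_cons_cons,
        ih u (b :: v) (by simp only [List.length_cons] at h ⊢; omega),
        ih (a :: u) v (by simp only [List.length_cons] at h ⊢; omega)]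
  have shEq : ∀ u v : List Bool, sh (xw u) (xw v) = sf u v :=
    fun u v => shEq' (u.length + v.length) u v le_rfl
  -- step 1 : reindex composition sums as sums over `L n k`
  have hcomp : ∀ (f : List ℕ → QWords),
      ∑ c ∈ Finset.univ.filter (fun c : Composition n => c.length = k), f c.blocks
        = ∑ l ∈ L n k, f l := by
    intro f
    apply Finset.sum_bij (fun (c : Composition n) (_ : c ∈ _) => c.blocks)
    · intro c hc
      simp only [Finset.mem_filter, Finset.mem_univ, true_and] at hc
      exact mem_L.2 ⟨c.blocks_sum, hc, fun x hx => c.blocks_pos hx⟩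
    · intro c1 h1 c2 h2 hbl
      rcases c1; rcases c2; simpa using hbl
    · intro l hl
      obtain ⟨h1, h2, h3⟩ := mem_L.1 hl
      refine ⟨⟨l, fun {i} hi => h3 i hi, h1⟩, ?_, rfl⟩
      simp only [Finset.mem_filter, Finset.mem_univ, true_and]
      exact h2
    · intro c hc; rfl
  have e1 : ∑ c ∈ Finset.univ.filter (fun c : Composition n => c.length = k),
        msh (zw [c.blocks.headI]) (zw c.blocks.tail)
      = ∑ l ∈ L n k, msh (zw [l.headI]) (zw l.tail) :=
    hcomp (fun l => msh (zw [l.headI]) (zw l.tail))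
  have e2 : ∑ c ∈ Finset.univ.filter (fun c : Composition n => c.length = k),
        Ccoef (c.blocks.take (k - 1)) • zw c.blocks
      = ∑ l ∈ L n k, Ccoef (l.take (k - 1)) • zw l :=
    hcomp (fun l => Ccoef (l.take (k - 1)) • zw l)
  rw [e1, e2]
  -- step 2 : injectivity of mapDomain encodeWord on positively supported elements
  have henc : Set.InjOn encodeWord {l : List ℕ | ∀ x ∈ l, 0 < x} :=
    fun l1 h1 l2 h2 h => enc_inj l1 l2 h1 h2 h
  apply Finsupp.mapDomain_injOn {l : List ℕ | ∀ x ∈ l, 0 < x} henc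
  · -- support of LHS is positive
    intro a ha
    obtain ⟨l, hl, hal⟩ := Finsupp.mem_support_finset_sum a (Finset.mem_coe.1 ha)
    obtain ⟨h1, h2, h3⟩ := mem_L.1 hl
    have hne : l ≠ [] := by intro hc; subst hc; simp at h2; omega
    refine hsupp [l.headI] l.tail ?_ ?_ a hal
    · intro x hx
      simp only [List.mem_singleton] at hx
      subst hx
      match l, hne with
      | b :: t, _ => exact h3 b (by simp)
    · intro x hx
      exact h3 x (List.mem_of_mem_tail hx)
  · -- support of RHS is positive
    intro a ha
    obtain ⟨l, hl, hal⟩ := Finsupp.mem_support_finset_sum a (Finset.mem_coe.1 ha)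
    obtain ⟨h1, h2, h3⟩ := mem_L.1 hl
    have : a = l := by
      by_contra hc
      have := Finsupp.support_smul (b := Ccoef (l.take (k-1))) (g := zw l)
      have h4 := this hal
      simp only [zw, Finsupp.support_single_ne_zero _ (one_ne_zero), Finset.mem_singleton] at h4
      exact hc h4
    subst this
    exact h3
  -- step 3 : the main identity after mapping to the x-world
  rw [Finsupp.mapDomain_finset_sum, Finsupp.mapDomain_finset_sum]
  have eL : ∀ l ∈ L n k, Finsupp.mapDomain encodeWord (msh (zw [l.headI]) (zw l.tail))
      = sf (encodeWord [l.headI]) (encodeWord l.tail) := by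
    intro l hl
    obtain ⟨h1, h2, h3⟩ := mem_L.1 hl
    have hne : l ≠ [] := by intro hc; subst hc; simp at h2; omega
    rw [hcompat [l.headI] l.tail ?_ ?_, shEq]
    · intro x hx
      simp only [List.mem_singleton] at hx
      subst hx
      match l, hne with
      | b :: t, _ => exact h3 b (by simp)
    · intro x hx
      exact h3 x (List.mem_of_mem_tail hx)
  have eR : ∀ l ∈ L n k, Finsupp.mapDomain encodeWord (Ccoef (l.take (k - 1)) • zw l)
      = Ccoef (l.take (k - 1)) • xw (encodeWord l) := by
    intro l _
    rw [Finsupp.mapDomain_smul]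
    simp [zw, xw, Finsupp.mapDomain_single]
  rw [Finset.sum_congr rfl eL, Finset.sum_congr rfl eR]
  -- now pure x-world computation
  obtain ⟨k', rfl⟩ : ∃ k', k = k' + 1 := ⟨k - 1, by omega⟩
  rw [L_succ_sum n k' (fun l => sf (encodeWord [l.headI]) (encodeWord l.tail))]
  have eT : ∀ i ∈ Finset.Icc 1 n,
      (∑ s ∈ L (n - i) k', sf (encodeWord [(i :: s).headI]) (encodeWord (i :: s).tail))
        = ∑ l ∈ L n (k' + 1), Dd (i - 1) l • xw (encodeWord l) := by
    intro i hi
    simp only [Finset.mem_Icc] at hi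
    have h1 : ∀ s : List ℕ, (i :: s).headI = i := fun s => rfl
    have h2 : ∀ s : List ℕ, (i :: s).tail = s := fun s => rfl
    simp only [h1, h2]
    have h3 : encodeWord [i] = List.replicate (i - 1) false ++ [true] := enc_single i
    rw [Finset.sum_congr rfl (fun s _ => by rw [h3])]
    rw [TR (i - 1 + (n - i)) (i - 1) (n - i) k' le_rfl]
    rw [show i - 1 + 1 + (n - i) = n by omega]
  rw [Finset.sum_congr rfl eT, Finset.sum_comm]
  refine Finset.sum_congr rfl fun l hl => ?_
  obtain ⟨h1, h2, h3⟩ := mem_L.1 hl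
  rw [← Finset.sum_smul]
  congr 1
  have hre : ∑ i ∈ Finset.Icc 1 n, Dd (i - 1) l = ∑ p ∈ Finset.range n, Dd p l := by
    apply Finset.sum_nbij' (fun i => i - 1) (fun p => p + 1)
    · intro a ha; simp only [Finset.mem_Icc] at ha; simp only [Finset.mem_range]; omega
    · intro b hb; simp only [Finset.mem_range] at hb; simp only [Finset.mem_Icc]; omega
    · intro a ha; simp only [Finset.mem_Icc] at ha; omega
    · intro b _; omega
    · intro a _; rfl
  rw [hre, ← h1, Dsum l.sum l le_rfl (by omega) h3, h2]
end
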